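/- arXiv:1209.3380 — 11 statements merged into one kernel-verified Lean document; each statement's English description precedes it below -/
import Mathlib

section
/- Let (m_n^{(k)})_{n≥2, k≥0} be defined by m_n^{(0)} = 1 for all n ≥ 2 and m_n^{(k)} = (2k/(n(n−1))) Σ_{m=2}^n m_m^{(k−1)} for n ≥ 2 and k ≥ 1. Then m_n^{(2)} = 8(h_n − 1)/(n(n−1)) for all n ≥ 2, where h_n = Σ_{i=1}^n 1/i is the n-th harmonic number. -/
/-- For the moment recursion of the external branch lengths of the Kingman
coalescent, the second moments are `m_n^{(2)} = 8(h_n - 1)/(n(n-1))`,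
where `h_n` is the `n`-th harmonic number. -/
theorem kingman_second_moment (M : ℕ → ℕ → ℝ)
    (h0 : ∀ n : ℕ, 2 ≤ n → M n 0 = 1)
    (hrec : ∀ n : ℕ, 2 ≤ n → ∀ k : ℕ, 1 ≤ k →
      M n k = (2 * k / ((n : ℝ) * ((n : ℝ) - 1))) * ∑ m ∈ Finset.Icc 2 n, M m (k - 1)) :
    ∀ n : ℕ, 2 ≤ n →
      M n 2 = 8 * ((∑ i ∈ Finset.Icc 1 n, (1 : ℝ) / i) - 1) / ((n : ℝ) * ((n : ℝ) - 1)) := by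
  have m1 : ∀ n : ℕ, 2 ≤ n → M n 1 = 2 / n := by
    intro n hn
    have hn0 : (n : ℝ) ≠ 0 := by positivity
    have hn1 : (n : ℝ) - 1 ≠ 0 := by
      have : (2 : ℝ) ≤ n := by exact_mod_cast hn
      nlinarith
    rw [hrec n hn 1 le_rfl]
    have hsum : ∑ m ∈ Finset.Icc 2 n, M m 0 = (n : ℝ) - 1 := by
      rw [Finset.sum_congr rfl (fun m hm => h0 m (Finset.mem_Icc.mp hm).1)]
      rw [Finset.sum_const, Nat.card_Icc, nsmul_eq_mul, mul_one]
      have h : n + 1 - 2 = n - 1 := by omega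
      rw [h, Nat.cast_sub (by omega : 1 ≤ n)]
      norm_num
    rw [hsum]
    field_simp
    ring
  intro n hn
  have hn0 : (n : ℝ) ≠ 0 := by positivity
  have hn2 : (2 : ℝ) ≤ n := by exact_mod_cast hn
  have hn1 : (n : ℝ) - 1 ≠ 0 := by nlinarith
  rw [hrec n hn 2 (by norm_num)]
  have hsum : ∑ m ∈ Finset.Icc 2 n, M m 1 =
      2 * ((∑ i ∈ Finset.Icc 1 n, (1 : ℝ) / i) - 1) := by
    have h1 : ∑ m ∈ Finset.Icc 2 n, M m 1 = ∑ m ∈ Finset.Icc 2 n, 2 / (m : ℝ) := by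
      exact Finset.sum_congr rfl (fun m hm => m1 m (Finset.mem_Icc.mp hm).1)
    have hins : Finset.Icc 1 n = insert 1 (Finset.Icc 2 n) := by
      ext x
      simp [Finset.mem_Icc, Finset.mem_insert]
      omega
    have h2 : ∑ i ∈ Finset.Icc 1 n, (1 : ℝ) / i
        = 1 + ∑ i ∈ Finset.Icc 2 n, (1 : ℝ) / i := by
      rw [hins, Finset.sum_insert (by simp)]
      norm_num
    rw [h1, h2]
    have h3 : ∑ m ∈ Finset.Icc 2 n, 2 / (m : ℝ) = 2 * ∑ m ∈ Finset.Icc 2 n, (1 : ℝ) / m := by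
      rw [Finset.mul_sum]
      exact Finset.sum_congr rfl (fun m hm => by ring)
    rw [h3]; ring
  rw [hsum]
  field_simp
  ring
end

section
/- Let (m_n^{(k)})_{n≥2, k≥0} be defined by m_n^{(0)} = 1 for all n ≥ 2 and m_n^{(k)} = (2k/(n(n−1))) Σ_{m=2}^n m_m^{(k−1)} for n ≥ 2 and k ≥ 1. Then m_n^{(3)} = (48/(n(n−1)))(1 − h_n/n) for all n ≥ 2, where h_n = Σ_{i=1}^n 1/i is the n-th harmonic number. -/
/-- For the moment recursion of the external branch lengths of the Kingman
coalescent, the third moments are `m_n^{(3)} = (48/(n(n-1)))(1 - h_n/n)`,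
where `h_n` is the `n`-th harmonic number. -/
theorem kingman_third_moment (M : ℕ → ℕ → ℝ)
    (h0 : ∀ n : ℕ, 2 ≤ n → M n 0 = 1)
    (hrec : ∀ n : ℕ, 2 ≤ n → ∀ k : ℕ, 1 ≤ k →
      M n k = (2 * k / ((n : ℝ) * ((n : ℝ) - 1))) * ∑ m ∈ Finset.Icc 2 n, M m (k - 1)) :
    ∀ n : ℕ, 2 ≤ n →
      M n 3 = (48 / ((n : ℝ) * ((n : ℝ) - 1)))
        * (1 - (∑ i ∈ Finset.Icc 1 n, (1 : ℝ) / i) / (n : ℝ)) := by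
  -- First moment
  have hM1 : ∀ n : ℕ, 2 ≤ n → M n 1 = 2 / (n : ℝ) := by
    intro n hn
    rw [hrec n hn 1 le_rfl]
    have hsum : ∑ m ∈ Finset.Icc 2 n, M m 0 = (n : ℝ) - 1 := by
      rw [Finset.sum_congr rfl (fun m hm => h0 m (Finset.mem_Icc.mp hm).1)]
      rw [Finset.sum_const, Nat.card_Icc]
      have : n + 1 - 2 = n - 1 := by omega
      rw [this]
      have h1 : (1:ℕ) ≤ n := by omega
      rw [nsmul_eq_mul, Nat.cast_sub h1]
      push_cast
      ring
    rw [hsum]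
    have hn0 : (n : ℝ) ≠ 0 := by positivity
    have hn1 : (n : ℝ) - 1 ≠ 0 := by
      have : (2:ℝ) ≤ n := by exact_mod_cast hn
      linarith
    field_simp
    ring
  -- Second moment
  have hM2 : ∀ n : ℕ, 2 ≤ n →
      M n 2 = (8 / ((n : ℝ) * ((n : ℝ) - 1)))
        * ((∑ i ∈ Finset.Icc 1 n, (1 : ℝ) / i) - 1) := by
    intro n hn
    rw [hrec n hn 2 (by norm_num)]
    have hsum : ∑ m ∈ Finset.Icc 2 n, M m 1
        = 2 * ((∑ i ∈ Finset.Icc 1 n, (1 : ℝ) / i) - 1) := by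
      rw [Finset.sum_congr rfl (fun m hm => hM1 m (Finset.mem_Icc.mp hm).1)]
      have hsplit : Finset.Icc 1 n = insert 1 (Finset.Icc 2 n) := by
        ext x; simp [Finset.mem_Icc, Finset.mem_insert]; omega
      rw [hsplit, Finset.sum_insert (by simp)]
      have : ∑ m ∈ Finset.Icc 2 n, (2:ℝ)/m = 2 * ∑ m ∈ Finset.Icc 2 n, 1/(m:ℝ) := by
        rw [Finset.mul_sum]; exact Finset.sum_congr rfl (fun m _ => by ring)
      rw [this]
      norm_num
    rw [hsum]
    norm_num
    ring
  -- Key sum identity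
  have key : ∀ n : ℕ, 2 ≤ n →
      ∑ m ∈ Finset.Icc 2 n,
        ((∑ i ∈ Finset.Icc 1 m, (1 : ℝ) / i) - 1) / ((m : ℝ) * ((m : ℝ) - 1))
      = 1 - (∑ i ∈ Finset.Icc 1 n, (1 : ℝ) / i) / (n : ℝ) := by
    intro n hn
    induction n, hn using Nat.le_induction with
    | base =>
      norm_num [Finset.sum_Icc_succ_top, show (1:ℕ) ≤ 2 by norm_num]
    | succ n hn ih =>
      rw [Finset.sum_Icc_succ_top (by omega : 2 ≤ n + 1), ih,
        Finset.sum_Icc_succ_top (by omega : 1 ≤ n + 1)]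
      have hn0 : (n : ℝ) ≠ 0 := by positivity
      have hn2 : (2:ℝ) ≤ n := by exact_mod_cast hn
      have hn1 : (n : ℝ) + 1 ≠ 0 := by linarith
      push_cast
      field_simp
      have hinv : (n:ℝ) * (n:ℝ)⁻¹ = 1 := mul_inv_cancel₀ hn0
      linear_combination ((∑ x ∈ Finset.Icc 1 n, (1:ℝ) / (x:ℕ)) + n * (∑ x ∈ Finset.Icc 1 n, (1:ℝ) / (x:ℕ)) - n) * hinv
  -- Third moment
  intro n hn
  rw [hrec n hn 3 (by norm_num)]
  have hsum : ∑ m ∈ Finset.Icc 2 n, M m 2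
      = 8 * (1 - (∑ i ∈ Finset.Icc 1 n, (1 : ℝ) / i) / (n : ℝ)) := by
    rw [Finset.sum_congr rfl (fun m hm => hM2 m (Finset.mem_Icc.mp hm).1)]
    rw [← key n hn, Finset.mul_sum]
    exact Finset.sum_congr rfl (fun m hm => by ring)
  rw [hsum]
  norm_num
  ring
end

section
/- Let (u_n)_{n≥2} be defined by u_2 = 2 and u_n = 8/(n²(n−1)) + ((n−2)(n−3)/(n(n−1))) u_{n−1} for n ≥ 3. Then u_n = 4(n² − 5n + 4 h_n)/(n (n−1)² (n−2)) for all n ≥ 3, where h_n = Σ_{i=1}^n 1/i is the n-th harmonic number. -/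
/-- Exact formula `E(τ_{n,1}τ_{n,2}) = 4(n² - 5n + 4h_n)/(n(n-1)²(n-2))` for the
Kingman coalescent, characterized by the recursion for `u_n = E(τ_{n,1}τ_{n,2})`. -/
theorem kingman_mixed_second_moment (u : ℕ → ℝ) (h2 : u 2 = 2)
    (hrec : ∀ n : ℕ, 3 ≤ n →
      u n = 8 / ((n : ℝ) ^ 2 * ((n : ℝ) - 1))
        + (((n : ℝ) - 2) * ((n : ℝ) - 3) / ((n : ℝ) * ((n : ℝ) - 1))) * u (n - 1)) :
    ∀ n : ℕ, 3 ≤ n →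
      u n = 4 * ((n : ℝ) ^ 2 - 5 * (n : ℝ) + 4 * ∑ i ∈ Finset.Icc 1 n, (1 : ℝ) / i)
        / ((n : ℝ) * ((n : ℝ) - 1) ^ 2 * ((n : ℝ) - 2)) := by
  intro n hn
  induction n, hn using Nat.le_induction with
  | base =>
    rw [hrec 3 le_rfl]
    norm_num [show Finset.Icc 1 3 = {1, 2, 3} by decide, Finset.sum_insert, h2]
  | succ n hn ih =>
    rw [hrec (n + 1) (by omega), show n + 1 - 1 = n from rfl, ih,
      Finset.sum_Icc_succ_top (by omega : 1 ≤ n + 1)]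
    have h0 : (n : ℝ) ≠ 0 := by positivity
    have h1 : (n : ℝ) - 1 ≠ 0 := by
      have : (3 : ℝ) ≤ n := by exact_mod_cast hn
      nlinarith
    have h2' : (n : ℝ) - 2 ≠ 0 := by
      have : (3 : ℝ) ≤ n := by exact_mod_cast hn
      nlinarith
    have h3 : (n : ℝ) + 1 ≠ 0 := by positivity
    push_cast
    set S := ∑ i ∈ Finset.Icc 1 n, (1 : ℝ) / (i : ℝ) with hS
    have h4 : -(n:ℝ)^2 - (n:ℝ)^3 + (n:ℝ)^4 + (n:ℝ)^5 ≠ 0 := by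
      have he : -(n:ℝ)^2 - (n:ℝ)^3 + (n:ℝ)^4 + (n:ℝ)^5
          = (n:ℝ)^2 * ((n:ℝ)+1)^2 * ((n:ℝ)-1) := by ring
      rw [he]
      exact mul_ne_zero (mul_ne_zero (pow_ne_zero 2 h0) (pow_ne_zero 2 h3)) h1
    field_simp [h4]
    rw [div_eq_div_iff (by
      have e : (n:ℝ) + 1 - 1 = (n:ℝ) := by ring
      rw [e]
      exact h0) (by
      have e : (n:ℝ) + 1 - 2 = (n:ℝ) - 1 := by ring
      have e' : (n:ℝ) + 1 - 1 = (n:ℝ) := by ring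
      rw [e, e']
      exact mul_ne_zero (pow_ne_zero 2 h0) h1)]
    ring
end

section
/- For every integer n ≥ 4, 4(n² − 5n + 4 h_n)/(n (n−1)² (n−2)) − 4/n² < 0, where h_n = Σ_{i=1}^n 1/i is the n-th harmonic number. Consequently, for the Kingman coalescent the lengths of two randomly chosen external branches are negatively correlated for all n ≥ 4: Cov(τ_{n,1}, τ_{n,2}) = E(τ_{n,1}τ_{n,2}) − E(τ_{n,1})E(τ_{n,2}) < 0. -/
lemma harm_bound (n : ℕ) (hn : 4 ≤ n) :
    4 * ∑ i ∈ Finset.Icc 1 n, (1 : ℝ) / i < (n : ℝ) + 5 - 2 / n := by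
  induction n, hn using Nat.le_induction with
  | base =>
    rw [show Finset.Icc 1 4 = {1, 2, 3, 4} by decide]
    norm_num
  | succ n hn ih =>
    have hn0 : (0 : ℝ) < n := by positivity
    have hn1 : (0 : ℝ) < (n : ℝ) + 1 := by positivity
    rw [Finset.sum_Icc_succ_top (by omega : 1 ≤ n + 1)]
    push_cast
    have h4 : (4 : ℝ) ≤ n := by exact_mod_cast hn
    have key6 : 6 / ((n : ℝ) + 1) ≤ ((n : ℝ) + 2) / n := by
      rw [div_le_div_iff₀ hn1 hn0]; nlinarith
    have e1 : (1 : ℝ) + 2 / n = ((n : ℝ) + 2) / n := by field_simp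
    have e2 : (4 : ℝ) / ((n:ℝ)+1) + 2 / ((n:ℝ)+1) = 6 / ((n:ℝ)+1) := by ring
    have key : 4 * (1 / ((n : ℝ) + 1)) ≤ 1 + 2 / n - 2 / ((n : ℝ) + 1) := by
      rw [mul_one_div, e1]; linarith
    nlinarith [ih]

/-- For the Kingman coalescent the lengths of two randomly chosen external
branches are negatively correlated for `n ≥ 4`:
`Cov(τ_{n,1}, τ_{n,2}) = 4(n² - 5n + 4h_n)/(n(n-1)²(n-2)) - 4/n² < 0`. -/
theorem kingman_negative_correlation (n : ℕ) (hn : 4 ≤ n) :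
    4 * ((n : ℝ) ^ 2 - 5 * (n : ℝ) + 4 * ∑ i ∈ Finset.Icc 1 n, (1 : ℝ) / i)
        / ((n : ℝ) * ((n : ℝ) - 1) ^ 2 * ((n : ℝ) - 2)) - 4 / (n : ℝ) ^ 2 < 0 := by
  have h4 : (4 : ℝ) ≤ n := by exact_mod_cast hn
  have hn0 : (0 : ℝ) < n := by linarith
  have hsq : (0 : ℝ) < ((n : ℝ) - 1) ^ 2 := by nlinarith
  have hD : (0 : ℝ) < (n : ℝ) * ((n : ℝ) - 1) ^ 2 * ((n : ℝ) - 2) :=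
    mul_pos (mul_pos hn0 hsq) (by linarith)
  have hh := harm_bound n hn
  set h := ∑ i ∈ Finset.Icc 1 n, (1 : ℝ) / i with hhdef
  have hnh : 4 * (n : ℝ) * h < (n : ℝ) ^ 2 + 5 * n - 2 := by
    have h2 : (2 : ℝ) / n * n = 2 := div_mul_cancel₀ 2 (ne_of_gt hn0)
    nlinarith
  rw [sub_neg, div_lt_div_iff₀ hD (by positivity)]
  nlinarith [mul_pos hn0 hn0, hnh]
end

section
/- Let (m_n^{(k)})_{n≥2, k≥0} be defined by m_n^{(0)} = 1 for all n ≥ 2 and m_n^{(k)} = (2k/(n(n−1))) Σ_{m=2}^n m_m^{(k−1)} for n ≥ 2, k ≥ 1, and for k ≥ 1 and |t| < 1 set g_k(t) = Σ_{n=2}^∞ m_n^{(k)} t^n. Then each of these power series converges for |t| < 1, g_1(t) = −2t − 2 log(1−t), and for every k ≥ 2 the function g_k is twice differentiable on (−1,1) with t² g_k''(t) = (2k/(1−t)) g_{k−1}(t) for all t ∈ (−1,1). -/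
open Filter Finset

lemma aux_summable (C : ℝ) (p : ℕ) {r : ℝ} (hr0 : 0 < r) (hr1 : r < 1) :
    Summable (fun n : ℕ => C * ((n : ℝ) + 1) ^ p * r ^ n) := by
  have h : Summable (fun n : ℕ => (n : ℝ) ^ p * r ^ n) :=
    summable_pow_mul_geometric_of_norm_lt_one p (by rwa [Real.norm_eq_abs, abs_of_pos hr0])
  have h1 : Summable (fun n : ℕ => ((n + 1 : ℕ) : ℝ) ^ p * r ^ (n + 1)) :=
    (summable_nat_add_iff 1).2 h
  have h2 : Summable (fun n : ℕ => ((n : ℝ) + 1) ^ p * r ^ n) := by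
    have := h1.mul_left r⁻¹
    refine this.congr fun n => ?_
    push_cast
    field_simp
    ring
  exact (h2.mul_left C).congr fun n => by ring

lemma aux_norm_summable (a : ℕ → ℝ) (C : ℝ) (p : ℕ) (hC : ∀ n, |a n| ≤ C * ((n : ℝ) + 1) ^ p)
    (d : ℕ) {t : ℝ} (ht : |t| < 1) : Summable (fun n : ℕ => ‖a n * t ^ (n + d)‖) := by
  set r : ℝ := (|t| + 1) / 2 with hr
  have h0t : (0:ℝ) ≤ |t| := abs_nonneg t
  have hr0 : 0 < r := by positivity
  have hr1 : r < 1 := by rw [hr]; linarith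
  have htr : |t| ≤ r := by rw [hr]; linarith
  refine Summable.of_nonneg_of_le (fun n => norm_nonneg _)
    (fun n => ?_) (aux_summable C p hr0 hr1)
  have h1 : ‖a n * t ^ (n + d)‖ = |a n| * |t| ^ (n + d) := by
    rw [Real.norm_eq_abs, abs_mul, abs_pow]
  rw [h1]
  have h2 : |t| ^ (n + d) ≤ r ^ n := by
    calc |t| ^ (n + d) ≤ r ^ (n + d) := pow_le_pow_left₀ h0t htr _
    _ = r ^ n * r ^ d := pow_add r n d
    _ ≤ r ^ n * 1 := by
        have : r ^ d ≤ 1 := pow_le_one₀ hr0.le hr1.le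
        nlinarith [pow_pos hr0 n]
    _ = r ^ n := mul_one _
  have hC0 : 0 ≤ C * ((n : ℝ) + 1) ^ p := le_trans (abs_nonneg _) (hC n)
  calc |a n| * |t| ^ (n + d) ≤ (C * ((n : ℝ) + 1) ^ p) * r ^ n := by
        apply mul_le_mul (hC n) h2 (by positivity) hC0
    _ = C * ((n : ℝ) + 1) ^ p * r ^ n := by ring

lemma aux_hasDerivAt (a : ℕ → ℝ) (C : ℝ) (p : ℕ) (hC : ∀ n, |a n| ≤ C * ((n : ℝ) + 1) ^ p)
    (d : ℕ) {t : ℝ} (ht : |t| < 1) :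
    HasDerivAt (fun s : ℝ => ∑' n : ℕ, a n * s ^ (n + d + 1))
      (∑' n : ℕ, a n * (((n : ℝ) + d + 1) * t ^ (n + d))) t := by
  set r : ℝ := (|t| + 1) / 2 with hr
  have h0t : (0:ℝ) ≤ |t| := abs_nonneg t
  have hr0 : 0 < r := by positivity
  have hr1 : r < 1 := by rw [hr]; linarith
  have htr : |t| < r := by rw [hr]; linarith
  have hC0 : 0 ≤ C := by have := le_trans (abs_nonneg (a 0)) (hC 0); simpa using this
  have hsum : Summable (fun n : ℕ => (C * ((d:ℝ) + 1)) * ((n : ℝ) + 1) ^ (p + 1) * r ^ n) :=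
    aux_summable _ _ hr0 hr1
  have key := hasDerivAt_tsum_of_isPreconnected (F := ℝ) hsum Metric.isOpen_ball
    (convex_ball (0:ℝ) r).isPreconnected
    (g := fun n s => a n * s ^ (n + d + 1))
    (g' := fun n y => a n * (((n : ℝ) + d + 1) * y ^ (n + d))) (y := t)
    (fun n y _ => ?_) (fun n y hy => ?_) (y₀ := 0) ?_ ?_ ?_
  · exact key
  · -- HasDerivAt
    have h := (hasDerivAt_pow (n + d + 1) y).const_mul (a n)
    simpa [Nat.add_sub_cancel, mul_comm, mul_assoc, mul_left_comm] using h
  · -- bound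
    rw [Metric.mem_ball, Real.dist_eq, sub_zero] at hy
    have hyr : |y| ≤ r := hy.le
    have h2 : |y| ^ (n + d) ≤ r ^ n := by
      calc |y| ^ (n + d) ≤ r ^ (n + d) := pow_le_pow_left₀ (abs_nonneg y) hyr _
      _ = r ^ n * r ^ d := pow_add r n d
      _ ≤ r ^ n * 1 := by
          have : r ^ d ≤ 1 := pow_le_one₀ hr0.le hr1.le
          nlinarith [pow_pos hr0 n]
      _ = r ^ n := mul_one _
    have h3 : ((n : ℝ) + d + 1) ≤ ((d : ℝ) + 1) * ((n : ℝ) + 1) := by nlinarith [Nat.cast_nonneg (α := ℝ) n, Nat.cast_nonneg (α := ℝ) d]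
    have h4 : ‖a n * (((n : ℝ) + d + 1) * y ^ (n + d))‖
        = |a n| * (((n : ℝ) + d + 1) * |y| ^ (n + d)) := by
      rw [Real.norm_eq_abs, abs_mul, abs_mul, abs_pow]
      congr 2
      rw [abs_of_nonneg]; positivity
    rw [h4]
    calc |a n| * (((n : ℝ) + d + 1) * |y| ^ (n + d))
        ≤ (C * ((n : ℝ) + 1) ^ p) * ((((d : ℝ) + 1) * ((n : ℝ) + 1)) * r ^ n) := by
          apply mul_le_mul (hC n) ?_ (by positivity) (by positivity)
          apply mul_le_mul h3 h2 (by positivity) (by positivity)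
      _ = C * ((d:ℝ) + 1) * ((n : ℝ) + 1) ^ (p + 1) * r ^ n := by ring
  · exact Metric.mem_ball_self hr0
  · apply summable_zero.congr
    intro n
    simp
  · rw [Metric.mem_ball, Real.dist_eq, sub_zero]; exact htr

lemma aux_Mbound (M : ℕ → ℕ → ℝ)
    (h0 : ∀ n : ℕ, 2 ≤ n → M n 0 = 1)
    (hrec : ∀ n : ℕ, 2 ≤ n → ∀ k : ℕ, 1 ≤ k →
      M n k = (2 * k / ((n : ℝ) * ((n : ℝ) - 1))) * ∑ m ∈ Finset.Icc 2 n, M m (k - 1)) :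
    ∀ k : ℕ, ∀ n : ℕ, 2 ≤ n → |M n k| ≤ (Nat.factorial k : ℝ) := by
  intro k
  induction k with
  | zero => intro n hn; rw [h0 n hn]; simp
  | succ k ih =>
    intro n hn
    have hx : (2:ℝ) ≤ (n:ℝ) := by exact_mod_cast hn
    have hx1 : (0:ℝ) < (n:ℝ) - 1 := by linarith
    have hx0 : (0:ℝ) < (n:ℝ) := by linarith
    rw [hrec n hn (k+1) (Nat.le_add_left 1 k)]
    have hcard : ((Finset.Icc 2 n).card : ℝ) = (n : ℝ) - 1 := by
      rw [Nat.card_Icc]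
      have : n + 1 - 2 = n - 1 := by omega
      rw [this, Nat.cast_sub (by omega)]
      simp
    have hsum : |∑ m ∈ Finset.Icc 2 n, M m k| ≤ ((n:ℝ) - 1) * (Nat.factorial k : ℝ) := by
      calc |∑ m ∈ Finset.Icc 2 n, M m k| ≤ ∑ m ∈ Finset.Icc 2 n, |M m k| :=
            Finset.abs_sum_le_sum_abs _ _
        _ ≤ ∑ m ∈ Finset.Icc 2 n, (Nat.factorial k : ℝ) := by
            apply Finset.sum_le_sum
            intro m hm
            exact ih m (Finset.mem_Icc.1 hm).1
        _ = ((n:ℝ) - 1) * (Nat.factorial k : ℝ) := by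
            rw [Finset.sum_const, nsmul_eq_mul, hcard]
    have hpos : (0:ℝ) ≤ 2 * ((k:ℝ)+1) / ((n:ℝ) * ((n:ℝ) - 1)) := by positivity
    have hksucc : ((k+1 : ℕ) : ℝ) = (k:ℝ) + 1 := by push_cast; ring
    rw [Nat.add_sub_cancel, abs_mul, hksucc]
    have habs : |2 * ((k:ℝ) + 1) / ((n:ℝ) * ((n:ℝ) - 1))| = 2 * ((k:ℝ)+1) / ((n:ℝ) * ((n:ℝ) - 1)) := abs_of_nonneg hpos
    rw [habs]
    have hfact : (Nat.factorial (k+1) : ℝ) = ((k:ℝ)+1) * (Nat.factorial k : ℝ) := by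
      rw [Nat.factorial_succ]; push_cast; ring
    rw [hfact]
    have step : 2 * ((k:ℝ)+1) / ((n:ℝ) * ((n:ℝ) - 1)) * (((n:ℝ) - 1) * (Nat.factorial k : ℝ))
        = 2 * ((k:ℝ)+1) * (Nat.factorial k : ℝ) / (n:ℝ) := by
      field_simp
    calc 2 * ((k:ℝ)+1) / ((n:ℝ) * ((n:ℝ) - 1)) * |∑ m ∈ Finset.Icc 2 n, M m k|
        ≤ 2 * ((k:ℝ)+1) / ((n:ℝ) * ((n:ℝ) - 1)) * (((n:ℝ) - 1) * (Nat.factorial k : ℝ)) :=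
          mul_le_mul_of_nonneg_left hsum hpos
      _ = 2 * ((k:ℝ)+1) * (Nat.factorial k : ℝ) / (n:ℝ) := step
      _ ≤ ((k:ℝ)+1) * (Nat.factorial k : ℝ) := by
          rw [div_le_iff₀ hx0]
          nlinarith [(Nat.cast_pos (α := ℝ)).2 (Nat.factorial_pos k)]

lemma aux_M1 (M : ℕ → ℕ → ℝ)
    (h0 : ∀ n : ℕ, 2 ≤ n → M n 0 = 1)
    (hrec : ∀ n : ℕ, 2 ≤ n → ∀ k : ℕ, 1 ≤ k →
      M n k = (2 * k / ((n : ℝ) * ((n : ℝ) - 1))) * ∑ m ∈ Finset.Icc 2 n, M m (k - 1)) :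
    ∀ n : ℕ, 2 ≤ n → M n 1 = 2 / (n : ℝ) := by
  intro n hn
  have hx : (2:ℝ) ≤ (n:ℝ) := by exact_mod_cast hn
  rw [hrec n hn 1 le_rfl]
  have hsum : ∑ m ∈ Finset.Icc 2 n, M m 0 = (n : ℝ) - 1 := by
    rw [Finset.sum_congr rfl (fun m hm => h0 m (Finset.mem_Icc.1 hm).1)]
    rw [Finset.sum_const, nsmul_eq_mul, mul_one, Nat.card_Icc]
    have : n + 1 - 2 = n - 1 := by omega
    rw [this, Nat.cast_sub (by omega)]
    simp
  rw [hsum]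
  have h1 : ((n:ℝ) - 1) ≠ 0 := by linarith
  have h2 : (n:ℝ) ≠ 0 := by linarith
  field_simp
  ring

lemma aux_g1 {t : ℝ} (ht : |t| < 1) :
    HasSum (fun n : ℕ => (2 / ((n:ℝ)+2)) * t^(n+2)) (-2*t - 2*Real.log (1-t)) := by
  have h := Real.hasSum_pow_div_log_of_abs_lt_one ht
  have h1 : HasSum (fun n : ℕ => t ^ (n + 1 + 1) / ((((n+1):ℕ):ℝ) + 1)) (-Real.log (1-t) - t) := by
    rw [hasSum_nat_add_iff (f := fun n : ℕ => t ^ (n + 1) / ((n:ℝ) + 1)) 1]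
    convert h using 1
    · rfl
    simp
  have h2 := h1.mul_left 2
  have h3 : HasSum (fun n : ℕ => (2 / ((n:ℝ)+2)) * t^(n+2)) (2 * (-Real.log (1-t) - t)) := by
    refine h2.congr_fun fun n => ?_
    push_cast
    ring
  convert h3 using 1
  ring

lemma aux_cauchy (b : ℕ → ℝ) {t : ℝ} (ht : |t| < 1)
    (hb : Summable (fun n : ℕ => ‖b n * t ^ (n + 2)‖)) :
    ∑' n : ℕ, (∑ i ∈ Finset.range (n + 1), b i) * t ^ (n + 2)
      = (1 - t)⁻¹ * ∑' n : ℕ, b n * t ^ (n + 2) := by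
  have htn : ‖t‖ < 1 := by rwa [Real.norm_eq_abs]
  have hg : Summable (fun n : ℕ => ‖t ^ n‖) := by
    refine (summable_geometric_of_lt_one (abs_nonneg t) ht).congr fun n => ?_
    rw [Real.norm_eq_abs, abs_pow]
  have hmain := tsum_mul_tsum_eq_tsum_sum_antidiagonal_of_summable_norm
    (f := fun n : ℕ => b n * t ^ (n + 2)) (g := fun n : ℕ => t ^ n) hb hg
  rw [tsum_geometric_of_norm_lt_one htn] at hmain
  have hinner : ∀ n : ℕ,
      (∑ kl ∈ Finset.HasAntidiagonal.antidiagonal n, (b kl.1 * t ^ (kl.1 + 2)) * t ^ kl.2)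
        = (∑ i ∈ Finset.range (n + 1), b i) * t ^ (n + 2) := by
    intro n
    rw [Finset.Nat.sum_antidiagonal_eq_sum_range_succ_mk, Finset.sum_mul]
    refine Finset.sum_congr rfl fun i hi => ?_
    have hile : i ≤ n := Nat.lt_succ_iff.1 (Finset.mem_range.1 hi)
    rw [mul_assoc, ← pow_add]
    congr 2
    omega
  calc ∑' n : ℕ, (∑ i ∈ Finset.range (n + 1), b i) * t ^ (n + 2)
      = ∑' n : ℕ, ∑ kl ∈ Finset.HasAntidiagonal.antidiagonal n, (b kl.1 * t ^ (kl.1 + 2)) * t ^ kl.2 :=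
        (tsum_congr hinner).symm
    _ = (∑' n : ℕ, b n * t ^ (n + 2)) * (1 - t)⁻¹ := hmain.symm
    _ = (1 - t)⁻¹ * ∑' n : ℕ, b n * t ^ (n + 2) := mul_comm _ _


/-- The generating functions `g_k(t) = Σ_{n≥2} m_n^{(k)} t^n` of the moments of
the external branch length of the Kingman coalescent converge for `|t| < 1`,
satisfy `g_1(t) = -2t - 2 log(1-t)`, and for `k ≥ 2` the differential equation
`t² g_k''(t) = (2k/(1-t)) g_{k-1}(t)` on `(-1,1)`. -/
theorem kingman_generating_functions (M : ℕ → ℕ → ℝ)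
    (h0 : ∀ n : ℕ, 2 ≤ n → M n 0 = 1)
    (hrec : ∀ n : ℕ, 2 ≤ n → ∀ k : ℕ, 1 ≤ k →
      M n k = (2 * k / ((n : ℝ) * ((n : ℝ) - 1))) * ∑ m ∈ Finset.Icc 2 n, M m (k - 1)) :
    (∀ k : ℕ, 1 ≤ k → ∀ t : ℝ, |t| < 1 →
        Summable (fun n : ℕ => M (n + 2) k * t ^ (n + 2))) ∧
    (∀ t : ℝ, |t| < 1 →
        ∑' n : ℕ, M (n + 2) 1 * t ^ (n + 2) = -2 * t - 2 * Real.log (1 - t)) ∧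
    (∀ k : ℕ, 2 ≤ k → ∀ t ∈ Set.Ioo (-1 : ℝ) 1,
        DifferentiableAt ℝ (fun s : ℝ => ∑' n : ℕ, M (n + 2) k * s ^ (n + 2)) t ∧
        DifferentiableAt ℝ (deriv (fun s : ℝ => ∑' n : ℕ, M (n + 2) k * s ^ (n + 2))) t ∧
        t ^ 2 * deriv (deriv (fun s : ℝ => ∑' n : ℕ, M (n + 2) k * s ^ (n + 2))) t
          = (2 * k / (1 - t)) * ∑' n : ℕ, M (n + 2) (k - 1) * t ^ (n + 2)) := by
  have hBnd : ∀ k : ℕ, ∀ n : ℕ, |M (n + 2) k| ≤ ((Nat.factorial k : ℝ)) * ((n : ℝ) + 1) ^ 0 :=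
    fun k n => by simpa using aux_Mbound M h0 hrec k (n + 2) (by omega)
  have hSumm : ∀ k : ℕ, ∀ t : ℝ, |t| < 1 →
      Summable (fun n : ℕ => ‖M (n + 2) k * t ^ (n + 2)‖) :=
    fun k t ht => aux_norm_summable (fun n => M (n + 2) k) _ 0 (hBnd k) 2 ht
  refine ⟨fun k _ t ht => (hSumm k t ht).of_norm, fun t ht => ?_, fun k hk t htm => ?_⟩
  · -- g₁ closed form
    have h := aux_g1 ht
    have h2 : HasSum (fun n : ℕ => M (n + 2) 1 * t ^ (n + 2)) (-2*t - 2*Real.log (1-t)) := by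
      refine h.congr_fun fun n => ?_
      rw [aux_M1 M h0 hrec (n + 2) (by omega)]
      push_cast
      ring
    exact h2.tsum_eq
  · -- the ODE for k ≥ 2
    obtain ⟨ht1, ht2⟩ := htm
    have ht : |t| < 1 := abs_lt.2 ⟨ht1, ht2⟩
    set a : ℕ → ℝ := fun n => M (n + 2) k with ha
    set A : ℕ → ℝ := fun n => a n * ((n : ℝ) + 2) with hA
    have hCA : ∀ n, |A n| ≤ (2 * (Nat.factorial k : ℝ)) * ((n : ℝ) + 1) ^ 1 := by
      intro n
      have h1 := hBnd k n
      simp only [pow_zero, mul_one] at h1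
      have h2 : |A n| = |a n| * ((n : ℝ) + 2) := by
        rw [hA, abs_mul, abs_of_nonneg (by positivity : (0:ℝ) ≤ (n:ℝ) + 2)]
      rw [h2, pow_one]
      nlinarith [abs_nonneg (a n), Nat.cast_nonneg (α := ℝ) n,
        (Nat.cast_pos (α := ℝ)).2 (Nat.factorial_pos k)]
    set F1 : ℝ → ℝ := fun s => ∑' n : ℕ, A n * s ^ (n + 1) with hF1
    set F2 : ℝ → ℝ := fun s => ∑' n : ℕ, A n * (((n : ℝ) + 1) * s ^ n) with hF2
    have hderiv1 : ∀ s : ℝ, |s| < 1 →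
        HasDerivAt (fun s : ℝ => ∑' n : ℕ, M (n + 2) k * s ^ (n + 2)) (F1 s) s := by
      intro s hs
      have h := aux_hasDerivAt a _ 0 (hBnd k) 1 hs
      simp only [Nat.cast_one] at h
      have he : (∑' n : ℕ, a n * (((n : ℝ) + 1 + 1) * s ^ (n + 1))) = F1 s := by
        rw [hF1]
        refine tsum_congr fun n => ?_
        rw [hA]
        ring
      rw [he] at h
      exact h
    have hderiv2 : ∀ s : ℝ, |s| < 1 → HasDerivAt F1 (F2 s) s := by
      intro s hs
      have h := aux_hasDerivAt A _ 1 hCA 0 hs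
      simp only [Nat.cast_zero, add_zero, Nat.add_zero] at h
      exact h
    have hball : Metric.ball (0:ℝ) 1 ∈ nhds t := by
      apply Metric.isOpen_ball.mem_nhds
      rw [Metric.mem_ball, Real.dist_eq, sub_zero]
      exact ht
    have hev : deriv (fun s : ℝ => ∑' n : ℕ, M (n + 2) k * s ^ (n + 2)) =ᶠ[nhds t] F1 := by
      filter_upwards [hball] with s hs
      rw [Metric.mem_ball, Real.dist_eq, sub_zero] at hs
      exact (hderiv1 s hs).deriv
    refine ⟨(hderiv1 t ht).differentiableAt, ?_, ?_⟩
    · exact (hderiv2 t ht).differentiableAt.congr_of_eventuallyEq hev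
    · have hderiv_eq : deriv (deriv (fun s : ℝ => ∑' n : ℕ, M (n + 2) k * s ^ (n + 2))) t
          = F2 t := by
        rw [hev.deriv_eq]
        exact (hderiv2 t ht).deriv
      rw [hderiv_eq]
      set b : ℕ → ℝ := fun n => M (n + 2) (k - 1) with hb
      have hid : ∀ n : ℕ, ((n : ℝ) + 2) * ((n : ℝ) + 1) * a n
          = 2 * (k : ℝ) * (∑ i ∈ Finset.range (n + 1), b i) := by
        intro n
        have h := hrec (n + 2) (by omega) k (by omega)
        have hsum2 : (∑ m ∈ Finset.Icc 2 (n + 2), M m (k - 1))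
            = ∑ i ∈ Finset.range (n + 1), b i := by
          rw [← Finset.Ico_add_one_right_eq_Icc, Finset.sum_Ico_eq_sum_range]
          have h3 : n + 2 + 1 - 2 = n + 1 := by omega
          rw [h3]
          refine Finset.sum_congr rfl fun i _ => ?_
          rw [hb]
          congr 1
          omega
        rw [hsum2] at h
        have hcast : ((n + 2 : ℕ) : ℝ) = (n : ℝ) + 2 := by push_cast; ring
        rw [hcast] at h
        have hne1 : ((n : ℝ) + 2) ≠ 0 := by positivity
        have hne2 : ((n : ℝ) + 2) - 1 ≠ 0 := by
          have : ((n:ℝ)) ≥ 0 := Nat.cast_nonneg n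
          intro hcon; nlinarith
        simp only [ha]
        rw [h]
        field_simp
        ring
      have hcalc : t ^ 2 * F2 t
          = 2 * (k : ℝ) * ∑' n : ℕ, (∑ i ∈ Finset.range (n + 1), b i) * t ^ (n + 2) := by
        rw [hF2, ← tsum_mul_left, ← tsum_mul_left]
        refine tsum_congr fun n => ?_
        have : t ^ 2 * (A n * (((n : ℝ) + 1) * t ^ n))
            = (((n : ℝ) + 2) * ((n : ℝ) + 1) * a n) * t ^ (n + 2) := by
          rw [hA]; ring
        rw [this, hid n]
        ring
      rw [hcalc, aux_cauchy b ht (hSumm (k - 1) t ht)]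
      rw [div_eq_mul_inv]
      ring
end

section
/- For every real t with |t| < 1, Σ_{n=2}^∞ (8(h_n − 1)/(n(n−1))) t^n = 8t − 4(1−t)(log(1−t))² − 8(1−t) Σ_{k=1}^∞ t^k/k², where h_n = Σ_{i=1}^n 1/i is the n-th harmonic number. -/
open Finset Real

/-- Harmonic number as a real. -/
noncomputable def Hr (m : ℕ) : ℝ := ∑ i ∈ Finset.Icc 1 m, (1 : ℝ) / i

lemma Hr_succ (m : ℕ) : Hr (m + 1) = Hr m + 1 / (m + 1 : ℝ) := by
  have : Hr (m + 1) = Hr m + (1 : ℝ) / (↑(m + 1)) :=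
    Finset.sum_Icc_succ_top (Nat.one_le_iff_ne_zero.2 (Nat.succ_ne_zero m)) _
  simpa using this

lemma Hr_eq_range (m : ℕ) : Hr m = ∑ i ∈ Finset.range m, (1 : ℝ) / (i + 1) := by
  induction m with
  | zero => simp [Hr]
  | succ n ih => rw [Hr_succ, ih, Finset.sum_range_succ]

lemma Hr_one : Hr 1 = 1 := by simp [Hr]

/-- The partial-fraction finite sum identity:
`∑_{i=0}^{n} 1/((i+1)(n-i+1)) = 2 h_{n+1}/(n+2)`. -/
lemma antidiag_sum (n : ℕ) :
    ∑ i ∈ Finset.range (n + 1), (1 : ℝ) / ((i + 1) * ((n : ℝ) - i + 1))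
      = 2 * Hr (n + 1) / (n + 2) := by
  have key : ∀ i ∈ Finset.range (n + 1),
      (1 : ℝ) / ((i + 1) * ((n : ℝ) - i + 1))
        = 1 / ((n : ℝ) + 2) * (1 / (i + 1) + 1 / ((n : ℝ) - i + 1)) := by
    intro i hi
    have hi' : (i : ℝ) ≤ n := by
      exact_mod_cast Nat.le_of_lt_succ (Finset.mem_range.1 hi)
    have h1 : (0 : ℝ) < (i : ℝ) + 1 := by positivity
    have h2 : (0 : ℝ) < (n : ℝ) - i + 1 := by linarith
    have h3 : (0 : ℝ) < (n : ℝ) + 2 := by positivity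
    field_simp
    ring
  rw [Finset.sum_congr rfl key, ← Finset.mul_sum]
  have hrefl : ∑ i ∈ Finset.range (n + 1), (1 : ℝ) / ((n : ℝ) - i + 1)
      = ∑ i ∈ Finset.range (n + 1), (1 : ℝ) / (i + 1) := by
    rw [← Finset.sum_range_reflect (fun i => (1 : ℝ) / (i + 1)) (n + 1)]
    refine Finset.sum_congr rfl fun i hi => ?_
    have hi' : i ≤ n := Nat.le_of_lt_succ (Finset.mem_range.1 hi)
    have : ((n + 1 - 1 - i : ℕ) : ℝ) = (n : ℝ) - i := by
      have : n + 1 - 1 - i = n - i := rfl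
      rw [this, Nat.cast_sub hi']
    rw [this]
  rw [Finset.sum_add_distrib, hrefl, ← Hr_eq_range]
  ring

/-- Closed form for the generating function of the second moments of the
external branch length of the Kingman coalescent:
`Σ_{n≥2} (8(h_n-1)/(n(n-1))) tⁿ = 8t - 4(1-t)log²(1-t) - 8(1-t)Li₂(t)`. -/
theorem kingman_g2_closed_form (t : ℝ) (ht : |t| < 1) :
    ∑' n : ℕ,
        (8 * ((∑ i ∈ Finset.Icc 1 (n + 2), (1 : ℝ) / i) - 1)
          / (((n : ℝ) + 2) * ((n : ℝ) + 1))) * t ^ (n + 2)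
      = 8 * t - 4 * (1 - t) * (Real.log (1 - t)) ^ 2
        - 8 * (1 - t) * ∑' k : ℕ, t ^ (k + 1) / ((k : ℝ) + 1) ^ 2 := by
  -- the logarithm series
  set f : ℕ → ℝ := fun n => t ^ (n + 1) / (n + 1) with hf_def
  have hgeo : Summable fun n : ℕ => |t| ^ (n + 1) :=
    (summable_geometric_of_lt_one (abs_nonneg t) ht).mul_right |t| |>.congr
      (fun n => by rw [pow_succ])
  have hfn : Summable fun n => ‖f n‖ := by
    refine hgeo.of_nonneg_of_le (fun n => norm_nonneg _) fun n => ?_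
    rw [norm_eq_abs, abs_div, abs_pow,
      abs_of_pos (show (0:ℝ) < (n:ℝ) + 1 by positivity)]
    exact div_le_self (by positivity) (by nlinarith [Nat.cast_nonneg (α := ℝ) n])
  have hf : HasSum f (-Real.log (1 - t)) := hasSum_pow_div_log_of_abs_lt_one ht
  -- the dilogarithm series
  set li : ℕ → ℝ := fun n => t ^ (n + 1) / ((n : ℝ) + 1) ^ 2 with hli_def
  have hlin : Summable fun n => ‖li n‖ := by
    refine hgeo.of_nonneg_of_le (fun n => norm_nonneg _) fun n => ?_
    rw [norm_eq_abs, abs_div, abs_pow,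
      abs_of_pos (show (0:ℝ) < ((n:ℝ) + 1) ^ 2 by positivity)]
    exact div_le_self (by positivity) (by nlinarith [Nat.cast_nonneg (α := ℝ) n])
  set L2 : ℝ := ∑' k : ℕ, li k with hL2_def
  have hli : HasSum li L2 := hlin.of_norm.hasSum
  -- Cauchy product: log²(1-t) as a power series
  have hcauchy : (Real.log (1 - t)) ^ 2
      = ∑' n : ℕ, ∑ kl ∈ Finset.HasAntidiagonal.antidiagonal n, f kl.1 * f kl.2 := by
    have := tsum_mul_tsum_eq_tsum_sum_antidiagonal_of_summable_norm hfn hfn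
    rw [hf.tsum_eq] at this
    rw [← this]; ring
  -- simplify the antidiagonal sums
  have hterm : ∀ n : ℕ, ∑ kl ∈ Finset.HasAntidiagonal.antidiagonal n, f kl.1 * f kl.2
      = 2 * Hr (n + 1) / (n + 2) * t ^ (n + 2) := by
    intro n
    rw [Finset.Nat.sum_antidiagonal_eq_sum_range_succ_mk]
    have : ∀ i ∈ Finset.range (n + 1),
        f i * f (n - i) = (1 : ℝ) / ((i + 1) * ((n : ℝ) - i + 1)) * t ^ (n + 2) := by
      intro i hi
      have hi' : i ≤ n := Nat.le_of_lt_succ (Finset.mem_range.1 hi)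
      have hc : ((n - i : ℕ) : ℝ) = (n : ℝ) - i := Nat.cast_sub hi'
      have hp : t ^ (i + 1) * t ^ (n - i + 1) = t ^ (n + 2) := by
        rw [← pow_add]; congr 1; omega
      simp only [hf_def, hc]
      rw [div_mul_div_comm, hp]
      have h1 : (0 : ℝ) < (i : ℝ) + 1 := by positivity
      have h2 : (0 : ℝ) < (n : ℝ) - i + 1 := by
        have : (i : ℝ) ≤ n := by exact_mod_cast hi'
        linarith
      field_simp
    rw [Finset.sum_congr rfl this, ← Finset.sum_mul, antidiag_sum]
  -- HasSum for the log² series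
  set g : ℕ → ℝ := fun n => 2 * Hr (n + 1) / (n + 2) * t ^ (n + 2) with hg_def
  have hgsum : Summable g := by
    have := (summable_sum_mul_antidiagonal_of_summable_norm' hfn hfn.of_norm hfn hfn.of_norm)
    exact this.congr hterm
  have hg : HasSum g ((Real.log (1 - t)) ^ 2) := by
    have : (Real.log (1 - t)) ^ 2 = ∑' n, g n := by
      rw [hcauchy]; exact tsum_congr hterm
    rw [this]; exact hgsum.hasSum
  -- the key series S n = h_{n+1} t^{n+1}/(n+1)
  set S : ℕ → ℝ := fun n => Hr (n + 1) * t ^ (n + 1) / (n + 1) with hS_def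
  have hli1 : HasSum (fun n => li (n + 1)) (L2 - t) := by
    apply (hasSum_nat_add_iff 1).2
    have : L2 - t + ∑ i ∈ Finset.range 1, li i = L2 := by
      simp [hli_def]
    rwa [this]
  have hSshift : HasSum (fun n => S (n + 1)) ((1 / 2) * (Real.log (1 - t)) ^ 2 + (L2 - t)) := by
    have h := (hg.mul_left (1 / 2)).add hli1
    refine h.congr_fun fun n => ?_
    show S (n + 1) = (1 : ℝ) / 2 * g n + li (n + 1)
    symm
    simp only [hg_def, hS_def, hli_def]
    have hstep : Hr (n + 1 + 1) = Hr (n + 1) + 1 / ((n : ℝ) + 2) := by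
      rw [Hr_succ]; push_cast; ring_nf
    rw [hstep]
    have h2 : (0 : ℝ) < (n : ℝ) + 2 := by positivity
    push_cast
    field_simp
    ring
  have hS : HasSum S ((1 / 2) * (Real.log (1 - t)) ^ 2 + L2) := by
    have := (hasSum_nat_add_iff (f := S) 1).1 hSshift
    have hS0 : ∑ i ∈ Finset.range 1, S i = t := by
      simp [hS_def, Hr_one]
    rw [hS0] at this
    convert this using 1
    · rfl
    ring
  set σ : ℝ := (1 / 2) * (Real.log (1 - t)) ^ 2 + L2 with hσ_def
  have hS1 : HasSum (fun n => S (n + 1)) (σ - t) := by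
    apply (hasSum_nat_add_iff 1).2
    have hS0 : ∑ i ∈ Finset.range 1, S i = t := by simp [hS_def, Hr_one]
    rw [hS0]; convert hS using 1; · rfl
    ring
  -- final combination
  have hfinal : HasSum (fun n => 8 * t * S n - 8 * S (n + 1)) (8 * t * σ - 8 * (σ - t)) :=
    (hS.mul_left (8 * t)).sub (hS1.mul_left 8)
  have heq : (fun n : ℕ =>
      (8 * ((∑ i ∈ Finset.Icc 1 (n + 2), (1 : ℝ) / i) - 1)
        / (((n : ℝ) + 2) * ((n : ℝ) + 1))) * t ^ (n + 2))
      = fun n => 8 * t * S n - 8 * S (n + 1) := by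
    funext n
    have hH : (∑ i ∈ Finset.Icc 1 (n + 2), (1 : ℝ) / i) = Hr (n + 2) := rfl
    have hstep : Hr (n + 2) = Hr (n + 1) + 1 / ((n : ℝ) + 2) := by
      rw [show n + 2 = (n + 1) + 1 from rfl, Hr_succ]; push_cast; ring_nf
    simp only [hS_def, hH, hstep]
    have h1 : (0 : ℝ) < (n : ℝ) + 1 := by positivity
    have h2 : (0 : ℝ) < (n : ℝ) + 2 := by positivity
    push_cast
    field_simp
    ring
  rw [heq, hfinal.tsum_eq, hσ_def]
  ring
end

section
/- Let (a_n)_{n≥2} be the unique sequence satisfying a_n = 1/(n−1) + Σ_{m=2}^{n−1} ((m−1)/((n−1)(n−m)(n−m+1))) a_m for all n ≥ 2. Then for every z with 0 < z < 1 the series Σ_{n=2}^∞ a_n z^{n−1} converges and Σ_{n=2}^∞ a_n z^{n−1} = ∫₀^z t / ((1−t)² (−log(1−t))) dt. -/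
open MeasureTheory intervalIntegral Finset

namespace BSaux

/-- coefficient `c k = 1/(k(k+1))` (with `c 0 = 0` by convention). -/
noncomputable def c (k : ℕ) : ℝ := 1 / ((k : ℝ) * ((k : ℝ) + 1))

/-- indicator of `n ≥ 2`. -/
noncomputable def e (n : ℕ) : ℝ := if 2 ≤ n then 1 else 0

/-- `b n = (n-1) a n` for `n ≥ 2`, and `0` otherwise. -/
noncomputable def b (a : ℕ → ℝ) (n : ℕ) : ℝ := if 2 ≤ n then ((n : ℝ) - 1) * a n else 0

lemma c_nonneg (k : ℕ) : 0 ≤ c k := by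
  unfold c; positivity

lemma c_zero : c 0 = 0 := by simp [c]

lemma c_le_one (k : ℕ) : c k ≤ 1 := by
  rcases Nat.eq_zero_or_pos k with h | h
  · simp [h, c]
  · unfold c
    rw [div_le_one (by positivity)]
    have h1 : (1:ℝ) ≤ (k:ℝ) := by exact_mod_cast h
    nlinarith

lemma sum_c (K : ℕ) : ∑ k ∈ range (K + 1), c k = 1 - 1 / ((K : ℝ) + 1) := by
  induction K with
  | zero => simp [c]
  | succ K ih =>
    rw [Finset.sum_range_succ, ih]
    have h1 : ((K : ℝ) + 1) ≠ 0 := by positivity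
    have h2 : ((K : ℝ) + 2) ≠ 0 := by positivity
    unfold c
    push_cast
    field_simp
    ring

lemma sum_c_le (K : ℕ) : ∑ k ∈ range K, c k ≤ 1 := by
  cases K with
  | zero => simp
  | succ K =>
    rw [sum_c]
    have : 0 < (K : ℝ) + 1 := by positivity
    have : 0 < 1 / ((K : ℝ) + 1) := by positivity
    linarith

section Rec

variable (a : ℕ → ℝ)
variable (hrec : ∀ n : ℕ, 2 ≤ n →
      a n = 1 / ((n : ℝ) - 1)
        + ∑ m ∈ Finset.Icc 2 (n - 1),
            (((m : ℝ) - 1) / (((n : ℝ) - 1) * ((n : ℝ) - (m : ℝ)) * ((n : ℝ) - (m : ℝ) + 1)))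
              * a m)

include hrec

lemma b_rec : ∀ n : ℕ, 2 ≤ n → b a n = 1 + ∑ m ∈ Finset.Icc 2 (n - 1), c (n - m) * b a m := by
  intro n hn
  have hn1 : (1 : ℝ) ≤ (n : ℝ) - 1 := by
    have : (2 : ℝ) ≤ (n : ℝ) := by exact_mod_cast hn
    linarith
  have hn0 : ((n : ℝ) - 1) ≠ 0 := by linarith
  unfold b
  rw [if_pos hn, hrec n hn, mul_add, mul_one_div, div_self hn0, Finset.mul_sum]
  congr 1
  apply Finset.sum_congr rfl
  intro m hm
  rw [Finset.mem_Icc] at hm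
  obtain ⟨hm2, hmn⟩ := hm
  have hmn' : m ≤ n := le_trans hmn (Nat.sub_le n 1)
  have hmlt : m < n := lt_of_le_of_lt hmn (Nat.sub_lt (by omega) one_pos)
  have hcast : ((n - m : ℕ) : ℝ) = (n : ℝ) - (m : ℝ) := by
    push_cast [Nat.cast_sub hmn']; ring
  have hnm1 : (1 : ℝ) ≤ (n : ℝ) - (m : ℝ) := by
    have : ((1 : ℕ) : ℝ) ≤ ((n - m : ℕ) : ℝ) := by exact_mod_cast Nat.one_le_iff_ne_zero.mpr (by omega)
    rw [hcast] at this; exact_mod_cast this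
  have h2 : ((n : ℝ) - (m : ℝ)) ≠ 0 := by linarith
  have h3 : ((n : ℝ) - (m : ℝ) + 1) ≠ 0 := by linarith
  rw [if_pos hm2]
  unfold c
  rw [hcast]
  field_simp

lemma b_bounds : ∀ n : ℕ, 0 ≤ b a n ∧ b a n ≤ n := by
  intro n
  induction n using Nat.strong_induction_on with
  | _ n ih =>
    rcases lt_or_ge n 2 with hn | hn
    · have : b a n = 0 := by unfold b; rw [if_neg (by omega)]
      simp [this]
    · rw [b_rec a hrec n hn]
      have hterm : ∀ m ∈ Finset.Icc 2 (n - 1), 0 ≤ c (n - m) * b a m := by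
        intro m hm
        rw [Finset.mem_Icc] at hm
        exact mul_nonneg (c_nonneg _) (ih m (by omega)).1
      constructor
      · have : 0 ≤ ∑ m ∈ Finset.Icc 2 (n - 1), c (n - m) * b a m :=
          Finset.sum_nonneg hterm
        linarith
      · -- each `b a m ≤ m ≤ n - 1`
        have hstep : ∑ m ∈ Finset.Icc 2 (n - 1), c (n - m) * b a m
            ≤ ∑ m ∈ Finset.Icc 2 (n - 1), c (n - m) * ((n : ℝ) - 1) := by
          apply Finset.sum_le_sum
          intro m hm
          rw [Finset.mem_Icc] at hm
          have hbm := (ih m (by omega)).2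
          have hmn : (m : ℝ) ≤ (n : ℝ) - 1 := by
            have : ((m : ℕ) : ℝ) ≤ ((n - 1 : ℕ) : ℝ) := by exact_mod_cast hm.2
            rwa [Nat.cast_sub (by omega), Nat.cast_one] at this
          exact mul_le_mul_of_nonneg_left (le_trans hbm hmn) (c_nonneg _)
        have hsum : ∑ m ∈ Finset.Icc 2 (n - 1), c (n - m) ≤ 1 := by
          have hre : ∑ m ∈ Finset.Icc 2 (n - 1), c (n - m) = ∑ k ∈ Finset.Icc 1 (n - 2), c k := by
            apply Finset.sum_nbij' (fun m => n - m) (fun k => n - k)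
            · intro m hm; rw [Finset.mem_Icc] at *; omega
            · intro k hk; rw [Finset.mem_Icc] at *; omega
            · intro m hm; rw [Finset.mem_Icc] at hm; omega
            · intro k hk; rw [Finset.mem_Icc] at hk; omega
            · intro m _; rfl
          rw [hre]
          calc ∑ k ∈ Finset.Icc 1 (n - 2), c k
              ≤ ∑ k ∈ Finset.range (n - 1), c k := by
                apply Finset.sum_le_sum_of_subset_of_nonneg
                · intro k hk; rw [Finset.mem_Icc] at hk; rw [Finset.mem_range]; omega
                · intro k _ _; exact c_nonneg k
            _ ≤ 1 := sum_c_le _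
        have hn1 : (0 : ℝ) ≤ (n : ℝ) - 1 := by
          have : (2 : ℝ) ≤ (n : ℝ) := by exact_mod_cast hn
          linarith
        have : ∑ m ∈ Finset.Icc 2 (n - 1), c (n - m) * ((n : ℝ) - 1)
            = (∑ m ∈ Finset.Icc 2 (n - 1), c (n - m)) * ((n : ℝ) - 1) := by
          rw [Finset.sum_mul]
        nlinarith [hstep, hsum]

lemma a_nonneg : ∀ n : ℕ, 2 ≤ n → 0 ≤ a n := by
  intro n hn
  have h := (b_bounds a hrec n).1
  unfold b at h
  rw [if_pos hn] at h
  have hn1 : (0 : ℝ) < (n : ℝ) - 1 := by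
    have : (2 : ℝ) ≤ (n : ℝ) := by exact_mod_cast hn
    linarith
  exact nonneg_of_mul_nonneg_right h hn1

lemma a_le_two : ∀ n : ℕ, 2 ≤ n → a n ≤ 2 := by
  intro n hn
  have h := (b_bounds a hrec n).2
  unfold b at h
  rw [if_pos hn] at h
  have hn2 : (2 : ℝ) ≤ (n : ℝ) := by exact_mod_cast hn
  nlinarith

/-- The core generating function identity. -/
lemma core (t : ℝ) (ht0 : 0 < t) (ht1 : t < 1) :
    HasSum (fun k : ℕ => ((k : ℝ) + 1) * a (k + 2) * t ^ k)
      (t / ((1 - t) ^ 2 * (-Real.log (1 - t)))) := by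
  set L : ℝ := -Real.log (1 - t) with hLdef
  have h1t : (0 : ℝ) < 1 - t := by linarith
  have hLpos : 0 < L := by
    have : Real.log (1 - t) < 0 := Real.log_neg h1t (by linarith)
    simp [hLdef]; linarith
  have ht0' : t ≠ 0 := ne_of_gt ht0
  have h1t' : (1 : ℝ) - t ≠ 0 := ne_of_gt h1t
  have hL' : L ≠ 0 := ne_of_gt hLpos
  have habs : |t| < 1 := by rw [abs_of_pos ht0]; exact ht1
  -- summability of b-series and c-series
  have hbsum : Summable (fun n : ℕ => ‖b a n * t ^ n‖) := by
    have hgeo : Summable (fun n : ℕ => (n : ℝ) ^ 1 * |t| ^ n) :=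
      summable_pow_mul_geometric_of_norm_lt_one 1 (by rwa [Real.norm_eq_abs, abs_abs])
    refine Summable.of_nonneg_of_le (fun n => norm_nonneg _) (fun n => ?_) hgeo
    rw [norm_mul, norm_pow, Real.norm_eq_abs, Real.norm_eq_abs]
    have h0 := (b_bounds a hrec n).1
    have h2 := (b_bounds a hrec n).2
    rw [abs_of_nonneg h0, pow_one]
    exact mul_le_mul_of_nonneg_right h2 (by positivity)
  have hcsum : Summable (fun k : ℕ => ‖c k * t ^ k‖) := by
    have hgeo : Summable (fun k : ℕ => |t| ^ k) :=
      summable_geometric_of_lt_one (abs_nonneg t) habs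
    refine Summable.of_nonneg_of_le (fun k => norm_nonneg _) (fun k => ?_) hgeo
    rw [norm_mul, norm_pow, Real.norm_eq_abs, Real.norm_eq_abs,
      abs_of_nonneg (c_nonneg k)]
    exact mul_le_of_le_one_left (pow_nonneg (abs_nonneg t) k) (c_le_one k)
  set Sb : ℝ := ∑' n, b a n * t ^ n with hSbdef
  have hSbhas : HasSum (fun n : ℕ => b a n * t ^ n) Sb := hbsum.of_norm.hasSum
  -- the log series
  have hL : HasSum (fun k : ℕ => t ^ (k + 1) / ((k : ℝ) + 1)) L := by
    have h := Real.hasSum_pow_div_log_of_abs_lt_one habs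
    push_cast at h
    exact h
  -- the series for ∑ t^{k+1}/(k+2)
  have hL2 : HasSum (fun k : ℕ => t ^ (k + 1) / ((k : ℝ) + 2)) (L / t - 1) := by
    have hshift : HasSum (fun k : ℕ => t ^ (k + 2) / ((k : ℝ) + 2)) (L - t) := by
      have h := (hasSum_nat_add_iff' (f := fun k : ℕ => t ^ (k + 1) / ((k : ℝ) + 1)) 1).mpr hL
      norm_num at h
      convert h using 2 with k
      · rfl
      push_cast
      ring_nf
    have hval : (L - t) / t = L / t - 1 := by rw [sub_div, div_self ht0']
    have h := hshift.div_const t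
    rw [hval] at h
    convert h using 2 with k
    · rfl
    rw [pow_succ]
    field_simp
    ring
  -- the c-series
  have hC : HasSum (fun k : ℕ => c k * t ^ k) (1 - (1 - t) * L / t) := by
    have h1 : HasSum (fun k : ℕ => c (k + 1) * t ^ (k + 1)) (L - (L / t - 1)) := by
      have h := hL.sub hL2
      convert h using 2 with k
      · rfl
      unfold c
      push_cast
      have hk1 : ((k : ℝ) + 1) ≠ 0 := by positivity
      have hk2 : ((k : ℝ) + 2) ≠ 0 := by positivity
      field_simp
      ring
    have h2 : HasSum (fun k : ℕ => c k * t ^ k) (L - (L / t - 1) + 0) := by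
      refine (hasSum_nat_add_iff' (f := fun k : ℕ => c k * t ^ k) 1).mp ?_
      simp only [Finset.range_one, Finset.sum_singleton, c_zero, pow_zero, zero_mul, sub_zero,
        add_zero]
      exact h1
    convert h2 using 1
    field_simp
    ring
  set Ct : ℝ := ∑' k, c k * t ^ k with hCtdef
  have hCt : Ct = 1 - (1 - t) * L / t := hC.tsum_eq
  -- the e-series
  have hE : HasSum (fun n : ℕ => e n * t ^ n) (t ^ 2 / (1 - t)) := by
    have geo : HasSum (fun k : ℕ => t ^ k) (1 - t)⁻¹ :=
      hasSum_geometric_of_lt_one (le_of_lt ht0) ht1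
    have h2 : HasSum (fun k : ℕ => e (k + 2) * t ^ (k + 2)) (t ^ 2 / (1 - t)) := by
      have h := geo.mul_left (t ^ 2)
      rw [← div_eq_mul_inv] at h
      convert h using 2 with k
      · rfl
      have he : e (k + 2) = 1 := by unfold e; rw [if_pos (by omega)]
      rw [he, one_mul, pow_add, mul_comm]
    refine (hasSum_nat_add_iff' (f := fun n : ℕ => e n * t ^ n) 2).mp ?_
    have hz : ∑ i ∈ Finset.range 2, e i * t ^ i = 0 := by
      simp [Finset.sum_range_succ, e]
    rw [hz, sub_zero]
    exact h2
  -- Cauchy product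
  have hprod : Sb * Ct = ∑' n, ∑ kl ∈ Finset.HasAntidiagonal.antidiagonal n,
      (b a kl.1 * t ^ kl.1) * (c kl.2 * t ^ kl.2) :=
    tsum_mul_tsum_eq_tsum_sum_antidiagonal_of_summable_norm hbsum hcsum
  have hinner : ∀ n : ℕ, ∑ kl ∈ Finset.HasAntidiagonal.antidiagonal n,
      (b a kl.1 * t ^ kl.1) * (c kl.2 * t ^ kl.2) = (b a n - e n) * t ^ n := by
    intro n
    rw [Finset.Nat.sum_antidiagonal_eq_sum_range_succ_mk]
    have hterm : ∀ k ∈ Finset.range (n + 1),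
        (b a k * t ^ k) * (c (n - k) * t ^ (n - k)) = (b a k * c (n - k)) * t ^ n := by
      intro k hk
      rw [Finset.mem_range] at hk
      have : t ^ k * t ^ (n - k) = t ^ n := by
        rw [← pow_add]; congr 1; omega
      calc (b a k * t ^ k) * (c (n - k) * t ^ (n - k))
          = (b a k * c (n - k)) * (t ^ k * t ^ (n - k)) := by ring
        _ = (b a k * c (n - k)) * t ^ n := by rw [this]
    rw [Finset.sum_congr rfl hterm, ← Finset.sum_mul]
    congr 1
    rcases lt_or_ge n 2 with hn | hn
    · interval_cases n
      · simp [b, c, e]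
      · simp [Finset.sum_range_succ, b, c, e]
    · have hsub : ∑ k ∈ Finset.range (n + 1), b a k * c (n - k)
          = ∑ k ∈ Finset.Icc 2 (n - 1), b a k * c (n - k) := by
        symm
        apply Finset.sum_subset
        · intro k hk; rw [Finset.mem_Icc] at hk; rw [Finset.mem_range]; omega
        · intro k hk1 hk2
          rw [Finset.mem_range] at hk1
          rw [Finset.mem_Icc] at hk2
          rcases lt_or_ge k 2 with h | h
          · have : b a k = 0 := by unfold b; rw [if_neg (by omega)]
            rw [this, zero_mul]
          · have hkn : k = n := by omega
            rw [hkn]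
            simp [c_zero]
      rw [hsub]
      have := b_rec a hrec n hn
      have he2 : e n = 1 := by unfold e; rw [if_pos hn]
      rw [he2]
      have : ∑ k ∈ Finset.Icc 2 (n - 1), b a k * c (n - k)
          = ∑ m ∈ Finset.Icc 2 (n - 1), c (n - m) * b a m := by
        apply Finset.sum_congr rfl; intro m _; ring
      rw [this]
      linarith [b_rec a hrec n hn]
  -- combine
  have hsumdiff : HasSum (fun n : ℕ => (b a n - e n) * t ^ n) (Sb - t ^ 2 / (1 - t)) := by
    have := hSbhas.sub hE
    convert this using 2 with n
    · rfl
    ring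
  have hmain : Sb * Ct = Sb - t ^ 2 / (1 - t) := by
    rw [hprod]
    rw [tsum_congr hinner]
    exact hsumdiff.tsum_eq
  -- solve for Sb
  have hX : Sb * ((1 - t) * L / t) = t ^ 2 / (1 - t) := by
    rw [hCt] at hmain
    nlinarith [hmain]
  have hSbval : Sb / t ^ 2 = t / ((1 - t) ^ 2 * L) := by
    have hX' : Sb * ((1 - t) * L) * (1 - t) = t ^ 2 * t := by
      field_simp at hX
      linarith [hX]
    rw [div_eq_div_iff (by positivity) (by positivity)]
    nlinarith [hX']
  -- final hasSum
  have hdrop : HasSum (fun k : ℕ => b a (k + 2) * t ^ (k + 2)) Sb := by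
    have := (hasSum_nat_add_iff' (f := fun n : ℕ => b a n * t ^ n) 2).mpr hSbhas
    have hz : ∑ i ∈ Finset.range 2, b a i * t ^ i = 0 := by
      simp [Finset.sum_range_succ, b]
    rw [hz, sub_zero] at this
    exact this
  have := hdrop.div_const (t ^ 2)
  rw [hSbval] at this
  convert this using 2 with k
  · rfl
  have hb2 : b a (k + 2) = ((k : ℝ) + 1) * a (k + 2) := by
    unfold b
    rw [if_pos (by omega)]
    push_cast
    ring_nf
  rw [hb2, pow_add]
  field_simp

end Rec

end BSaux

open BSaux

/-- For the Bolthausen–Sznitman coalescent the generating function of the mean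
external branch lengths `a_n = E(τ_{n,1})` satisfies
`Σ_{n≥2} a_n z^{n-1} = ∫₀^z t/((1-t)² L(t)) dt` with `L(t) = -log(1-t)`. -/
theorem bolthausen_sznitman_f1 (a : ℕ → ℝ)
    (hrec : ∀ n : ℕ, 2 ≤ n →
      a n = 1 / ((n : ℝ) - 1)
        + ∑ m ∈ Finset.Icc 2 (n - 1),
            (((m : ℝ) - 1) / (((n : ℝ) - 1) * ((n : ℝ) - (m : ℝ)) * ((n : ℝ) - (m : ℝ) + 1)))
              * a m) :
    ∀ z : ℝ, 0 < z → z < 1 →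
      Summable (fun n : ℕ => a (n + 2) * z ^ (n + 1)) ∧
      ∑' n : ℕ, a (n + 2) * z ^ (n + 1)
        = ∫ t in (0:ℝ)..z, t / ((1 - t) ^ 2 * (-Real.log (1 - t))) := by
  intro z hz0 hz1
  have ha0 : ∀ k : ℕ, 0 ≤ a (k + 2) := fun k => a_nonneg a hrec (k + 2) (by omega)
  have ha2 : ∀ k : ℕ, a (k + 2) ≤ 2 := fun k => a_le_two a hrec (k + 2) (by omega)
  have hsummable : Summable (fun n : ℕ => a (n + 2) * z ^ (n + 1)) := by
    have hgeo : Summable (fun n : ℕ => 2 * z ^ (n + 1)) := by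
      have := (summable_geometric_of_lt_one (le_of_lt hz0) hz1).mul_left (2 * z)
      apply this.congr
      intro n
      rw [pow_succ]
      ring
    refine Summable.of_nonneg_of_le (fun n => mul_nonneg (ha0 n) (by positivity))
      (fun n => mul_le_mul_of_nonneg_right (ha2 n) (by positivity)) hgeo
  refine ⟨hsummable, ?_⟩
  -- the integrand functions
  set F : ℕ → ℝ → ℝ := fun k t => ((k : ℝ) + 1) * a (k + 2) * t ^ k with hF
  have hFint : ∀ k : ℕ, IntegrableOn (F k) (Set.Ioc 0 z) := by
    intro k
    apply Continuous.integrableOn_Ioc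
    continuity
  -- integral of each F k over Ioc 0 z
  have hFval : ∀ k : ℕ, ∫ t in Set.Ioc (0:ℝ) z, F k t = a (k + 2) * z ^ (k + 1) := by
    intro k
    rw [← intervalIntegral.integral_of_le (le_of_lt hz0)]
    have : ∫ t in (0:ℝ)..z, F k t = ((k : ℝ) + 1) * a (k + 2) * ∫ t in (0:ℝ)..z, t ^ k := by
      rw [← intervalIntegral.integral_const_mul]
    rw [this, integral_pow]
    have : ((k : ℝ) + 1) ≠ 0 := by positivity
    field_simp
    ring
  -- norm integrals
  have hFnorm : ∀ k : ℕ, ∫ t in Set.Ioc (0:ℝ) z, ‖F k t‖ = a (k + 2) * z ^ (k + 1) := by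
    intro k
    rw [← hFval k]
    apply setIntegral_congr_fun measurableSet_Ioc
    intro t ht
    simp only [Real.norm_eq_abs]
    rw [abs_of_nonneg]
    exact mul_nonneg (mul_nonneg (by positivity) (ha0 k)) (pow_nonneg (le_of_lt ht.1) k)
  have hFsum : Summable (fun k : ℕ => ∫ t in Set.Ioc (0:ℝ) z, ‖F k t‖) := by
    simp only [hFnorm]
    exact hsummable
  -- swap integral and sum
  have hswap : ∑' k, ∫ t in Set.Ioc (0:ℝ) z, F k t
      = ∫ t in Set.Ioc (0:ℝ) z, ∑' k, F k t :=
    integral_tsum_of_summable_integral_norm hFint hFsum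
  -- pointwise identity on Ioc 0 z
  have hpt : Set.EqOn (fun t => ∑' k, F k t)
      (fun t => t / ((1 - t) ^ 2 * (-Real.log (1 - t)))) (Set.Ioc 0 z) := by
    intro t ht
    exact (core a hrec t ht.1 (lt_of_le_of_lt ht.2 hz1)).tsum_eq
  calc ∑' n : ℕ, a (n + 2) * z ^ (n + 1)
      = ∑' k, ∫ t in Set.Ioc (0:ℝ) z, F k t := by
        apply tsum_congr; intro k; rw [hFval k]
    _ = ∫ t in Set.Ioc (0:ℝ) z, ∑' k, F k t := hswap
    _ = ∫ t in Set.Ioc (0:ℝ) z, t / ((1 - t) ^ 2 * (-Real.log (1 - t))) :=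
        setIntegral_congr_fun measurableSet_Ioc hpt
    _ = ∫ t in (0:ℝ)..z, t / ((1 - t) ^ 2 * (-Real.log (1 - t))) :=
        (intervalIntegral.integral_of_le (le_of_lt hz0)).symm
end

section
/- As z → 1 from the left, (1−z)·(−log(1−z)) · ∫₀^z t / ((1−t)² (−log(1−t))) dt → 1; equivalently, ∫₀^z t/((1−t)² L(t)) dt ∼ 1/((1−z)L(z)) as z ↗ 1, where L(z) = −log(1−z). -/
open MeasureTheory intervalIntegral Filter

noncomputable def hFun (t : ℝ) : ℝ := t / ((1 - t) ^ 2 * (-Real.log (1 - t)))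
noncomputable def HFun (t : ℝ) : ℝ := ((1 - t) * (-Real.log (1 - t)))⁻¹
noncomputable def HFun' (t : ℝ) : ℝ :=
  (-Real.log (1 - t) - 1) / ((1 - t) ^ 2 * (-Real.log (1 - t)) ^ 2)

lemma L_pos {t : ℝ} (h0 : 0 < t) (h1 : t < 1) : 0 < -Real.log (1 - t) := by
  have := Real.log_neg (x := 1 - t) (by linarith) (by linarith)
  linarith

lemma L_ge {t : ℝ} (h1 : t < 1) : t ≤ -Real.log (1 - t) := by
  have := Real.log_le_sub_one_of_pos (show (0:ℝ) < 1 - t by linarith)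
  linarith

lemma hFun_nonneg {t : ℝ} (h0 : 0 ≤ t) (h1 : t < 1) : 0 ≤ hFun t := by
  refine div_nonneg h0 (mul_nonneg (sq_nonneg _) ?_)
  have := Real.log_nonpos (by linarith) (by linarith : (1:ℝ) - t ≤ 1)
  linarith

lemma hFun_intInt {x y : ℝ} (hx : 0 ≤ x) (hxy : x ≤ y) (hy : y < 1) :
    IntervalIntegrable hFun volume x y := by
  rw [intervalIntegrable_iff_integrableOn_Ioc_of_le hxy]
  refine Measure.integrableOn_of_bounded (M := (1 - y)⁻¹ ^ 2) measure_Ioc_lt_top.ne ?_ ?_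
  · apply Measurable.aestronglyMeasurable
    unfold hFun
    exact measurable_id.div (((measurable_const.sub measurable_id).pow measurable_const).mul (Real.measurable_log.comp (measurable_const.sub measurable_id)).neg)
  · refine (ae_restrict_iff' measurableSet_Ioc).2 (ae_of_all _ fun t ht => ?_)
    have ht0 : 0 < t := lt_of_le_of_lt hx ht.1
    have ht1 : t < 1 := lt_of_le_of_lt ht.2 hy
    have h1t : (0:ℝ) < 1 - t := by linarith
    have hLt : 0 < -Real.log (1 - t) := L_pos ht0 ht1
    have h1 : hFun t ≤ (1 - t)⁻¹ ^ 2 := by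
      have : hFun t ≤ t / ((1 - t) ^ 2 * t) := by
        apply div_le_div_of_nonneg_left ht0.le (by positivity)
        exact mul_le_mul_of_nonneg_left (L_ge ht1) (by positivity)
      calc hFun t ≤ t / ((1 - t) ^ 2 * t) := this
        _ = (1 - t)⁻¹ ^ 2 := by field_simp
    rw [Real.norm_eq_abs, abs_of_nonneg (hFun_nonneg ht0.le ht1)]
    calc hFun t ≤ (1 - t)⁻¹ ^ 2 := h1
      _ ≤ (1 - y)⁻¹ ^ 2 := by
        have hty : t ≤ y := ht.2
        gcongr <;> linarith

lemma HFun_hasDerivAt {t : ℝ} (h0 : 0 < t) (h1 : t < 1) :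
    HasDerivAt HFun (HFun' t) t := by
  have h1t : (0:ℝ) < 1 - t := by linarith
  have hL : 0 < -Real.log (1 - t) := L_pos h0 h1
  have d1 : HasDerivAt (fun s : ℝ => 1 - s) (-1) t := (hasDerivAt_id t).const_sub 1
  have d2 : HasDerivAt (fun s : ℝ => Real.log (1 - s)) ((1 - t)⁻¹ * (-1)) t :=
    (Real.hasDerivAt_log h1t.ne').comp t d1
  have d3 : HasDerivAt (fun s : ℝ => (1 - s) * (-Real.log (1 - s)))
      ((-1) * (-Real.log (1 - t)) + (1 - t) * (-((1 - t)⁻¹ * (-1)))) t := d1.mul d2.neg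
  have hne : (1 - t) * (-Real.log (1 - t)) ≠ 0 := by positivity
  have d4 := d3.inv hne
  convert (show HasDerivAt HFun _ t from d4) using 1
  unfold HFun'
  field_simp
  ring

lemma HFun'_intInt {a z : ℝ} (ha : 0 < a) (haz : a ≤ z) (hz : z < 1) :
    IntervalIntegrable HFun' volume a z := by
  apply ContinuousOn.intervalIntegrable
  rw [Set.uIcc_of_le haz]
  intro t ht
  have ht0 : 0 < t := lt_of_lt_of_le ha ht.1
  have ht1 : t < 1 := lt_of_le_of_lt ht.2 hz
  have h1t : (0:ℝ) < 1 - t := by linarith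
  have hL := L_pos ht0 ht1
  apply ContinuousAt.continuousWithinAt
  unfold HFun'
  have hlog : ContinuousAt (fun s : ℝ => Real.log (1 - s)) t :=
    (Real.continuousAt_log h1t.ne').comp ((continuous_const.sub continuous_id).continuousAt)
  exact (hlog.neg.sub continuousAt_const).div
    ((((continuous_const.sub continuous_id).continuousAt).pow 2).mul (hlog.neg.pow 2))
    (by positivity)

lemma comparison {δ a t : ℝ} (hδ : 0 < δ) (ha0 : 0 < a) (hat : a ≤ t) (ht1 : t < 1)
    (hN : 1/δ + 1 ≤ -Real.log (1 - t)) :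
    a * HFun' t ≤ hFun t ∧ hFun t ≤ (1 + δ) * HFun' t := by
  set L := -Real.log (1 - t) with hLdef
  have ht0 : 0 < t := lt_of_lt_of_le ha0 hat
  have h1t : (0:ℝ) < 1 - t := by linarith
  have hL : 0 < L := L_pos ht0 ht1
  have hδi : 0 < 1/δ := by positivity
  have hL1 : 1 < L := by linarith
  have hD : (0:ℝ) < (1-t)^2 * L^2 := by positivity
  have e1 : hFun t = (t*L)/((1-t)^2*L^2) := by
    unfold hFun; rw [div_eq_div_iff (by positivity) hD.ne']; ring
  have e2 : ∀ c : ℝ, c * HFun' t = (c*(L-1))/((1-t)^2*L^2) := fun c => by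
    unfold HFun'; rw [mul_div_assoc]
  have f3 : δ * (1/δ + 1) = 1 + δ := by field_simp
  constructor
  · rw [e1, e2, div_le_div_iff₀ hD hD]
    have num : a * (L - 1) ≤ t * L := by
      have := mul_le_mul_of_nonneg_right hat hL.le
      linarith
    exact mul_le_mul_of_nonneg_right num hD.le
  · rw [e1, e2, div_le_div_iff₀ hD hD]
    have num : t * L ≤ (1 + δ) * (L - 1) := by
      have f1 : t * L ≤ 1 * L := mul_le_mul_of_nonneg_right (by linarith) hL.le
      have f2 : δ * (1/δ + 1) ≤ δ * L := mul_le_mul_of_nonneg_left hN hδ.le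
      nlinarith
    exact mul_le_mul_of_nonneg_right num hD.le

/-- Asymptotics of the generating function of the mean external branch lengths
of the Bolthausen–Sznitman coalescent:
`∫₀^z t/((1-t)² L(t)) dt ~ 1/((1-z) L(z))` as `z ↗ 1`, where `L(z) = -log(1-z)`. -/
theorem f1_asymptotics :
    Tendsto
      (fun z : ℝ => (1 - z) * (-Real.log (1 - z))
        * ∫ t in (0:ℝ)..z, t / ((1 - t) ^ 2 * (-Real.log (1 - t))))
      (nhdsWithin 1 (Set.Iio 1)) (nhds 1) := by
  show Tendsto (fun z : ℝ => (1 - z) * (-Real.log (1 - z)) * ∫ t in (0:ℝ)..z, hFun t) _ _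
  rw [Metric.tendsto_nhds]
  intro ε hε
  set δ := min (ε/2) (1/2) with hδdef
  have hδ0 : 0 < δ := lt_min (by linarith) (by norm_num)
  have hδh : δ ≤ 1/2 := min_le_right _ _
  have h2δ : 2*δ ≤ ε := by
    have := min_le_left (ε/2) (1/2); linarith
  set N := 1/δ + 1 with hNdef
  set a := max (1 - δ) (1 - Real.exp (-N)) with hadef
  have ha0 : 0 < a := lt_of_lt_of_le (by linarith : (0:ℝ) < 1 - δ) (le_max_left _ _)
  have ha1 : a < 1 := max_lt (by linarith) (by have := Real.exp_pos (-N); linarith)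
  have haδ : 1 - δ ≤ a := le_max_left _ _
  have haL : ∀ t, a ≤ t → t < 1 → N ≤ -Real.log (1 - t) := by
    intro t hat ht1
    have h1t : (0:ℝ) < 1 - t := by linarith
    have h1 : 1 - t ≤ Real.exp (-N) := by
      have h2 := le_trans (le_max_right (1 - δ) (1 - Real.exp (-N))) hat
      linarith
    have hlog := Real.log_le_log h1t h1
    rw [Real.log_exp] at hlog
    linarith
  set C := ∫ t in (0:ℝ)..a, hFun t with hCdef
  have hC0 : 0 ≤ C := intervalIntegral.integral_nonneg ha0.le
    (fun t ht => hFun_nonneg ht.1 (lt_of_le_of_lt ht.2 ha1))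
  set Ha := HFun a with hHadef
  have hHa0 : 0 < Ha := by
    have h1a : (0:ℝ) < 1 - a := by linarith
    have := L_pos ha0 ha1
    rw [hHadef]; unfold HFun; positivity
  have hP : Tendsto (fun z : ℝ => (1-z)*(-Real.log (1-z)))
      (nhdsWithin 1 (Set.Iio 1)) (nhds 0) := by
    have hc : Continuous fun z : ℝ => -((1-z) * Real.log (1-z)) :=
      (Real.continuous_mul_log.comp (continuous_const.sub continuous_id)).neg
    have h2 : Tendsto (fun z : ℝ => -((1-z) * Real.log (1-z))) (nhdsWithin 1 (Set.Iio 1)) (nhds 0) :=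
      (hc.tendsto' 1 0 (by simp)).mono_left nhdsWithin_le_nhds
    simpa [mul_neg] using h2
  have hE2 : ∀ᶠ z in nhdsWithin 1 (Set.Iio 1), (1-z)*(-Real.log (1-z)) * C < δ :=
    (hP.mul_const C).eventually_lt_const (by rw [zero_mul]; exact hδ0)
  have hE3 : ∀ᶠ z in nhdsWithin 1 (Set.Iio 1), (1-z)*(-Real.log (1-z)) * Ha < δ :=
    (hP.mul_const Ha).eventually_lt_const (by rw [zero_mul]; exact hδ0)
  have hE1 : ∀ᶠ z in nhdsWithin 1 (Set.Iio 1), z ∈ Set.Ioo a 1 :=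
    Filter.eventually_of_mem (Ioo_mem_nhdsLT_of_mem ⟨ha1, le_refl 1⟩) (fun z hz => hz)
  filter_upwards [hE1, hE2, hE3] with z hz hPC hPHa
  obtain ⟨haz, hz1⟩ := hz
  have hz0 : 0 < z := lt_trans ha0 haz
  have h1z : (0:ℝ) < 1 - z := by linarith
  have hLz : 0 < -Real.log (1-z) := L_pos hz0 hz1
  have hP0 : 0 < (1-z)*(-Real.log (1-z)) := by positivity
  have hsplit : ∫ t in (0:ℝ)..z, hFun t = C + ∫ t in a..z, hFun t :=
    (intervalIntegral.integral_add_adjacent_intervals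
      (hFun_intInt le_rfl ha0.le ha1) (hFun_intInt ha0.le haz.le hz1)).symm
  have hFTC : ∫ t in a..z, HFun' t = HFun z - Ha := by
    apply intervalIntegral.integral_eq_sub_of_hasDerivAt
    · intro t ht
      rw [Set.uIcc_of_le haz.le] at ht
      exact HFun_hasDerivAt (lt_of_lt_of_le ha0 ht.1) (lt_of_le_of_lt ht.2 hz1)
    · exact HFun'_intInt ha0 haz.le hz1
  have hcomp : ∀ t ∈ Set.Icc a z, a * HFun' t ≤ hFun t ∧ hFun t ≤ (1+δ) * HFun' t :=
    fun t ht => comparison hδ0 ha0 ht.1 (lt_of_le_of_lt ht.2 hz1)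
      (haL t ht.1 (lt_of_le_of_lt ht.2 hz1))
  have hIub : ∫ t in a..z, hFun t ≤ (1+δ) * (HFun z - Ha) := by
    rw [← hFTC, ← intervalIntegral.integral_const_mul]
    exact intervalIntegral.integral_mono_on haz.le (hFun_intInt ha0.le haz.le hz1)
      ((HFun'_intInt ha0 haz.le hz1).const_mul _) (fun t ht => (hcomp t ht).2)
  have hIlb : a * (HFun z - Ha) ≤ ∫ t in a..z, hFun t := by
    rw [← hFTC, ← intervalIntegral.integral_const_mul]
    exact intervalIntegral.integral_mono_on haz.le
      ((HFun'_intInt ha0 haz.le hz1).const_mul _) (hFun_intInt ha0.le haz.le hz1)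
      (fun t ht => (hcomp t ht).1)
  have hPH : (1-z)*(-Real.log (1-z)) * HFun z = 1 := by
    rw [HFun]; exact mul_inv_cancel₀ hP0.ne'
  have hPHa0 : 0 ≤ (1-z)*(-Real.log (1-z)) * Ha := by positivity
  rw [Real.dist_eq, abs_sub_lt_iff, hsplit]
  have u1 : (1-z)*(-Real.log (1-z)) * (∫ t in a..z, hFun t)
      ≤ (1-z)*(-Real.log (1-z)) * ((1+δ) * (HFun z - Ha)) :=
    mul_le_mul_of_nonneg_left hIub hP0.le
  have l1 : (1-z)*(-Real.log (1-z)) * (a * (HFun z - Ha))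
      ≤ (1-z)*(-Real.log (1-z)) * (∫ t in a..z, hFun t) :=
    mul_le_mul_of_nonneg_left hIlb hP0.le
  have hPC0 : 0 ≤ (1-z)*(-Real.log (1-z)) * C := mul_nonneg hP0.le hC0
  have hδPHa : 0 ≤ δ * ((1-z)*(-Real.log (1-z)) * Ha) := mul_nonneg hδ0.le hPHa0
  have haPHa : a * ((1-z)*(-Real.log (1-z)) * Ha) ≤ 1 * ((1-z)*(-Real.log (1-z)) * Ha) :=
    mul_le_mul_of_nonneg_right (by linarith) hPHa0
  constructor
  · nlinarith [u1, hPH, hPC, hδPHa, hPHa0]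
  · nlinarith [l1, hPH, hPHa, hPC0, haPHa, haδ]
end

section
/- Let (a_n)_{n≥2} be the unique sequence satisfying a_n = 1/(n−1) + Σ_{m=2}^{n−1} ((m−1)/((n−1)(n−m)(n−m+1))) a_m for all n ≥ 2. Then a_n · log n → 1 as n → ∞. -/
open Filter Finset
noncomputable def bsH (j : ℕ) : ℝ := (harmonic j : ℝ)
lemma bsH_succ (j : ℕ) : bsH (j+1) = bsH j + 1/((j:ℝ)+1) := by
  simp only [bsH, harmonic_succ]; push_cast; ring
lemma bsH_one : bsH 1 = 1 := by norm_num [bsH, harmonic_succ]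
lemma bsH_pos {j : ℕ} (h : 1 ≤ j) : 0 < bsH j := by
  have : (0:ℚ) < harmonic j := harmonic_pos (by omega)
  unfold bsH; exact_mod_cast this
lemma bsH_nonneg (j : ℕ) : 0 ≤ bsH j := by
  rcases Nat.eq_zero_or_pos j with h | h
  · simp [h, bsH]
  · exact le_of_lt (bsH_pos h)
lemma bsH_mono : Monotone bsH := by
  apply monotone_nat_of_le_succ
  intro n; rw [bsH_succ]
  have : 0 ≤ 1/((n:ℝ)+1) := by positivity
  linarith
lemma bsH_ge_log (j : ℕ) : Real.log ((j:ℝ)+1) ≤ bsH j := by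
  have := log_add_one_le_harmonic j
  push_cast at this ⊢; exact this
lemma bsH_le_log (j : ℕ) : bsH j ≤ 1 + Real.log j := harmonic_le_one_add_log j


noncomputable def bsb (a : ℕ → ℝ) (n : ℕ) : ℝ := ((n:ℝ)-1) * a n
noncomputable def bsd (a : ℕ → ℝ) (m : ℕ) : ℝ := bsb a m - bsb a (m-1)

lemma bsb_one (a : ℕ → ℝ) : bsb a 1 = 0 := by simp [bsb]

section
variable (a : ℕ → ℝ)
  (hrec : ∀ n : ℕ, 2 ≤ n →
      a n = 1 / ((n : ℝ) - 1)
        + ∑ m ∈ Finset.Icc 2 (n - 1),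
            (((m : ℝ) - 1) / (((n : ℝ) - 1) * ((n : ℝ) - (m : ℝ)) * ((n : ℝ) - (m : ℝ) + 1)))
              * a m)

include hrec

lemma bs_hb : ∀ n : ℕ, 2 ≤ n →
    bsb a n = 1 + ∑ m ∈ Icc 2 (n-1), bsb a m * (1/(((n:ℝ)-m)*((n:ℝ)-m+1))) := by
  intro n hn
  have hn2 : (2:ℝ) ≤ (n:ℝ) := by exact_mod_cast hn
  have hn1 : ((n:ℝ)-1) ≠ 0 := by nlinarith
  show ((n:ℝ)-1) * a n = _
  rw [hrec n hn, mul_add, mul_one_div, div_self hn1, Finset.mul_sum]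
  congr 1
  apply Finset.sum_congr rfl
  intro m hm
  obtain ⟨hm2, hm1⟩ := Finset.mem_Icc.mp hm
  have hmn : (m:ℝ) + 1 ≤ (n:ℝ) := by exact_mod_cast (by omega : m + 1 ≤ n)
  have h2 : ((n:ℝ)-m) ≠ 0 := by nlinarith
  have h3 : ((n:ℝ)-m+1) ≠ 0 := by nlinarith
  show _ = ((m:ℝ)-1) * a m * _
  field_simp

lemma bs_hb2 : bsb a 2 = 1 := by
  have := bs_hb a hrec 2 le_rfl
  simpa using this

lemma bs_star : ∀ n : ℕ, 2 ≤ n →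
    ∑ m ∈ Icc 2 n, bsd a m * (1/((n:ℝ)-m+1)) = 1 := by
  intro n hn
  obtain ⟨k, rfl⟩ : ∃ k, n = k + 2 := ⟨n - 2, by omega⟩
  have hsplit : ∑ m ∈ Icc 2 (k+2), bsd a m * (1/((((k:ℕ)+2:ℕ):ℝ)-m+1))
      = ∑ m ∈ Icc 2 (k+2), bsb a m * (1/(((k+2:ℕ):ℝ)-m+1))
        - ∑ m ∈ Icc 2 (k+2), bsb a (m-1) * (1/(((k+2:ℕ):ℝ)-m+1)) := by
    rw [← Finset.sum_sub_distrib]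
    apply Finset.sum_congr rfl
    intro m hm
    simp only [bsd]; ring
  have h1 : ∑ m ∈ Icc 2 (k+2), bsb a m * (1/(((k+2:ℕ):ℝ)-m+1))
      = (∑ m ∈ Icc 2 (k+1), bsb a m * (1/(((k+2:ℕ):ℝ)-m+1))) + bsb a (k+2) := by
    rw [Finset.sum_Icc_succ_top (by omega)]
    congr 1
    have : (((k+2:ℕ)):ℝ) - ((k+2:ℕ):ℝ) + 1 = 1 := by ring
    rw [this]; ring
  have h2 : ∑ m ∈ Icc 2 (k+2), bsb a (m-1) * (1/(((k+2:ℕ):ℝ)-m+1))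
      = ∑ m ∈ Icc 1 (k+1), bsb a m * (1/(((k+2:ℕ):ℝ)-m)) := by
    have hmap : Icc 2 (k+2) = Finset.map (addRightEmbedding 1) (Icc 1 (k+1)) := by
      rw [Finset.map_add_right_Icc]
    rw [hmap, Finset.sum_map]
    apply Finset.sum_congr rfl
    intro m hm
    obtain ⟨hm1, hm2⟩ := Finset.mem_Icc.mp hm
    simp only [addRightEmbedding_apply]
    have : m + 1 - 1 = m := by omega
    rw [this]
    congr 1
    push_cast
    ring
  have h3 : ∑ m ∈ Icc 1 (k+1), bsb a m * (1/(((k+2:ℕ):ℝ)-m))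
      = ∑ m ∈ Icc 2 (k+1), bsb a m * (1/(((k+2:ℕ):ℝ)-m)) := by
    symm
    apply Finset.sum_subset (Finset.Icc_subset_Icc_left (by omega))
    intro x hx hnx
    have : x = 1 := by
      simp only [Finset.mem_Icc] at hx hnx; omega
    rw [this, bsb_one]; ring
  rw [hsplit, h1, h2, h3, bs_hb a hrec (k+2) (by omega)]
  have hred : (k+2) - 1 = k + 1 := by omega
  rw [hred]
  have hz : ∑ m ∈ Icc 2 (k+1), bsb a m * (1/(((k+2:ℕ):ℝ)-m))
      - ∑ m ∈ Icc 2 (k+1), bsb a m * (1/(((k+2:ℕ):ℝ)-m+1)) =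
      ∑ m ∈ Icc 2 (k+1), bsb a m * (1/((((k+2:ℕ):ℝ)-m)*(((k+2:ℕ):ℝ)-m+1))) := by
    rw [← Finset.sum_sub_distrib]
    apply Finset.sum_congr rfl
    intro m hm
    obtain ⟨hm1, hm2⟩ := Finset.mem_Icc.mp hm
    have hmn : (m:ℝ) + 1 ≤ ((k+2:ℕ):ℝ) := by exact_mod_cast (by omega : m + 1 ≤ k + 2)
    have h2 : (((k+2:ℕ):ℝ)-m) ≠ 0 := by nlinarith
    have h3 : (((k+2:ℕ):ℝ)-m+1) ≠ 0 := by nlinarith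
    push_cast at h2 h3 ⊢
    field_simp
    ring
  linarith [hz]


lemma bs_drec : ∀ n : ℕ, 3 ≤ n →
    bsd a n = ∑ m ∈ Icc 2 (n-1), bsd a m * (1/(((n:ℝ)-m)*((n:ℝ)-m+1))) := by
  intro n hn
  obtain ⟨k, rfl⟩ : ∃ k, n = k + 3 := ⟨n - 3, by omega⟩
  have hs1 := bs_star a hrec (k+3) (by omega)
  have hs0 := bs_star a hrec (k+2) (by omega)
  rw [Finset.sum_Icc_succ_top (by omega : 2 ≤ (k+2)+1)] at hs1
  have hself : bsd a (k+2+1) * (1/((((k+2)+1:ℕ):ℝ)-((k+2)+1:ℕ)+1)) = bsd a (k+3) := by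
    have : ((((k+2)+1:ℕ)):ℝ) - (((k+2)+1:ℕ):ℝ) + 1 = 1 := by ring
    rw [this]; norm_num
  rw [hself] at hs1
  have hred : (k+3) - 1 = k + 2 := by omega
  rw [hred]
  have e0 : ∀ m ∈ Icc 2 (k+2), bsd a m * (1/(((k+2:ℕ):ℝ)-m+1))
      = bsd a m * (1/(((k+3:ℕ):ℝ)-m)) := by
    intro m hm
    congr 2
    push_cast
    ring
  rw [Finset.sum_congr rfl e0] at hs0
  have hz : ∑ m ∈ Icc 2 (k+2), bsd a m * (1/(((k+3:ℕ):ℝ)-m))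
      - ∑ m ∈ Icc 2 (k+2), bsd a m * (1/(((k+3:ℕ):ℝ)-m+1)) =
      ∑ m ∈ Icc 2 (k+2), bsd a m * (1/((((k+3:ℕ):ℝ)-m)*(((k+3:ℕ):ℝ)-m+1))) := by
    rw [← Finset.sum_sub_distrib]
    apply Finset.sum_congr rfl
    intro m hm
    obtain ⟨hm1, hm2⟩ := Finset.mem_Icc.mp hm
    have hmn : (m:ℝ) + 1 ≤ ((k+3:ℕ):ℝ) := by exact_mod_cast (by omega : m + 1 ≤ k + 3)
    have h2 : (((k+3:ℕ):ℝ)-m) ≠ 0 := by nlinarith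
    have h3 : (((k+3:ℕ):ℝ)-m+1) ≠ 0 := by nlinarith
    push_cast at h2 h3 ⊢
    field_simp
    ring
  linarith [hz, hs0, hs1]

lemma bs_dnonneg : ∀ n : ℕ, 2 ≤ n → 0 ≤ bsd a n := by
  intro n
  induction n using Nat.strong_induction_on with
  | _ n ih =>
    intro hn
    rcases Nat.lt_or_ge n 3 with h3 | h3
    · have : n = 2 := by omega
      subst this
      have h2 : bsd a 2 = 1 := by
        simp only [bsd]
        rw [bs_hb2 a hrec]
        norm_num [bsb_one]
      rw [h2]; norm_num
    · rw [bs_drec a hrec n h3]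
      apply Finset.sum_nonneg
      intro m hm
      obtain ⟨hm1, hm2⟩ := Finset.mem_Icc.mp hm
      have hd := ih m (by omega) hm1
      have hmn : (m:ℝ) + 1 ≤ (n:ℝ) := by exact_mod_cast (by omega : m + 1 ≤ n)
      have h2 : (0:ℝ) < ((n:ℝ)-m) := by nlinarith
      have h3 : (0:ℝ) < ((n:ℝ)-m+1) := by nlinarith
      positivity

omit hrec in
lemma bs_tel : ∀ N : ℕ, 2 ≤ N → ∑ m ∈ Icc 2 N, bsd a m = bsb a N := by
  intro N hN
  induction N, hN using Nat.le_induction with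
  | base => simp [bsd, bsb_one]
  | succ N hN ih =>
    rw [Finset.sum_Icc_succ_top (by omega : 2 ≤ N + 1), ih]
    simp only [bsd]
    have : N + 1 - 1 = N := by omega
    rw [this]; ring

lemma bs_T : ∀ N : ℕ, 2 ≤ N → ∑ m ∈ Icc 2 N, bsd a m * bsH (N+1-m) = (N:ℝ) - 1 := by
  intro N hN
  induction N, hN using Nat.le_induction with
  | base =>
    have h2 : bsd a 2 = 1 := by
      simp only [bsd]; rw [bs_hb2 a hrec]; norm_num [bsb_one]
    norm_num [h2, bsH_one]
  | succ N hN ih =>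
    rw [Finset.sum_Icc_succ_top (by omega : 2 ≤ N + 1)]
    have hsplit : ∀ m ∈ Icc 2 N, bsd a m * bsH (N+1+1-m)
        = bsd a m * bsH (N+1-m) + bsd a m * (1/(((N+1:ℕ):ℝ)-m+1)) := by
      intro m hm
      obtain ⟨hm1, hm2⟩ := Finset.mem_Icc.mp hm
      have h1 : N+1+1-m = (N+1-m)+1 := by omega
      rw [h1, bsH_succ, mul_add, Nat.cast_sub (by omega : m ≤ N + 1)]
    rw [Finset.sum_congr rfl hsplit, Finset.sum_add_distrib]
    have hstar := bs_star a hrec (N+1) (by omega)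
    rw [Finset.sum_Icc_succ_top (by omega : 2 ≤ N + 1)] at hstar
    have hself : bsd a (N+1) * (1/(((N+1:ℕ):ℝ)-((N+1:ℕ):ℝ)+1)) = bsd a (N+1) := by
      have : ((N+1:ℕ):ℝ) - ((N+1:ℕ):ℝ) + 1 = 1 := by ring
      rw [this]; norm_num
    rw [hself] at hstar
    have hself2 : N + 1 + 1 - (N+1) = 1 := by omega
    rw [hself2, bsH_one, ih]
    have hc : ((N+1:ℕ):ℝ) = (N:ℝ) + 1 := by push_cast; ring
    rw [hc] at hstar ⊢
    linarith [hstar]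

lemma bs_low : ∀ N : ℕ, 2 ≤ N → (N:ℝ) - 1 ≤ bsb a N * bsH (N-1) := by
  intro N hN
  rw [← bs_T a hrec N hN, ← bs_tel a N hN, Finset.sum_mul]
  apply Finset.sum_le_sum
  intro m hm
  obtain ⟨hm1, hm2⟩ := Finset.mem_Icc.mp hm
  have hd := bs_dnonneg a hrec m hm1
  apply mul_le_mul_of_nonneg_left _ hd
  exact bsH_mono (by omega : N + 1 - m ≤ N - 1)

lemma bs_up : ∀ M N : ℕ, 2 ≤ M → M ≤ N → bsb a M * bsH (N+1-M) ≤ (N:ℝ) - 1 := by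
  intro M N hM hMN
  rw [← bs_T a hrec N (by omega), ← bs_tel a M hM, Finset.sum_mul]
  calc ∑ m ∈ Icc 2 M, bsd a m * bsH (N+1-M)
      ≤ ∑ m ∈ Icc 2 M, bsd a m * bsH (N+1-m) := by
        apply Finset.sum_le_sum
        intro m hm
        obtain ⟨hm1, hm2⟩ := Finset.mem_Icc.mp hm
        exact mul_le_mul_of_nonneg_left (bsH_mono (by omega)) (bs_dnonneg a hrec m hm1)
    _ ≤ ∑ m ∈ Icc 2 N, bsd a m * bsH (N+1-m) := by
        apply Finset.sum_le_sum_of_subset_of_nonneg (Finset.Icc_subset_Icc_right hMN)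
        intro m hm hnm
        obtain ⟨hm1, hm2⟩ := Finset.mem_Icc.mp hm
        exact mul_nonneg (bs_dnonneg a hrec m hm1) (bsH_nonneg _)

end

/-- For the Bolthausen–Sznitman coalescent the mean external branch length
`a_n = E(τ_{n,1})` satisfies `a_n ~ 1/log n` as `n → ∞`. -/
theorem bolthausen_sznitman_mean_asymptotics (a : ℕ → ℝ)
    (hrec : ∀ n : ℕ, 2 ≤ n →
      a n = 1 / ((n : ℝ) - 1)
        + ∑ m ∈ Finset.Icc 2 (n - 1),
            (((m : ℝ) - 1) / (((n : ℝ) - 1) * ((n : ℝ) - (m : ℝ)) * ((n : ℝ) - (m : ℝ) + 1)))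
              * a m) :
    Tendsto (fun n : ℕ => a n * Real.log n) atTop (nhds 1) := by
  have hlogn : Tendsto (fun n : ℕ => Real.log n) atTop atTop :=
    Real.tendsto_log_atTop.comp tendsto_natCast_atTop_atTop
  set f : ℕ → ℕ := fun n => ⌊(n:ℝ)/(Real.log n)^2⌋₊ with hf
  -- lower comparison function tends to 1
  have hLlim : Tendsto (fun n : ℕ => Real.log n/(1+Real.log n)) atTop (nhds 1) := by
    have h1 : Tendsto (fun n : ℕ => 1/(1+Real.log n)) atTop (nhds 0) :=
      tendsto_const_nhds.div_atTop (tendsto_atTop_add_const_left _ 1 hlogn)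
    have h2 : Tendsto (fun n : ℕ => 1 - 1/(1+Real.log n)) atTop (nhds 1) := by
      have := (tendsto_const_nhds (x := (1:ℝ))).sub h1
      simpa using this
    apply h2.congr'
    filter_upwards [hlogn.eventually_ge_atTop 1] with n hl1
    have hne : (1:ℝ) + Real.log n ≠ 0 := by linarith
    field_simp
    ring
  -- loglog / log tends to 0
  have hr0 : Tendsto (fun n : ℕ => Real.log (Real.log n)/Real.log n) atTop (nhds 0) :=
    (Real.isLittleO_log_id_atTop.tendsto_div_nhds_zero).comp hlogn
  -- (f n)/(n-1) tends to 0
  have he1 : Tendsto (fun n : ℕ => (f n:ℝ)/((n:ℝ)-1)) atTop (nhds 0) := by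
    have hsq : Tendsto (fun n : ℕ => (Real.log n)^2) atTop atTop := by
      apply tendsto_atTop_mono' _ _ hlogn
      filter_upwards [hlogn.eventually_ge_atTop 1] with n hl1
      nlinarith
    have hu : Tendsto (fun n : ℕ => 2/(Real.log n)^2) atTop (nhds 0) :=
      tendsto_const_nhds.div_atTop hsq
    apply tendsto_of_tendsto_of_tendsto_of_le_of_le' tendsto_const_nhds hu
    · filter_upwards [eventually_ge_atTop 3] with n hn3
      have hn1 : (3:ℝ) ≤ (n:ℝ) := by exact_mod_cast hn3
      apply div_nonneg (Nat.cast_nonneg _) (by linarith)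
    · filter_upwards [eventually_ge_atTop 3, hlogn.eventually_ge_atTop 1] with n hn3 hl1
      have hn1 : (3:ℝ) ≤ (n:ℝ) := by exact_mod_cast hn3
      have hfn : (f n:ℝ) ≤ (n:ℝ)/(Real.log n)^2 := by
        simp only [hf]
        exact Nat.floor_le (by positivity)
      rw [div_le_div_iff₀ (by linarith) (by positivity)]
      have h1 : (f n:ℝ) * (Real.log n)^2 ≤ (n:ℝ) := by
        have := mul_le_mul_of_nonneg_right hfn (by positivity : (0:ℝ) ≤ (Real.log n)^2)
        calc (f n:ℝ) * (Real.log n)^2 ≤ (n:ℝ)/(Real.log n)^2 * (Real.log n)^2 := this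
          _ = (n:ℝ) := by field_simp
      linarith
  -- second factor tends to 1
  have hsecond : Tendsto (fun n : ℕ =>
      Real.log n/(Real.log n - 2*Real.log (Real.log n))) atTop (nhds 1) := by
    have h1 : Tendsto (fun n : ℕ =>
        (1 - 2*(Real.log (Real.log n)/Real.log n))⁻¹) atTop (nhds 1) := by
      have := ((tendsto_const_nhds (x := (1:ℝ))).sub (hr0.const_mul 2)).inv₀ (by norm_num)
      simpa using this
    apply h1.congr'
    filter_upwards [hlogn.eventually_ge_atTop 1] with n hl1
    have hLne : Real.log n ≠ 0 := by linarith
    have : 1 - 2*(Real.log (Real.log n)/Real.log n)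
        = (Real.log n - 2*Real.log (Real.log n))/Real.log n := by field_simp
    rw [this, inv_div]
  have hg : Tendsto (fun n : ℕ => (1 + (f n:ℝ)/((n:ℝ)-1)) *
      (Real.log n/(Real.log n - 2*Real.log (Real.log n)))) atTop (nhds 1) := by
    have := ((tendsto_const_nhds (x := (1:ℝ))).add he1).mul hsecond
    simpa using this
  -- lower eventual bound
  have hlowev : ∀ᶠ n : ℕ in atTop, Real.log n/(1+Real.log n) ≤ a n * Real.log n := by
    filter_upwards [eventually_ge_atTop 3, hlogn.eventually_ge_atTop 1] with n hn3 hl1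
    have h2n : 2 ≤ n := by omega
    have hn1 : (3:ℝ) ≤ (n:ℝ) := by exact_mod_cast hn3
    have hHpos : 0 < bsH (n-1) := bsH_pos (by omega)
    have hlowb := bs_low a hrec n h2n
    have hne : (n:ℝ) - 1 ≠ 0 := by linarith
    have hared : a n * Real.log n = bsb a n * (Real.log n/((n:ℝ)-1)) := by
      show a n * Real.log n = ((n:ℝ)-1) * a n * (Real.log n/((n:ℝ)-1))
      field_simp
    rw [hared]
    have hb1 : ((n:ℝ)-1)/bsH (n-1) ≤ bsb a n := by
      rw [div_le_iff₀ hHpos]; linarith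
    have hH_le : bsH (n-1) ≤ 1 + Real.log n := by
      refine (bsH_le_log (n-1)).trans ?_
      have h0 : (0:ℝ) < ((n-1:ℕ):ℝ) := by
        have : (2:ℕ) ≤ n - 1 := by omega
        exact_mod_cast Nat.lt_of_lt_of_le (by norm_num) this
      have : Real.log ((n-1:ℕ):ℝ) ≤ Real.log n := by
        apply Real.log_le_log h0
        exact_mod_cast Nat.sub_le n 1
      linarith
    calc Real.log n/(1+Real.log n) ≤ Real.log n/bsH (n-1) := by
          rw [div_le_div_iff₀ (by linarith) hHpos]
          nlinarith
      _ ≤ bsb a n * (Real.log n/((n:ℝ)-1)) := by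
          have heq : Real.log n/bsH (n-1)
              = ((n:ℝ)-1)/bsH (n-1) * (Real.log n/((n:ℝ)-1)) := by
            field_simp
          rw [heq]
          apply mul_le_mul_of_nonneg_right hb1
          apply div_nonneg (by linarith) (by linarith)
  -- upper eventual bound
  have hupev : ∀ᶠ n : ℕ in atTop, a n * Real.log n ≤ (1 + (f n:ℝ)/((n:ℝ)-1)) *
      (Real.log n/(Real.log n - 2*Real.log (Real.log n))) := by
    filter_upwards [eventually_ge_atTop 3, hlogn.eventually_ge_atTop 1,
      hr0.eventually_lt_const (by norm_num : (0:ℝ) < 1/4)] with n hn3 hl1 hr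
    have h2n : 2 ≤ n := by omega
    have hn1 : (3:ℝ) ≤ (n:ℝ) := by exact_mod_cast hn3
    have hLpos : (0:ℝ) < Real.log n := by linarith
    have hden : (0:ℝ) < Real.log n - 2*Real.log (Real.log n) := by
      have := (div_lt_iff₀ hLpos).mp hr
      linarith
    have hupb := bs_up a hrec n (n + f n) h2n (Nat.le_add_right _ _)
    have hidx : n + f n + 1 - n = f n + 1 := by omega
    rw [hidx] at hupb
    have hHpos : 0 < bsH (f n + 1) := bsH_pos (by omega)
    have hxpos : (0:ℝ) < (n:ℝ)/(Real.log n)^2 := by positivity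
    have hHlow : Real.log n - 2*Real.log (Real.log n) ≤ bsH (f n + 1) := by
      have h1 : Real.log ((f n:ℝ) + 1 + 1) ≤ bsH (f n + 1) := by
        have := bsH_ge_log (f n + 1)
        push_cast at this
        convert this using 3
      have h2 : (n:ℝ)/(Real.log n)^2 ≤ (f n:ℝ) + 1 + 1 := by
        have hfl := Nat.lt_floor_add_one ((n:ℝ)/(Real.log n)^2)
        simp only [hf]
        push_cast at hfl ⊢
        linarith
      have h3 : Real.log n - 2*Real.log (Real.log n) = Real.log ((n:ℝ)/(Real.log n)^2) := by
        rw [Real.log_div (by linarith) (by positivity), Real.log_pow]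
        push_cast; ring
      calc Real.log n - 2*Real.log (Real.log n) = Real.log ((n:ℝ)/(Real.log n)^2) := h3
        _ ≤ Real.log ((f n:ℝ) + 1 + 1) := Real.log_le_log hxpos h2
        _ ≤ bsH (f n + 1) := h1
    have hne : (n:ℝ) - 1 ≠ 0 := by linarith
    have hHne : bsH (f n + 1) ≠ 0 := ne_of_gt hHpos
    have hared : a n * Real.log n = bsb a n * (Real.log n/((n:ℝ)-1)) := by
      show a n * Real.log n = ((n:ℝ)-1) * a n * (Real.log n/((n:ℝ)-1))
      field_simp
    rw [hared]
    have hble : bsb a n ≤ (((n + f n:ℕ):ℝ) - 1)/bsH (f n + 1) := by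
      rw [le_div_iff₀ hHpos]; linarith
    calc bsb a n * (Real.log n/((n:ℝ)-1))
        ≤ (((n + f n:ℕ):ℝ) - 1)/bsH (f n + 1) * (Real.log n/((n:ℝ)-1)) := by
          apply mul_le_mul_of_nonneg_right hble
          apply div_nonneg (by linarith) (by linarith)
      _ = (1 + (f n:ℝ)/((n:ℝ)-1)) * (Real.log n/bsH (f n + 1)) := by
          push_cast
          field_simp
          ring
      _ ≤ (1 + (f n:ℝ)/((n:ℝ)-1)) *
          (Real.log n/(Real.log n - 2*Real.log (Real.log n))) := by
          have hco : (0:ℝ) ≤ 1 + (f n:ℝ)/((n:ℝ)-1) := by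
            have := div_nonneg (Nat.cast_nonneg (f n) : (0:ℝ) ≤ (f n:ℝ)) (by linarith : (0:ℝ) ≤ (n:ℝ)-1)
            linarith
          apply mul_le_mul_of_nonneg_left _ hco
          rw [div_le_div_iff₀ hHpos hden]
          nlinarith
  exact tendsto_of_tendsto_of_tendsto_of_le_of_le' hLlim hg hlowev hupev
end

section
/- Let (a_n)_{n≥2} satisfy a_n = 1/(n−1) + Σ_{m=2}^{n−1} ((m−1)/((n−1)(n−m)(n−m+1))) a_m for all n ≥ 2, and let (c_n)_{n≥2} be the unique sequence satisfying c_n = (2/(n−1)) a_n + Σ_{m=3}^{n−1} ((m−1)(m−2)/((n−1)²(n−m)(n−m+1))) c_m for all n ≥ 2 (so c_2 = 2). Then the power series f(z) = Σ_{n=2}^∞ c_n z^{n−1} converges for |z| < 1, and for every z with 0 < z < 1, f'(z) = (2/(−log(1−z))) ∫₀^z t / ((1−t)³ (−log(1−t))) dt. -/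
open MeasureTheory intervalIntegral Finset Metric

set_option maxHeartbeats 1600000




lemma sum_q_le (N : ℕ) : ∑ i ∈ Finset.range N, (1:ℝ)/(((i:ℝ)+1)*((i:ℝ)+2)) ≤ 1 := by
  have key := Finset.sum_range_sub' (f := fun i : ℕ => (1:ℝ)/((i:ℝ)+1)) N
  have e : ∑ i ∈ Finset.range N, (1:ℝ)/(((i:ℝ)+1)*((i:ℝ)+2))
      = 1/(((0:ℕ):ℝ)+1) - 1/((N:ℝ)+1) := by
    rw [← key]
    refine Finset.sum_congr rfl fun i _ => ?_
    have h1 : ((i:ℝ)+1) ≠ 0 := by positivity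
    have h2 : ((i:ℝ)+2) ≠ 0 := by positivity
    push_cast
    rw [div_sub_div _ _ h1 (by positivity : ((i:ℝ)+1+1) ≠ 0),
      div_eq_div_iff (by positivity) (by positivity)]
    ring
  rw [e]
  have : (0:ℝ) ≤ 1/((N:ℝ)+1) := by positivity
  norm_num
  linarith

lemma summable_aux (j : ℕ) {r : ℝ} (hr : |r| < 1) :
    Summable (fun n : ℕ => ((n:ℝ)+2)^j * |r|^n) := by
  have h1 : Summable (fun n : ℕ => ((n:ℝ))^j * |r|^n) :=
    summable_pow_mul_geometric_of_norm_lt_one (R := ℝ) j (r := |r|)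
      (by rwa [Real.norm_eq_abs, abs_abs])
  have h2 : Summable (fun n : ℕ => |r|^n) := summable_geometric_of_lt_one (abs_nonneg r) hr
  refine Summable.of_nonneg_of_le (fun n => by positivity) ?_
    ((h1.mul_left ((3:ℝ)^j)).add (h2.mul_left ((3:ℝ)^j)))
  intro n
  have hb : ((n:ℝ)+2)^j ≤ (3:ℝ)^j * ((n:ℝ))^j + (3:ℝ)^j := by
    rcases Nat.eq_zero_or_pos n with h | h
    · subst h
      have h0 : (0:ℝ) ≤ (3:ℝ)^j * ((0:ℕ):ℝ)^j := by positivity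
      have h3 : (2:ℝ)^j ≤ 3^j := pow_le_pow_left₀ (by norm_num) (by norm_num) j
      push_cast
      push_cast at h0
      norm_num
      linarith
    · have hn1 : (1:ℝ) ≤ (n:ℝ) := by exact_mod_cast h
      have h4 : ((n:ℝ)+2)^j ≤ (3*(n:ℝ))^j :=
        pow_le_pow_left₀ (by positivity) (by linarith) j
      rw [mul_pow] at h4
      have h5 : (0:ℝ) ≤ (3:ℝ)^j := by positivity
      linarith
  have hrn : (0:ℝ) ≤ |r|^n := by positivity
  calc ((n:ℝ)+2)^j * |r|^n ≤ ((3:ℝ)^j * ((n:ℝ))^j + (3:ℝ)^j) * |r|^n :=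
        mul_le_mul_of_nonneg_right hb hrn
    _ = (3:ℝ)^j * (((n:ℝ))^j * |r|^n) + (3:ℝ)^j * |r|^n := by ring




lemma summable_coeff_pow {b : ℕ → ℝ} {C : ℝ} (e : ℕ)
    (hb : ∀ k, |b k| ≤ C * ((k:ℝ)+2)^5) {z : ℝ} (hz : |z| < 1) :
    Summable (fun k : ℕ => ‖b k * z^(k+e)‖) := by
  have hC : 0 ≤ C := by
    have := hb 0
    have h2 : (0:ℝ) ≤ |b 0| := abs_nonneg _
    have h3 : |b 0| ≤ C * 32 := by norm_num at this; linarith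
    nlinarith
  refine Summable.of_nonneg_of_le (fun k => norm_nonneg _) ?_
    ((summable_aux 5 hz).mul_left C)
  intro k
  rw [Real.norm_eq_abs, abs_mul, abs_pow]
  calc |b k| * |z|^(k+e) ≤ (C * ((k:ℝ)+2)^5) * |z|^k := by
        apply mul_le_mul (hb k) ?_ (by positivity) (by positivity)
        calc |z|^(k+e) ≤ |z|^k := pow_le_pow_of_le_one (abs_nonneg z) hz.le (by omega)
          _ ≤ |z|^k := le_refl _
    _ = C * (((k:ℝ)+2)^5 * |z|^k) := by ring

lemma hasDerivAt_tsum_pow {b : ℕ → ℝ} {C : ℝ} (e : ℕ)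
    (hb : ∀ k, |b k| ≤ C * ((k:ℝ)+2)^5) {z : ℝ} (hz : |z| < 1) :
    HasDerivAt (fun s : ℝ => ∑' k : ℕ, b k * s^(k+e))
      (∑' k : ℕ, b k * (((k+e : ℕ):ℝ) * z^(k+e-1))) z := by
  have hC : 0 ≤ C := by
    have := hb 0
    have h2 : (0:ℝ) ≤ |b 0| := abs_nonneg _
    have h3 : |b 0| ≤ C * 32 := by norm_num at this; linarith
    nlinarith
  set r : ℝ := (1+|z|)/2 with hr
  have hr0 : (1:ℝ)/2 ≤ r := by rw [hr]; have := abs_nonneg z; linarith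
  have hr1 : r < 1 := by rw [hr]; linarith
  have hrpos : 0 < r := by linarith
  have hzr : |z| < r := by rw [hr]; linarith
  have habs : |r| < 1 := by rwa [abs_of_pos hrpos]
  refine hasDerivAt_tsum_of_isPreconnected
    (u := fun k : ℕ => (2*C*((e:ℝ)+1)) * (((k:ℝ)+2)^6 * |r|^k))
    (g := fun k s => b k * s^(k+e))
    (g' := fun k s => b k * (((k+e : ℕ):ℝ) * s^(k+e-1)))
    (t := ball (0:ℝ) r) (y₀ := 0)
    ?_ isOpen_ball (convex_ball _ _).isPreconnected ?_ ?_ ?_ ?_ ?_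
  · exact ((summable_aux 6 habs).mul_left _)
  · intro k y _
    exact (hasDerivAt_pow (k+e) y).const_mul (b k)
  · intro k y hy
    have hyr : |y| ≤ r := by
      rw [mem_ball, Real.dist_eq, sub_zero] at hy
      exact hy.le
    have hy1 : |y| < 1 := lt_of_le_of_lt hyr hr1
    rw [Real.norm_eq_abs, abs_mul, abs_mul, abs_pow]
    have h1 : |((k+e : ℕ):ℝ)| = ((k+e:ℕ):ℝ) := abs_of_nonneg (Nat.cast_nonneg _)
    rw [h1]
    have h2 : |y|^(k+e-1) ≤ 2 * r^k := by
      have hle : |y|^(k+e-1) ≤ r^(k+e-1) := pow_le_pow_left₀ (abs_nonneg y) hyr _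
      have h3 : r^(k+e-1) ≤ r^(k-1) :=
        pow_le_pow_of_le_one hrpos.le hr1.le (by omega)
      have h4 : r^(k-1) ≤ 2 * r^k := by
        rcases Nat.eq_zero_or_pos k with h | h
        · subst h; simpa using by linarith
        · have : k - 1 + 1 = k := by omega
          calc r^(k-1) = r^k / r := by
                rw [eq_div_iff (ne_of_gt hrpos), ← pow_succ, this]
            _ ≤ r^k / (1/2) := by
                apply div_le_div_of_nonneg_left (by positivity) (by norm_num) hr0
            _ = 2 * r^k := by ring
      linarith
    have h5 : ((k+e:ℕ):ℝ) ≤ ((e:ℝ)+1) * ((k:ℝ)+2) := by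
      push_cast; nlinarith [Nat.cast_nonneg (α := ℝ) k, Nat.cast_nonneg (α := ℝ) e]
    calc |b k| * (((k+e:ℕ):ℝ) * |y|^(k+e-1))
        ≤ (C * ((k:ℝ)+2)^5) * ((((e:ℝ)+1) * ((k:ℝ)+2)) * (2*r^k)) := by
          apply mul_le_mul (hb k) ?_ (by positivity) (by positivity)
          apply mul_le_mul h5 h2 (by positivity) (by positivity)
      _ = (2*C*((e:ℝ)+1)) * (((k:ℝ)+2)^6 * r^k) := by ring
      _ = (2*C*((e:ℝ)+1)) * (((k:ℝ)+2)^6 * |r|^k) := by rw [abs_of_pos hrpos]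
  · exact mem_ball_self hrpos
  · apply summable_of_ne_finset_zero (s := {0})
    intro k hk
    simp only [Finset.mem_singleton] at hk
    have : k + e ≠ 0 := by omega
    show b k * (0:ℝ)^(k+e) = 0
    rw [zero_pow this, mul_zero]
  · rwa [mem_ball, Real.dist_eq, sub_zero]




noncomputable def Qc (l : ℕ) : ℝ := 1/(((l:ℝ)+1)*((l:ℝ)+2))

lemma Qc_nonneg (l : ℕ) : 0 ≤ Qc l := by unfold Qc; positivity

lemma coef_eq (x y A : ℝ) (h1 : y-x+1 ≠ 0) (h2 : y-x+2 ≠ 0) (h3 : y+2 ≠ 0) :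
    (x+1)*A*(1/((y-x+1)*(y-x+2)))
      = (y+2)*((x+2-1)/((y+3-1)*(y+3-(x+2))*(y+3-(x+2)+1))*A) := by
  rw [show y+3-1 = y+2 by ring, show y+3-(x+2) = y-x+1 by ring,
    show y-x+1+1 = y-x+2 by ring]
  field_simp
  ring

section Rec
variable (a c : ℕ → ℝ)
variable (ha : ∀ n : ℕ, 2 ≤ n →
      a n = 1 / ((n : ℝ) - 1)
        + ∑ m ∈ Finset.Icc 2 (n - 1),
            (((m : ℝ) - 1) / (((n : ℝ) - 1) * ((n : ℝ) - (m : ℝ)) * ((n : ℝ) - (m : ℝ) + 1)))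
              * a m)
variable (hc : ∀ n : ℕ, 2 ≤ n →
      c n = (2 / ((n : ℝ) - 1)) * a n
        + ∑ m ∈ Finset.Icc 3 (n - 1),
            (((m : ℝ) - 1) * ((m : ℝ) - 2)
                / (((n : ℝ) - 1) ^ 2 * ((n : ℝ) - (m : ℝ)) * ((n : ℝ) - (m : ℝ) + 1)))
              * c m)

include ha in
lemma a_two : a 2 = 1 := by
  have h := ha 2 (le_refl 2)
  norm_num at h
  exact h

include ha in
lemma key1 (m : ℕ) :
    ∑ i ∈ Finset.range (m+1), (((i:ℝ)+1) * a (i+2)) * Qc (m-i)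
      = ((m:ℝ)+2) * a (m+3) - 1 := by
  have h := ha (m+3) (by omega)
  have hn1 : ((m+3:ℕ):ℝ) - 1 = (m:ℝ)+2 := by push_cast; ring
  have hIcc : Finset.Icc 2 (m+3-1) = Finset.Ico 2 (m+3) := by
    rw [show m+3-1 = m+2 from rfl, ← Finset.Ico_add_one_right_eq_Icc]; rfl
  rw [hIcc] at h
  rw [Finset.sum_Ico_eq_sum_range] at h
  rw [show m+3-2 = m+1 from rfl] at h
  rw [h]
  rw [mul_add, Finset.mul_sum]
  have hme : ((m:ℝ)+2) * (1/(((m+3:ℕ):ℝ) - 1)) = 1 := by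
    rw [hn1]; field_simp
  rw [hme, add_sub_cancel_left]
  refine Finset.sum_congr rfl fun i hi => ?_
  rw [show 2 + i = i + 2 by omega]
  have him : i ≤ m := by simp at hi; omega
  have hsub : ((m-i:ℕ):ℝ) = (m:ℝ) - (i:ℝ) := by
    rw [Nat.cast_sub him]
  have h1 : ((m:ℝ) - i + 1) ≠ 0 := by
    have : (i:ℝ) ≤ m := by exact_mod_cast him
    linarith
  have h2 : ((m:ℝ) - i + 2) ≠ 0 := by
    have : (i:ℝ) ≤ m := by exact_mod_cast him
    linarith
  have h3 : ((m:ℝ) + 2) ≠ 0 := by positivity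
  unfold Qc
  have hrw1 : ((m+3:ℕ):ℝ) = (m:ℝ)+3 := by push_cast; ring
  have hrw2 : ((i+2:ℕ):ℝ) = (i:ℝ)+2 := by push_cast; ring
  rw [hsub, hrw1, hrw2]
  exact coef_eq (i:ℝ) (m:ℝ) (a (i+2)) h1 h2 h3
end Rec

lemma coef_eq2 (x y A : ℝ) (h1 : y-x ≠ 0) (h2 : y-x+1 ≠ 0) (h3 : y+2 ≠ 0) :
    ((x+1)+1)*(x+1)*A * (1/(((y-x-1)+1)*((y-x-1)+2)))
      = (y+2)^2 * ((x+3-1)*(x+3-2)/((y+2)^2*(y+3-(x+3))*(y+3-(x+3)+1))*A) := by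
  rw [show y+3-(x+3) = y-x by ring,
    show y-x-1+1 = y-x by ring, show y-x-1+2 = y-x+1 by ring,
    show y-x+1 = y-x+1 by ring]
  field_simp
  ring

section Rec2
variable (a c : ℕ → ℝ)
variable (hc : ∀ n : ℕ, 2 ≤ n →
      c n = (2 / ((n : ℝ) - 1)) * a n
        + ∑ m ∈ Finset.Icc 3 (n - 1),
            (((m : ℝ) - 1) * ((m : ℝ) - 2)
                / (((n : ℝ) - 1) ^ 2 * ((n : ℝ) - (m : ℝ)) * ((n : ℝ) - (m : ℝ) + 1)))
              * c m)

include hc in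
lemma c_two : c 2 = 2 * a 2 := by
  have h := hc 2 (le_refl 2)
  norm_num at h
  linarith

include hc in
lemma key2 (m : ℕ) :
    ∑ i ∈ Finset.range (m+1), ((((i:ℝ)+1) * (i:ℝ)) * c (i+2)) * Qc (m-i)
      = ((m:ℝ)+2)^2 * c (m+3) - 2*(((m:ℝ)+2) * a (m+3)) := by
  have h := hc (m+3) (by omega)
  have hn1 : ((m+3:ℕ):ℝ) - 1 = (m:ℝ)+2 := by push_cast; ring
  have hIcc : Finset.Icc 3 (m+3-1) = Finset.Ico 3 (m+3) := by
    rw [show m+3-1 = m+2 from rfl, ← Finset.Ico_add_one_right_eq_Icc]; rfl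
  rw [hIcc, Finset.sum_Ico_eq_sum_range, show m+3-3 = m from rfl] at h
  rw [h, hn1, mul_add]
  have hX : ((m:ℝ)+2)^2 * (2/((m:ℝ)+2) * a (m+3)) = 2*(((m:ℝ)+2) * a (m+3)) := by
    have h3 : ((m:ℝ)+2) ≠ 0 := by positivity
    field_simp
  rw [hX, add_sub_cancel_left, Finset.mul_sum]
  rw [Finset.sum_range_succ']
  have hzero : ((((0:ℕ):ℝ)+1) * ((0:ℕ):ℝ)) * c (0+2) * Qc (m-0) = 0 := by
    norm_num
  rw [hzero, add_zero]
  refine Finset.sum_congr rfl fun i hi => ?_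
  have him : i + 1 ≤ m := by simp at hi; omega
  rw [show 3 + i = i + 3 by omega]
  have hsub : ((m-(i+1):ℕ):ℝ) = (m:ℝ)-(i:ℝ)-1 := by
    rw [Nat.cast_sub him]; push_cast; ring
  have hrw1 : ((m+3:ℕ):ℝ) = (m:ℝ)+3 := by push_cast; ring
  have hrw3 : ((i+3:ℕ):ℝ) = (i:ℝ)+3 := by push_cast; ring
  have hrw4 : ((i+1:ℕ):ℝ) = (i:ℝ)+1 := by push_cast; ring
  have him' : (i:ℝ)+1 ≤ (m:ℝ) := by exact_mod_cast him
  have h1 : (m:ℝ)-(i:ℝ) ≠ 0 := by intro hx; nlinarith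
  have h2 : (m:ℝ)-(i:ℝ)+1 ≠ 0 := by intro hx; nlinarith
  have h3 : (m:ℝ)+2 ≠ 0 := by positivity
  unfold Qc
  rw [hsub, hrw1, hrw3, hrw4]
  exact coef_eq2 (i:ℝ) (m:ℝ) (c (i+3)) h1 h2 h3
end Rec2

lemma sum_Qc_le (N : ℕ) : ∑ i ∈ Finset.range N, Qc i ≤ 1 := by
  unfold Qc; exact sum_q_le N

lemma sum_Qc_reflect (m : ℕ) (g : ℕ → ℝ) :
    ∑ i ∈ Finset.range (m+1), g (m-i) = ∑ i ∈ Finset.range (m+1), g i := by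
  have h := Finset.sum_range_reflect g (m+1)
  simpa using h

section Bnd
variable (a c : ℕ → ℝ)
variable (ha : ∀ n : ℕ, 2 ≤ n →
      a n = 1 / ((n : ℝ) - 1)
        + ∑ m ∈ Finset.Icc 2 (n - 1),
            (((m : ℝ) - 1) / (((n : ℝ) - 1) * ((n : ℝ) - (m : ℝ)) * ((n : ℝ) - (m : ℝ) + 1)))
              * a m)
variable (hc : ∀ n : ℕ, 2 ≤ n →
      c n = (2 / ((n : ℝ) - 1)) * a n
        + ∑ m ∈ Finset.Icc 3 (n - 1),
            (((m : ℝ) - 1) * ((m : ℝ) - 2)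
                / (((n : ℝ) - 1) ^ 2 * ((n : ℝ) - (m : ℝ)) * ((n : ℝ) - (m : ℝ) + 1)))
              * c m)

include ha in
lemma a_bound : ∀ k : ℕ, 0 ≤ a (k+2) ∧ a (k+2) ≤ (k:ℝ)+2 := by
  intro k
  induction k using Nat.strong_induction_on with
  | _ k IH =>
    match k with
    | 0 =>
      rw [show (0:ℕ)+2 = 2 from rfl, a_two a ha]
      norm_num
    | Nat.succ m =>
      have hkey := key1 a ha m
      have hS0 : 0 ≤ ∑ i ∈ Finset.range (m+1), (((i:ℝ)+1) * a (i+2)) * Qc (m-i) := by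
        apply Finset.sum_nonneg
        intro i hi
        have hi' : i < m+1 := Finset.mem_range.mp hi
        have := (IH i (by omega)).1
        have h1 : (0:ℝ) ≤ (i:ℝ)+1 := by positivity
        have := Qc_nonneg (m-i)
        positivity
      have hS1 : ∑ i ∈ Finset.range (m+1), (((i:ℝ)+1) * a (i+2)) * Qc (m-i)
          ≤ ((m:ℝ)+1)*((m:ℝ)+2) := by
        calc ∑ i ∈ Finset.range (m+1), (((i:ℝ)+1) * a (i+2)) * Qc (m-i)
            ≤ ∑ i ∈ Finset.range (m+1), (((m:ℝ)+1)*((m:ℝ)+2)) * Qc (m-i) := by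
              apply Finset.sum_le_sum
              intro i hi
              have hi' : i < m+1 := Finset.mem_range.mp hi
              obtain ⟨h0, h1⟩ := IH i (by omega)
              have hq := Qc_nonneg (m-i)
              apply mul_le_mul_of_nonneg_right ?_ hq
              have hi2 : (i:ℝ) ≤ (m:ℝ) := by exact_mod_cast Nat.lt_succ_iff.mp hi'
              nlinarith
          _ = (((m:ℝ)+1)*((m:ℝ)+2)) * ∑ i ∈ Finset.range (m+1), Qc (m-i) := by
              rw [Finset.mul_sum]
          _ ≤ (((m:ℝ)+1)*((m:ℝ)+2)) * 1 := by
              apply mul_le_mul_of_nonneg_left ?_ (by positivity)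
              rw [sum_Qc_reflect m Qc]
              exact sum_Qc_le (m+1)
          _ = ((m:ℝ)+1)*((m:ℝ)+2) := by ring
      have hm2 : (0:ℝ) < (m:ℝ)+2 := by positivity
      constructor
      · nlinarith [hkey, hS0]
      · push_cast
        nlinarith [hkey, hS1]

include ha hc in
lemma c_bound : ∀ k : ℕ, 0 ≤ c (k+2) ∧ c (k+2) ≤ ((k:ℝ)+2)^2 := by
  intro k
  induction k using Nat.strong_induction_on with
  | _ k IH =>
    match k with
    | 0 =>
      rw [show (0:ℕ)+2 = 2 from rfl, c_two a c hc, a_two a ha]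
      norm_num
    | Nat.succ m =>
      have hkey := key2 a c hc m
      have hS0 : 0 ≤ ∑ i ∈ Finset.range (m+1), ((((i:ℝ)+1) * (i:ℝ)) * c (i+2)) * Qc (m-i) := by
        apply Finset.sum_nonneg
        intro i hi
        have hi' : i < m+1 := Finset.mem_range.mp hi
        have := (IH i (by omega)).1
        have h1 : (0:ℝ) ≤ (i:ℝ)+1 := by positivity
        have h2 : (0:ℝ) ≤ (i:ℝ) := Nat.cast_nonneg i
        have := Qc_nonneg (m-i)
        positivity
      have hS1 : ∑ i ∈ Finset.range (m+1), ((((i:ℝ)+1) * (i:ℝ)) * c (i+2)) * Qc (m-i)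
          ≤ (((m:ℝ)+1)^2*((m:ℝ)+2)^2) := by
        calc ∑ i ∈ Finset.range (m+1), ((((i:ℝ)+1) * (i:ℝ)) * c (i+2)) * Qc (m-i)
            ≤ ∑ i ∈ Finset.range (m+1), ((((m:ℝ)+1)^2*((m:ℝ)+2)^2) * Qc (m-i)) := by
              apply Finset.sum_le_sum
              intro i hi
              have hi' : i < m+1 := Finset.mem_range.mp hi
              obtain ⟨h0, h1⟩ := IH i (by omega)
              have hq := Qc_nonneg (m-i)
              apply mul_le_mul_of_nonneg_right ?_ hq
              have hi2 : (i:ℝ) ≤ (m:ℝ) := by exact_mod_cast Nat.lt_succ_iff.mp hi'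
              have h3 : (0:ℝ) ≤ (i:ℝ) := Nat.cast_nonneg i
              have e1 := mul_le_mul_of_nonneg_left h1 (show (0:ℝ) ≤ ((i:ℝ)+1)*(i:ℝ) by positivity)
              have e2 : ((i:ℝ)+1)*(i:ℝ) ≤ ((m:ℝ)+1)^2 := by nlinarith
              have e3 : ((i:ℝ)+2)^2 ≤ ((m:ℝ)+2)^2 := by nlinarith
              have e4 : ((i:ℝ)+1)*(i:ℝ)*((i:ℝ)+2)^2 ≤ ((m:ℝ)+1)^2*((m:ℝ)+2)^2 :=
                mul_le_mul e2 e3 (by positivity) (by positivity)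
              nlinarith [e1, e4]
          _ = (((m:ℝ)+1)^2*((m:ℝ)+2)^2) * ∑ i ∈ Finset.range (m+1), Qc (m-i) := by
              rw [Finset.mul_sum]
          _ ≤ (((m:ℝ)+1)^2*((m:ℝ)+2)^2) * 1 := by
              apply mul_le_mul_of_nonneg_left ?_ (by positivity)
              rw [sum_Qc_reflect m Qc]
              exact sum_Qc_le (m+1)
          _ = ((m:ℝ)+1)^2*((m:ℝ)+2)^2 := by ring
      obtain ⟨ha0, ha1⟩ := a_bound a ha (m+1)
      push_cast at ha1
      have hm2 : (0:ℝ) < (m:ℝ)+2 := by positivity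
      constructor
      · nlinarith [hkey, hS0]
      · push_cast
        nlinarith [hkey, hS1]
end Bnd








noncomputable def F1f (c : ℕ → ℝ) : ℝ → ℝ := fun s => ∑' k : ℕ, (((k:ℝ)+1) * c (k+2)) * s^k

noncomputable def D2f (c : ℕ → ℝ) : ℝ → ℝ :=
  fun t => ∑' k : ℕ, (((k:ℝ)+1) * c (k+2)) * ((k:ℝ) * t^(k-1))

section Star

variable (a c : ℕ → ℝ)

-- bounds as hypotheses
variable (hab : ∀ k : ℕ, 0 ≤ a (k+2) ∧ a (k+2) ≤ (k:ℝ)+2)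
variable (hcb : ∀ k : ℕ, 0 ≤ c (k+2) ∧ c (k+2) ≤ ((k:ℝ)+2)^2)

lemma bnd_P (k : ℕ) (h := hab k) : |((k:ℝ)+1) * a (k+2)| ≤ 1 * ((k:ℝ)+2)^5 := by
  obtain ⟨h0, h1⟩ := hab k
  rw [one_mul, abs_of_nonneg (by positivity)]
  have e1 : ((k:ℝ)+1) * a (k+2) ≤ ((k:ℝ)+2) * ((k:ℝ)+2) := by nlinarith [Nat.cast_nonneg (α := ℝ) k]
  calc ((k:ℝ)+1) * a (k+2) ≤ ((k:ℝ)+2)^2 := by nlinarith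
    _ ≤ ((k:ℝ)+2)^5 := pow_le_pow_right₀ (by nlinarith [Nat.cast_nonneg (α := ℝ) k]) (by omega)

lemma bnd_Q (l : ℕ) : |Qc l| ≤ 1 * ((l:ℝ)+2)^5 := by
  unfold Qc
  have h0 : (0:ℝ) < ((l:ℝ)+1)*((l:ℝ)+2) := by positivity
  rw [one_mul, abs_of_nonneg (by positivity)]
  have h1 : (1:ℝ) ≤ ((l:ℝ)+1)*((l:ℝ)+2) := by nlinarith [Nat.cast_nonneg (α := ℝ) l]
  have h2 : (1:ℝ)/(((l:ℝ)+1)*((l:ℝ)+2)) ≤ 1 := by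
    rw [div_le_one h0]; linarith
  have h3 : (1:ℝ) ≤ ((l:ℝ)+2)^5 :=
    one_le_pow₀ (by nlinarith [Nat.cast_nonneg (α := ℝ) l])
  linarith

lemma bnd_V (k : ℕ) (h := hcb k) : |(((k:ℝ)+1) * (k:ℝ)) * c (k+2)| ≤ 1 * ((k:ℝ)+2)^5 := by
  obtain ⟨h0, h1⟩ := hcb k
  have hk : (0:ℝ) ≤ (k:ℝ) := Nat.cast_nonneg k
  rw [one_mul, abs_of_nonneg (by positivity)]
  have e1 : (((k:ℝ)+1) * (k:ℝ)) * c (k+2) ≤ ((k:ℝ)+2)^2 * ((k:ℝ)+2)^2 := by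
    nlinarith
  calc (((k:ℝ)+1) * (k:ℝ)) * c (k+2) ≤ ((k:ℝ)+2)^4 := by nlinarith
    _ ≤ ((k:ℝ)+2)^5 := pow_le_pow_right₀ (by nlinarith) (by omega)

lemma bnd_W (k : ℕ) (h := hcb k) : |(((k:ℝ)+1)^2) * c (k+2)| ≤ 1 * ((k:ℝ)+2)^5 := by
  obtain ⟨h0, h1⟩ := hcb k
  have hk : (0:ℝ) ≤ (k:ℝ) := Nat.cast_nonneg k
  rw [one_mul, abs_of_nonneg (by positivity)]
  have e1 : (((k:ℝ)+1)^2) * c (k+2) ≤ ((k:ℝ)+2)^2 * ((k:ℝ)+2)^2 := by nlinarith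
  calc (((k:ℝ)+1)^2) * c (k+2) ≤ ((k:ℝ)+2)^4 := by nlinarith
    _ ≤ ((k:ℝ)+2)^5 := pow_le_pow_right₀ (by nlinarith) (by omega)

lemma bnd_F1 (k : ℕ) (h := hcb k) : |((k:ℝ)+1) * c (k+2)| ≤ 1 * ((k:ℝ)+2)^5 := by
  obtain ⟨h0, h1⟩ := hcb k
  have hk : (0:ℝ) ≤ (k:ℝ) := Nat.cast_nonneg k
  rw [one_mul, abs_of_nonneg (by positivity)]
  have e1 : (((k:ℝ)+1)) * c (k+2) ≤ ((k:ℝ)+2) * ((k:ℝ)+2)^2 := by nlinarith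
  calc (((k:ℝ)+1)) * c (k+2) ≤ ((k:ℝ)+2)^3 := by nlinarith
    _ ≤ ((k:ℝ)+2)^5 := pow_le_pow_right₀ (by nlinarith) (by omega)

end Star


lemma star_identity (a c : ℕ → ℝ)
    (ha : ∀ n : ℕ, 2 ≤ n →
      a n = 1 / ((n : ℝ) - 1)
        + ∑ m ∈ Finset.Icc 2 (n - 1),
            (((m : ℝ) - 1) / (((n : ℝ) - 1) * ((n : ℝ) - (m : ℝ)) * ((n : ℝ) - (m : ℝ) + 1)))
              * a m)
    (hc : ∀ n : ℕ, 2 ≤ n →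
      c n = (2 / ((n : ℝ) - 1)) * a n
        + ∑ m ∈ Finset.Icc 3 (n - 1),
            (((m : ℝ) - 1) * ((m : ℝ) - 2)
                / (((n : ℝ) - 1) ^ 2 * ((n : ℝ) - (m : ℝ)) * ((n : ℝ) - (m : ℝ) + 1)))
              * c m)
    (hab : ∀ k : ℕ, 0 ≤ a (k+2) ∧ a (k+2) ≤ (k:ℝ)+2)
    (hcb : ∀ k : ℕ, 0 ≤ c (k+2) ∧ c (k+2) ≤ ((k:ℝ)+2)^2)
    (ha2 : a 2 = 1) (hc2 : c 2 = 2)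
    {z : ℝ} (hz0 : 0 < z) (hz1 : z < 1) :
    F1f c z + (1-z)*(-Real.log (1-z))*(D2f c z)
      = 2*z/((1-z)^2*(-Real.log (1-z))) := by
  have hzabs : |z| < 1 := by rw [abs_of_pos hz0]; exact hz1
  have hzne : z ≠ 0 := ne_of_gt hz0
  have h1z : (0:ℝ) < 1 - z := by linarith
  set Lz : ℝ := -Real.log (1-z) with hLdef
  have hLpos : 0 < Lz := by
    rw [hLdef]
    have h : Real.log (1-z) < 0 := Real.log_neg (by linarith) (by linarith)
    linarith
  -- summability
  have nP : Summable (fun k : ℕ => ‖(((k:ℝ)+1) * a (k+2)) * z^(k+2)‖) :=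
    summable_coeff_pow 2 (fun k => bnd_P a hab k) hzabs
  have nQ : Summable (fun l : ℕ => ‖Qc l * z^(l+1)‖) :=
    summable_coeff_pow 1 (fun l => bnd_Q l) hzabs
  have nV : Summable (fun k : ℕ => ‖((((k:ℝ)+1)*(k:ℝ)) * c (k+2)) * z^(k+2)‖) :=
    summable_coeff_pow 2 (fun k => bnd_V c hcb k) hzabs
  have nW : Summable (fun k : ℕ => ‖((((k:ℝ)+1)^2) * c (k+2)) * z^(k+2)‖) :=
    summable_coeff_pow 2 (fun k => bnd_W c hcb k) hzabs
  have sP := nP.of_norm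
  have sV := nV.of_norm
  have sW := nW.of_norm
  have hgeo : Summable (fun n : ℕ => z^(n+3)) := by
    simp_rw [pow_add]
    exact ((summable_geometric_of_lt_one hz0.le hz1).mul_right _)
  have hgeo_sum : ∑' n : ℕ, z^(n+3) = z^3 * (1-z)⁻¹ := by
    simp_rw [pow_add]
    rw [tsum_mul_right, tsum_geometric_of_lt_one hz0.le hz1]
    ring
  have sPsh := (summable_nat_add_iff 1).2 sP
  have sWsh := (summable_nat_add_iff 1).2 sW
  -- Cauchy product 1
  have cauchy1 : (∑' k : ℕ, (((k:ℝ)+1) * a (k+2)) * z^(k+2)) * (∑' l : ℕ, Qc l * z^(l+1))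
      = ∑' n : ℕ, (((((n+1:ℕ)):ℝ)+1) * a ((n+1)+2) - 1) * z^(n+3) := by
    rw [tsum_mul_tsum_eq_tsum_sum_antidiagonal_of_summable_norm nP nQ]
    apply tsum_congr
    intro n
    rw [Finset.Nat.sum_antidiagonal_eq_sum_range_succ_mk]
    have e1 : ∀ i ∈ Finset.range (n+1),
        ((((i:ℝ)+1) * a (i+2)) * z^(i+2)) * (Qc (n-i) * z^((n-i)+1))
          = ((((i:ℝ)+1) * a (i+2)) * Qc (n-i)) * z^(n+3) := by
      intro i hi
      have him : i ≤ n := Nat.lt_succ_iff.mp (Finset.mem_range.mp hi)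
      rw [mul_mul_mul_comm, ← pow_add]
      congr 2
      omega
    calc ∑ i ∈ Finset.range (n+1),
          ((((i:ℝ)+1) * a (i+2)) * z^(i+2)) * (Qc (n-i) * z^((n-i)+1))
        = ∑ i ∈ Finset.range (n+1),
          ((((i:ℝ)+1) * a (i+2)) * Qc (n-i)) * z^(n+3) := Finset.sum_congr rfl e1
      _ = (∑ i ∈ Finset.range (n+1), (((i:ℝ)+1) * a (i+2)) * Qc (n-i)) * z^(n+3) := by
          rw [Finset.sum_mul]
      _ = (((n:ℝ)+2) * a (n+3) - 1) * z^(n+3) := by rw [key1 a ha n]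
      _ = (((((n+1:ℕ)):ℝ)+1) * a ((n+1)+2) - 1) * z^(n+3) := by
          rw [show (n+1)+2 = n+3 from rfl]
          push_cast
          ring
  have split1 : ∑' n : ℕ, (((((n+1:ℕ)):ℝ)+1) * a ((n+1)+2) - 1) * z^(n+3)
      = (∑' n : ℕ, ((((n+1:ℕ):ℝ)+1) * a ((n+1)+2)) * z^((n+1)+2)) - ∑' n : ℕ, z^(n+3) := by
    rw [← Summable.tsum_sub sPsh hgeo]
    apply tsum_congr
    intro n
    rw [show (n+1)+2 = n+3 from rfl]
    ring
  have shift_eq : ∑' n : ℕ, ((((n+1:ℕ):ℝ)+1) * a ((n+1)+2)) * z^((n+1)+2)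
      = (∑' k : ℕ, (((k:ℝ)+1) * a (k+2)) * z^(k+2)) - ((((0:ℕ):ℝ)+1) * a (0+2)) * z^(0+2) := by
    rw [Summable.tsum_eq_zero_add sP]
    ring
  have E1 : (∑' k : ℕ, (((k:ℝ)+1) * a (k+2)) * z^(k+2)) * (∑' l : ℕ, Qc l * z^(l+1))
      = (∑' k : ℕ, (((k:ℝ)+1) * a (k+2)) * z^(k+2)) - z^2 - z^3*(1-z)⁻¹ := by
    rw [cauchy1, split1, shift_eq, hgeo_sum]
    norm_num [ha2]
  -- Cauchy product 2
  have cauchy2 : (∑' k : ℕ, ((((k:ℝ)+1)*(k:ℝ)) * c (k+2)) * z^(k+2)) * (∑' l : ℕ, Qc l * z^(l+1))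
      = ∑' n : ℕ, ((((((n+1:ℕ)):ℝ)+1)^2 * c ((n+1)+2)
          - 2*(((((n+1:ℕ)):ℝ)+1) * a ((n+1)+2))) * z^(n+3)) := by
    rw [tsum_mul_tsum_eq_tsum_sum_antidiagonal_of_summable_norm nV nQ]
    apply tsum_congr
    intro n
    rw [Finset.Nat.sum_antidiagonal_eq_sum_range_succ_mk]
    have e1 : ∀ i ∈ Finset.range (n+1),
        (((((i:ℝ)+1)*(i:ℝ)) * c (i+2)) * z^(i+2)) * (Qc (n-i) * z^((n-i)+1))
          = (((((i:ℝ)+1)*(i:ℝ)) * c (i+2)) * Qc (n-i)) * z^(n+3) := by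
      intro i hi
      have him : i ≤ n := Nat.lt_succ_iff.mp (Finset.mem_range.mp hi)
      rw [mul_mul_mul_comm, ← pow_add]
      congr 2
      omega
    calc ∑ i ∈ Finset.range (n+1),
          (((((i:ℝ)+1)*(i:ℝ)) * c (i+2)) * z^(i+2)) * (Qc (n-i) * z^((n-i)+1))
        = ∑ i ∈ Finset.range (n+1),
          (((((i:ℝ)+1)*(i:ℝ)) * c (i+2)) * Qc (n-i)) * z^(n+3) := Finset.sum_congr rfl e1
      _ = (∑ i ∈ Finset.range (n+1), ((((i:ℝ)+1)*(i:ℝ)) * c (i+2)) * Qc (n-i)) * z^(n+3) := by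
          rw [Finset.sum_mul]
      _ = (((n:ℝ)+2)^2 * c (n+3) - 2*(((n:ℝ)+2) * a (n+3))) * z^(n+3) := by rw [key2 a c hc n]
      _ = ((((((n+1:ℕ)):ℝ)+1)^2 * c ((n+1)+2)
          - 2*(((((n+1:ℕ)):ℝ)+1) * a ((n+1)+2))) * z^(n+3)) := by
          rw [show (n+1)+2 = n+3 from rfl]
          push_cast
          ring
  have split2 : ∑' n : ℕ, ((((((n+1:ℕ)):ℝ)+1)^2 * c ((n+1)+2)
          - 2*(((((n+1:ℕ)):ℝ)+1) * a ((n+1)+2))) * z^(n+3))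
      = (∑' n : ℕ, ((((n+1:ℕ):ℝ)+1)^2 * c ((n+1)+2)) * z^((n+1)+2))
        - ∑' n : ℕ, 2*(((((n+1:ℕ):ℝ)+1) * a ((n+1)+2)) * z^((n+1)+2)) := by
    rw [← Summable.tsum_sub sWsh (sPsh.mul_left 2)]
    apply tsum_congr
    intro n
    rw [show (n+1)+2 = n+3 from rfl]
    ring
  have shiftW : ∑' n : ℕ, ((((n+1:ℕ):ℝ)+1)^2 * c ((n+1)+2)) * z^((n+1)+2)
      = (∑' k : ℕ, ((((k:ℝ)+1)^2) * c (k+2)) * z^(k+2)) - ((((0:ℕ):ℝ)+1)^2 * c (0+2)) * z^(0+2) := by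
    rw [Summable.tsum_eq_zero_add sW]
    ring
  have E2 : (∑' k : ℕ, ((((k:ℝ)+1)*(k:ℝ)) * c (k+2)) * z^(k+2)) * (∑' l : ℕ, Qc l * z^(l+1))
      = (∑' k : ℕ, ((((k:ℝ)+1)^2) * c (k+2)) * z^(k+2))
        - 2*(∑' k : ℕ, (((k:ℝ)+1) * a (k+2)) * z^(k+2)) := by
    rw [cauchy2, split2, shiftW, tsum_mul_left, shift_eq]
    norm_num [ha2, hc2]
    ring
  -- relations with F1f and D2f
  have sF1' : Summable (fun k : ℕ => ((((k:ℝ)+1)) * c (k+2)) * z^(k+2)) :=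
    (summable_coeff_pow 2 (fun k => bnd_F1 c hcb k) hzabs).of_norm
  have hWV : (∑' k : ℕ, ((((k:ℝ)+1)^2) * c (k+2)) * z^(k+2))
      - (∑' k : ℕ, ((((k:ℝ)+1)*(k:ℝ)) * c (k+2)) * z^(k+2)) = (F1f c z) * z^2 := by
    rw [← Summable.tsum_sub sW sV]
    calc ∑' k : ℕ, (((((k:ℝ)+1)^2) * c (k+2)) * z^(k+2)
          - ((((k:ℝ)+1)*(k:ℝ)) * c (k+2)) * z^(k+2))
        = ∑' k : ℕ, ((((k:ℝ)+1) * c (k+2)) * z^k) * z^2 := by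
          apply tsum_congr
          intro k
          ring
      _ = (F1f c z) * z^2 := by
          rw [tsum_mul_right]
          rfl
  have hV3 : (∑' k : ℕ, ((((k:ℝ)+1)*(k:ℝ)) * c (k+2)) * z^(k+2)) = z^3 * D2f c z := by
    unfold D2f
    rw [← tsum_mul_left]
    apply tsum_congr
    intro k
    have hkz : (k:ℝ) * z^(k+2) = (k:ℝ) * z^3 * z^(k-1) := by
      match k with
      | 0 => simp
      | Nat.succ j =>
        rw [show Nat.succ j + 2 = j+3 from rfl, show Nat.succ j - 1 = j from rfl]
        push_cast
        ring
    linear_combination (((k:ℝ)+1) * c (k+2)) * hkz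
  -- closed form for B
  have hlog := Real.hasSum_pow_div_log_of_abs_lt_one hzabs
  have hssum := hlog.summable
  have hLsum : ∑' n : ℕ, z^(n+1)/((n:ℝ)+1) = Lz := hlog.tsum_eq
  have hshift : HasSum (fun n : ℕ => z^(n+2)/((n:ℝ)+2)) (Lz - z) := by
    have h4 : HasSum (fun n : ℕ => z^((n+1)+1)/(((n+1:ℕ):ℝ)+1)) (Lz - z) := by
      refine (hasSum_nat_add_iff (f := fun n : ℕ => z^(n+1)/((n:ℝ)+1)) 1).mpr ?_
      have hsum1 : ∑ i ∈ Finset.range 1, z^(i+1)/((i:ℝ)+1) = z := by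
        rw [Finset.sum_range_one]
        norm_num
      rw [hsum1, sub_add_cancel]
      exact hlog
    have hfe : (fun n : ℕ => z^((n+1)+1)/(((n+1:ℕ):ℝ)+1))
        = fun n : ℕ => z^(n+2)/((n:ℝ)+2) := by
      funext n
      push_cast
      ring
    rwa [hfe] at h4
  have htail : ∑' n : ℕ, z^(n+2)/((n:ℝ)+2) = Lz - z := hshift.tsum_eq
  have hBval : (∑' l : ℕ, Qc l * z^(l+1)) = Lz - (1/z)*(Lz - z) := by
    have e : ∀ l : ℕ, Qc l * z^(l+1)
        = z^(l+1)/((l:ℝ)+1) - (1/z)*(z^(l+2)/((l:ℝ)+2)) := by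
      intro l
      unfold Qc
      have h1 : ((l:ℝ)+1) ≠ 0 := by positivity
      have h2 : ((l:ℝ)+2) ≠ 0 := by positivity
      have hz2 : z^(l+2) = z^(l+1) * z := pow_succ z (l+1)
      rw [hz2]
      field_simp
      ring
    rw [tsum_congr e, Summable.tsum_sub hssum ((hshift.summable).mul_left (1/z)),
      hLsum, tsum_mul_left, htail]
  have h1B : 1 - (∑' l : ℕ, Qc l * z^(l+1)) = (1-z)*Lz/z := by
    rw [hBval]
    field_simp
    ring
  -- solve for U
  have hUeq : (∑' k : ℕ, (((k:ℝ)+1) * a (k+2)) * z^(k+2)) * ((1-z)*Lz/z) = z^2/(1-z) := by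
    rw [← h1B]
    calc (∑' k : ℕ, (((k:ℝ)+1) * a (k+2)) * z^(k+2)) * (1 - (∑' l : ℕ, Qc l * z^(l+1)))
        = (∑' k : ℕ, (((k:ℝ)+1) * a (k+2)) * z^(k+2))
          - (∑' k : ℕ, (((k:ℝ)+1) * a (k+2)) * z^(k+2)) * (∑' l : ℕ, Qc l * z^(l+1)) := by ring
      _ = z^2 + z^3*(1-z)⁻¹ := by rw [E1]; ring
      _ = z^2/(1-z) := by
          rw [inv_eq_one_div]
          field_simp
          ring
  have hUval : (∑' k : ℕ, (((k:ℝ)+1) * a (k+2)) * z^(k+2)) = z^3/((1-z)^2*Lz) := by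
    rw [eq_div_iff (by
      apply mul_ne_zero
      · exact pow_ne_zero 2 (ne_of_gt h1z)
      · exact ne_of_gt hLpos)]
    have h2 := hUeq
    field_simp at h2
    linear_combination h2
  -- assemble
  have E2' : 2*(∑' k : ℕ, (((k:ℝ)+1) * a (k+2)) * z^(k+2))
      = (F1f c z)*z^2 + (z^3 * D2f c z) * ((1-z)*Lz/z) := by
    rw [← hWV, ← hV3, ← h1B]
    linear_combination E2
  have hgoal2 : z^2 * (F1f c z + (1-z)*Lz*(D2f c z)) = z^2 * (2*z/((1-z)^2*Lz)) := by
    have r1 : z^2 * (2*z/((1-z)^2*Lz)) = 2*(∑' k : ℕ, (((k:ℝ)+1) * a (k+2)) * z^(k+2)) := by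
      rw [hUval]
      field_simp
    rw [r1, E2']
    field_simp
  exact mul_left_cancel₀ (pow_ne_zero 2 hzne) hgoal2











lemma bnd_C (c : ℕ → ℝ) (hcb : ∀ k : ℕ, 0 ≤ c (k+2) ∧ c (k+2) ≤ ((k:ℝ)+2)^2) (k : ℕ) :
    |c (k+2)| ≤ 1 * ((k:ℝ)+2)^5 := by
  obtain ⟨h0, h1⟩ := hcb k
  have hk : (0:ℝ) ≤ (k:ℝ) := Nat.cast_nonneg k
  rw [one_mul, abs_of_nonneg h0]
  calc c (k+2) ≤ ((k:ℝ)+2)^2 := h1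
    _ ≤ ((k:ℝ)+2)^5 := pow_le_pow_right₀ (by nlinarith) (by omega)

/-- For the Bolthausen–Sznitman coalescent the generating function
`f(z) = Σ_{n≥2} c_n z^{n-1}` of the mixed moments `c_n = E(τ_{n,1}τ_{n,2})`
converges for `|z| < 1` and satisfies
`f'(z) = (2/L(z)) ∫₀^z t/((1-t)³ L(t)) dt` with `L(z) = -log(1-z)`. -/
theorem bolthausen_sznitman_f11 (a c : ℕ → ℝ)
    (ha : ∀ n : ℕ, 2 ≤ n →
      a n = 1 / ((n : ℝ) - 1)
        + ∑ m ∈ Finset.Icc 2 (n - 1),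
            (((m : ℝ) - 1) / (((n : ℝ) - 1) * ((n : ℝ) - (m : ℝ)) * ((n : ℝ) - (m : ℝ) + 1)))
              * a m)
    (hc : ∀ n : ℕ, 2 ≤ n →
      c n = (2 / ((n : ℝ) - 1)) * a n
        + ∑ m ∈ Finset.Icc 3 (n - 1),
            (((m : ℝ) - 1) * ((m : ℝ) - 2)
                / (((n : ℝ) - 1) ^ 2 * ((n : ℝ) - (m : ℝ)) * ((n : ℝ) - (m : ℝ) + 1)))
              * c m) :
    (∀ z : ℝ, |z| < 1 → Summable (fun n : ℕ => c (n + 2) * z ^ (n + 1))) ∧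
    (∀ z : ℝ, 0 < z → z < 1 →
      deriv (fun s : ℝ => ∑' n : ℕ, c (n + 2) * s ^ (n + 1)) z
        = (2 / (-Real.log (1 - z)))
            * ∫ t in (0:ℝ)..z, t / ((1 - t) ^ 3 * (-Real.log (1 - t)))) := by
  have hab := a_bound a ha
  have ha2 := a_two a ha
  have hcb := c_bound a c ha hc
  have hc2 : c 2 = 2 := by rw [c_two a c hc, a_two a ha]; norm_num
  constructor
  · intro z hz
    exact (summable_coeff_pow 1 (fun k => bnd_C c hcb k) hz).of_norm
  · intro z hz0 hz1
    have hzabs : |z| < 1 := by rw [abs_of_pos hz0]; exact hz1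
    have h1z : (0:ℝ) < 1 - z := by linarith
    have hLpos : 0 < -Real.log (1-z) := by
      have h : Real.log (1-z) < 0 := Real.log_neg (by linarith) (by linarith)
      linarith
    have hD1 : ∀ {y : ℝ}, |y| < 1 →
        HasDerivAt (fun s : ℝ => ∑' n : ℕ, c (n+2) * s^(n+1)) (F1f c y) y := by
      intro y hy
      have h := hasDerivAt_tsum_pow (b := fun k => c (k+2)) (C := 1) 1
        (fun k => bnd_C c hcb k) hy
      convert h using 1
      unfold F1f
      exact tsum_congr fun k => by push_cast; ring
    have hD2 : ∀ {y : ℝ}, |y| < 1 → HasDerivAt (F1f c) (D2f c y) y := by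
      intro y hy
      have h := hasDerivAt_tsum_pow (b := fun k => ((k:ℝ)+1) * c (k+2)) (C := 1) 0
        (fun k => bnd_F1 c hcb k) hy
      exact h
    rw [(hD1 hzabs).deriv]
    -- FTC setup
    have hcont : ContinuousOn (fun t => (-Real.log (1 - t)) * F1f c t) (Set.Icc 0 z) := by
      intro t ht
      obtain ⟨ht0, ht1⟩ := ht
      have htabs : |t| < 1 := by rw [abs_of_nonneg ht0]; exact lt_of_le_of_lt ht1 hz1
      have h1t : (1:ℝ) - t ≠ 0 := by
        have : t < 1 := lt_of_le_of_lt ht1 hz1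
        intro hx; linarith
      apply ContinuousAt.continuousWithinAt
      apply ContinuousAt.mul
      · exact ((Real.continuousAt_log h1t).comp
          ((continuous_const.sub continuous_id).continuousAt)).neg
      · exact (hD2 htabs).continuousAt
    have hderiv : ∀ t ∈ Set.Ioo 0 z,
        HasDerivAt (fun s => (-Real.log (1 - s)) * F1f c s)
          ((fun u => 2 * (u / ((1 - u)^3 * (-Real.log (1 - u))))) t) t := by
      intro t ht
      obtain ⟨ht0, ht1⟩ := ht
      have htz1 : t < 1 := lt_trans ht1 hz1
      have htabs : |t| < 1 := by rw [abs_of_pos ht0]; exact htz1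
      have h1t : (0:ℝ) < 1 - t := by linarith
      have hLt : (0:ℝ) < -Real.log (1-t) := by
        have h : Real.log (1-t) < 0 := Real.log_neg (by linarith) (by linarith)
        linarith
      have hlog : HasDerivAt (fun s : ℝ => -Real.log (1 - s)) (1/(1-t)) t := by
        have h1 : HasDerivAt (fun s : ℝ => 1 - s) (-1) t := (hasDerivAt_id t).const_sub 1
        have h2 := (Real.hasDerivAt_log (ne_of_gt h1t)).comp t h1
        have h3 := h2.neg
        refine h3.congr_deriv ?_
        field_simp
      have hmul := hlog.mul (hD2 htabs)
      refine hmul.congr_deriv ?_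
      have hstar := star_identity a c ha hc hab hcb ha2 hc2 ht0 htz1
      have hLne : -Real.log (1-t) ≠ 0 := ne_of_gt hLt
      have h1tne : (1:ℝ) - t ≠ 0 := ne_of_gt h1t
      have hSne : Real.log (1-t) ≠ 0 := by
        intro hx
        rw [hx] at hLt
        norm_num at hLt
      have e1 : 1/(1-t) * F1f c t + (-Real.log (1-t)) * D2f c t
          = (F1f c t + (1-t)*(-Real.log (1-t))*(D2f c t)) / (1-t) := by
        field_simp
      rw [e1, hstar, div_div]
      rw [show (1-t)^2 * (-Real.log (1-t)) * (1-t) = (1-t)^3 * (-Real.log (1-t)) by ring]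
      ring
    have hint : IntervalIntegrable
        (fun u => 2 * (u / ((1 - u)^3 * (-Real.log (1 - u))))) volume 0 z := by
      rw [intervalIntegrable_iff_integrableOn_Ioc_of_le hz0.le]
      have mble : AEStronglyMeasurable
          (fun u : ℝ => 2 * (u / ((1 - u)^3 * (-Real.log (1 - u))))) volume := by
        apply Measurable.aestronglyMeasurable
        exact (measurable_id.div
          (((measurable_const.sub measurable_id).pow_const 3).mul
            ((Real.measurable_log.comp (measurable_const.sub measurable_id)).neg))).const_mul 2
      have bdd : ∀ᵐ u ∂(volume.restrict (Set.Ioc (0:ℝ) z)),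
          ‖2 * (u / ((1 - u)^3 * (-Real.log (1 - u))))‖ ≤ 2/(1-z)^3 := by
        rw [ae_restrict_iff' measurableSet_Ioc]
        apply Filter.Eventually.of_forall
        intro t ht
        obtain ⟨ht0, ht1⟩ := ht
        have htz1 : t < 1 := lt_of_le_of_lt ht1 hz1
        have h1t : (0:ℝ) < 1 - t := by linarith
        have hLt : t ≤ -Real.log (1-t) := by
          have := Real.log_le_sub_one_of_pos h1t
          linarith
        have hLpos' : (0:ℝ) < -Real.log (1-t) := lt_of_lt_of_le ht0 hLt
        have hgt0 : (0:ℝ) ≤ t / ((1 - t)^3 * (-Real.log (1 - t))) := by positivity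
        rw [Real.norm_eq_abs, abs_of_nonneg (by linarith)]
        have hden : (1-z)^3 * t ≤ (1-t)^3 * (-Real.log (1-t)) := by
          apply mul_le_mul (pow_le_pow_left₀ h1z.le (by linarith) 3) hLt ht0.le (by positivity)
        have step : t / ((1 - t)^3 * (-Real.log (1 - t))) ≤ t / ((1-z)^3 * t) := by
          apply div_le_div_of_nonneg_left ht0.le (by positivity) ?_
          · exact hden
        have step2 : t / ((1-z)^3 * t) = 1/(1-z)^3 := by
          rw [mul_comm]
          rw [div_eq_div_iff (by positivity) (by positivity)]
          ring
        calc 2 * (t / ((1 - t)^3 * (-Real.log (1 - t))))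
            ≤ 2 * (1/(1-z)^3) := by
              rw [← step2]; linarith
          _ = 2/(1-z)^3 := by ring
      exact Measure.integrableOn_of_bounded measure_Ioc_lt_top.ne mble bdd
    have hFTC := intervalIntegral.integral_eq_sub_of_hasDerivAt_of_le hz0.le hcont hderiv hint
    have hzero : (-Real.log (1-(0:ℝ))) * F1f c 0 = 0 := by
      norm_num
    rw [hzero, intervalIntegral.integral_const_mul, sub_zero] at hFTC
    have hI : ∫ t in (0:ℝ)..z, t / ((1 - t)^3 * (-Real.log (1 - t)))
        = (-Real.log (1-z)) * F1f c z / 2 := by linarith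
    rw [hI]
    have hLne : -Real.log (1-z) ≠ 0 := ne_of_gt hLpos
    have hfin : (2 / (-Real.log (1-z))) * ((-Real.log (1-z)) * F1f c z / 2)
        = F1f c z * ((-Real.log (1-z)) / (-Real.log (1-z))) := by ring
    rw [hfin, div_self hLne, mul_one]
end

section
/- Let (a_n)_{n≥2} satisfy a_n = 1/(n−1) + Σ_{m=2}^{n−1} ((m−1)/((n−1)(n−m)(n−m+1))) a_m for all n ≥ 2, and let (c_n)_{n≥2} satisfy c_n = (2/(n−1)) a_n + Σ_{m=3}^{n−1} ((m−1)(m−2)/((n−1)²(n−m)(n−m+1))) c_m for all n ≥ 2. Then for every n ≥ 2, c_n = (2/(n−1)!) Σ_{k=1}^{n−1} ((2^k − 1)/k²) s(n−2, k−1), where s(i,k) denotes the unsigned Stirling numbers of the first kind, i.e. the coefficients in x(x+1)⋯(x+i−1) = Σ_{k=0}^i s(i,k) x^k (with s(0,0)=1). -/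
open Polynomial Finset

noncomputable def QP (j : ℕ) : Polynomial ℝ := ∏ r ∈ Finset.range j, (X + C (r : ℝ))

lemma QP_zero : QP 0 = 1 := by simp [QP]

lemma QP_succ (j : ℕ) : QP (j + 1) = QP j * (X + C (j : ℝ)) := by
  rw [QP, QP, Finset.prod_range_succ]

lemma QP_deriv_succ (j : ℕ) :
    derivative (QP (j + 1)) = derivative (QP j) * (X + C (j : ℝ)) + QP j := by
  rw [QP_succ, derivative_mul]
  simp

lemma QP_comp_succ (j : ℕ) :
    (QP (j + 1)).comp (X + 1) = (QP j).comp (X + 1) * (X + 1 + C (j : ℝ)) := by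
  rw [QP_succ, mul_comp, add_comp, X_comp, C_comp]

lemma dcomp (p : Polynomial ℝ) :
    derivative (p.comp (X + 1)) = (derivative p).comp (X + 1) := by
  rw [derivative_comp]
  simp

-- L1
lemma QP_shift (j : ℕ) : X * (QP j).comp (X + 1) = (X + C (j : ℝ)) * QP j := by
  induction j with
  | zero => simp [QP_zero]
  | succ j ih =>
      rw [QP_comp_succ, QP_succ]
      push_cast
      calc X * ((QP j).comp (X + 1) * (X + 1 + C (j : ℝ)))
          = (X * (QP j).comp (X + 1)) * (X + 1 + C (j : ℝ)) := by ring
        _ = ((X + C (j : ℝ)) * QP j) * (X + 1 + C (j : ℝ)) := by rw [ih]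
        _ = (X + (C (j : ℝ) + 1)) * (QP j * (X + C (j : ℝ))) := by ring
        _ = (X + C ((j : ℝ) + 1)) * (QP j * (X + C (j : ℝ))) := by rw [C_add, C_1]

-- differentiated shift relation
lemma eA (j : ℕ) :
    (QP j).comp (X + 1) + X * (derivative (QP j)).comp (X + 1)
      = QP j + (X + C (j : ℝ)) * derivative (QP j) := by
  have h := congrArg derivative (QP_shift j)
  rw [derivative_mul, derivative_mul, dcomp] at h
  simpa using h

-- (III), multiplied by X
lemma QP_III (j : ℕ) :
    X * (derivative (QP (j + 1))).comp (X + 1)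
      = X * derivative (QP (j + 1))
        + C ((j : ℝ) + 1) * (X * (derivative (QP j)).comp (X + 1)) := by
  have e1 := QP_succ j
  have e2 := QP_deriv_succ j
  have e4 := QP_shift j
  have e5 := eA j
  have e6 := eA (j + 1)
  rw [QP_comp_succ] at e6
  push_cast at e6
  rw [show (C ((j:ℝ) + 1) : Polynomial ℝ) = C (j:ℝ) + 1 by rw [C_add, C_1]] at e6 ⊢
  linear_combination e6 - (C ((j : ℝ)) + 1) * e5 - e4 + e1 + (C ((j : ℝ)) + 1) * e2

lemma mulQP {m t : ℕ} (h : t ≤ m) :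
    (X + C (m : ℝ)) * QP t = QP (t + 1) + C ((m - t : ℕ) : ℝ) * QP t := by
  rw [QP_succ, Nat.cast_sub h, C_sub]
  ring

-- (II')
lemma derivQP_sum (j : ℕ) :
    derivative (QP (j + 1))
      = ∑ t ∈ Finset.range (j + 1),
          C ((((j + 1).choose t) * (j - t).factorial : ℕ) : ℝ) * QP t := by
  induction j with
  | zero => simp [QP_succ, QP_zero]
  | succ j ih =>
      rw [QP_deriv_succ, ih, Finset.sum_mul]
      have h1 : ∀ t ∈ Finset.range (j + 1),
          C ((((j + 1).choose t) * (j - t).factorial : ℕ) : ℝ) * QP t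
              * (X + C ((j + 1 : ℕ) : ℝ))
            = C ((((j + 1).choose t) * (j - t).factorial : ℕ) : ℝ) * QP (t + 1)
              + C ((((j + 1).choose t) * (j - t).factorial * (j + 1 - t) : ℕ) : ℝ) * QP t := by
        intro t ht
        rw [Finset.mem_range] at ht
        have h2 : (X + C ((j + 1 : ℕ) : ℝ)) * QP t
            = QP (t + 1) + C ((j + 1 - t : ℕ) : ℝ) * QP t := mulQP (by omega)
        calc C ((((j + 1).choose t) * (j - t).factorial : ℕ) : ℝ) * QP t
              * (X + C ((j + 1 : ℕ) : ℝ))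
            = C ((((j + 1).choose t) * (j - t).factorial : ℕ) : ℝ)
                * ((X + C ((j + 1 : ℕ) : ℝ)) * QP t) := by ring
          _ = C ((((j + 1).choose t) * (j - t).factorial : ℕ) : ℝ)
                * (QP (t + 1) + C ((j + 1 - t : ℕ) : ℝ) * QP t) := by rw [h2]
          _ = _ := by simp only [Nat.cast_mul, C_mul]; ring
      rw [Finset.sum_congr rfl h1, Finset.sum_add_distrib]
      rw [Finset.sum_range_succ' (fun t =>
        C ((((j + 2).choose t) * (j + 1 - t).factorial : ℕ) : ℝ) * QP t) (j + 1)]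
      rw [Finset.sum_range_succ' (fun t =>
        C ((((j + 1).choose t) * (j - t).factorial * (j + 1 - t) : ℕ) : ℝ) * QP t) j]
      have h3 : ∑ i ∈ Finset.range j,
            C ((((j + 1).choose (i + 1)) * (j - (i + 1)).factorial * (j + 1 - (i + 1)) : ℕ) : ℝ)
              * QP (i + 1) + QP (j + 1)
          = ∑ i ∈ Finset.range (j + 1),
              C ((((j + 1).choose (i + 1)) * (j - i).factorial : ℕ) : ℝ) * QP (i + 1) := by
        rw [Finset.sum_range_succ]
        have h4 : (((j + 1).choose (j + 1)) * (j - j).factorial : ℕ) = 1 := by simp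
        rw [h4]
        simp only [Nat.cast_one, map_one, one_mul]
        congr 1
        apply Finset.sum_congr rfl
        intro i hi
        rw [Finset.mem_range] at hi
        congr 2
        have h5 : j - i = (j - (i + 1)) + 1 := by omega
        have h6 : j + 1 - (i + 1) = (j - (i + 1)) + 1 := by omega
        rw [h5, h6, Nat.factorial_succ]
        ring
      have h7 : ∑ i ∈ Finset.range (j + 1),
            C ((((j + 2).choose (i + 1)) * (j + 1 - (i + 1)).factorial : ℕ) : ℝ) * QP (i + 1)
          = ∑ i ∈ Finset.range (j + 1),
              C ((((j + 1).choose i) * (j - i).factorial : ℕ) : ℝ) * QP (i + 1)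
            + ∑ i ∈ Finset.range (j + 1),
              C ((((j + 1).choose (i + 1)) * (j - i).factorial : ℕ) : ℝ) * QP (i + 1) := by
        rw [← Finset.sum_add_distrib]
        apply Finset.sum_congr rfl
        intro i hi
        have : (j + 2).choose (i + 1) = (j + 1).choose i + (j + 1).choose (i + 1) :=
          Nat.choose_succ_succ (j + 1) i
        rw [Nat.succ_sub_succ, this]
        push_cast
        simp only [C_add, C_mul]
        ring
      have h5 : ((j + 1).choose 0 * (j - 0).factorial * (j + 1 - 0) : ℕ)
          = ((j + 2).choose 0 * (j + 1 - 0).factorial : ℕ) := by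
        simp [Nat.factorial_succ]
        ring
      rw [h5]
      linear_combination h3 - h7

-- (II₂')
lemma derivQP_comp_sum (j : ℕ) :
    X * (derivative (QP j)).comp (X + 1)
      = ∑ u ∈ Finset.range j,
          C (((j.choose u) * (j - 1 - u).factorial : ℕ) : ℝ) * QP (u + 1) := by
  induction j with
  | zero => simp [QP_zero]
  | succ j ih =>
      have hd : (derivative (QP (j + 1))).comp (X + 1)
          = (derivative (QP j)).comp (X + 1) * (X + 1 + C (j : ℝ)) + (QP j).comp (X + 1) := by
        have := congrArg derivative (QP_comp_succ j)
        rw [dcomp, derivative_mul, dcomp] at this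
        simpa using this
      have hstep : X * (derivative (QP (j + 1))).comp (X + 1)
          = (X + 1 + C (j : ℝ)) * (X * (derivative (QP j)).comp (X + 1)) + QP (j + 1) := by
        rw [hd, QP_succ]
        have := QP_shift j
        linear_combination this
      rw [hstep, ih, Finset.mul_sum]
      rcases j with _ | i
      · simp [QP_zero, QP_succ]
      · -- j = i + 1
        simp only [Nat.add_sub_cancel]
        have h1 : ∀ u ∈ Finset.range (i + 1),
            (X + 1 + C ((i + 1 : ℕ) : ℝ)) *
                (C ((((i + 1).choose u) * (i - u).factorial : ℕ) : ℝ) * QP (u + 1))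
              = C ((((i + 1).choose u) * (i - u).factorial : ℕ) : ℝ) * QP (u + 2)
                + C ((((i + 1).choose u) * (i - u).factorial * (i + 1 - u) : ℕ) : ℝ)
                    * QP (u + 1) := by
          intro u hu
          rw [Finset.mem_range] at hu
          have hx : X + 1 + C ((i + 1 : ℕ) : ℝ) = X + C ((i + 2 : ℕ) : ℝ) := by
            rw [show ((i + 2 : ℕ) : ℝ) = ((i + 1 : ℕ) : ℝ) + 1 by push_cast; ring, C_add, C_1]
            ring
          have h2 : (X + C ((i + 2 : ℕ) : ℝ)) * QP (u + 1)
              = QP (u + 2) + C ((i + 2 - (u + 1) : ℕ) : ℝ) * QP (u + 1) := mulQP (by omega)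
          calc (X + 1 + C ((i + 1 : ℕ) : ℝ)) *
                (C ((((i + 1).choose u) * (i - u).factorial : ℕ) : ℝ) * QP (u + 1))
              = C ((((i + 1).choose u) * (i - u).factorial : ℕ) : ℝ) *
                  ((X + C ((i + 2 : ℕ) : ℝ)) * QP (u + 1)) := by rw [hx]; ring
            _ = C ((((i + 1).choose u) * (i - u).factorial : ℕ) : ℝ) *
                  (QP (u + 2) + C ((i + 2 - (u + 1) : ℕ) : ℝ) * QP (u + 1)) := by rw [h2]
            _ = _ := by
                rw [show i + 2 - (u + 1) = i + 1 - u by omega]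
                simp only [Nat.cast_mul, C_mul]
                ring
        rw [Finset.sum_congr rfl h1, Finset.sum_add_distrib]
        rw [Finset.sum_range_succ' (fun u =>
          C ((((i + 1 + 1).choose u) * (i + 1 - u).factorial : ℕ) : ℝ) * QP (u + 1)) (i + 1)]
        rw [Finset.sum_range_succ' (fun u =>
          C ((((i + 1).choose u) * (i - u).factorial * (i + 1 - u) : ℕ) : ℝ) * QP (u + 1)) i]
        have h3 : ∑ v ∈ Finset.range i,
              C ((((i + 1).choose (v + 1)) * (i - (v + 1)).factorial * (i + 1 - (v + 1)) : ℕ) : ℝ)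
                * QP (v + 1 + 1) + QP (i + 1 + 1)
            = ∑ v ∈ Finset.range (i + 1),
                C ((((i + 1).choose (v + 1)) * (i - v).factorial : ℕ) : ℝ) * QP (v + 1 + 1) := by
          rw [Finset.sum_range_succ]
          have h4 : (((i + 1).choose (i + 1)) * (i - i).factorial : ℕ) = 1 := by simp
          rw [h4]
          simp only [Nat.cast_one, map_one, one_mul]
          congr 1
          apply Finset.sum_congr rfl
          intro v hv
          rw [Finset.mem_range] at hv
          congr 2
          have h5 : i - v = (i - (v + 1)) + 1 := by omega
          have h6 : i + 1 - (v + 1) = (i - (v + 1)) + 1 := by omega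
          rw [h5, h6, Nat.factorial_succ]
          ring
        have h7 : ∑ v ∈ Finset.range (i + 1),
              C ((((i + 1 + 1).choose (v + 1)) * (i + 1 - (v + 1)).factorial : ℕ) : ℝ)
                * QP (v + 1 + 1)
            = ∑ v ∈ Finset.range (i + 1),
                C ((((i + 1).choose v) * (i - v).factorial : ℕ) : ℝ) * QP (v + 1 + 1)
              + ∑ v ∈ Finset.range (i + 1),
                C ((((i + 1).choose (v + 1)) * (i - v).factorial : ℕ) : ℝ) * QP (v + 1 + 1) := by
          rw [← Finset.sum_add_distrib]
          apply Finset.sum_congr rfl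
          intro v hv
          have hp : (i + 1 + 1).choose (v + 1) = (i + 1).choose v + (i + 1).choose (v + 1) :=
            Nat.choose_succ_succ (i + 1) v
          have h6 : i + 1 - (v + 1) = i - v := by omega
          rw [hp, h6]
          push_cast
          simp only [C_add, C_mul]
          ring
        have h8 : (((i + 1).choose 0) * (i - 0).factorial * (i + 1 - 0) : ℕ)
            = (((i + 1 + 1).choose 0) * (i + 1 - 0).factorial : ℕ) := by
          simp [Nat.factorial_succ]
          ring
        rw [h8]
        linear_combination h3 - h7

noncomputable def LF (w : ℕ → ℝ) (p : Polynomial ℝ) : ℝ := p.sum fun k a => a * w k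

lemma LF_zero (w : ℕ → ℝ) : LF w 0 = 0 := by simp [LF]

lemma LF_add (w : ℕ → ℝ) (p q : Polynomial ℝ) : LF w (p + q) = LF w p + LF w q := by
  unfold LF
  apply Polynomial.sum_add_index <;> intros <;> ring

lemma LF_monomial (w : ℕ → ℝ) (n : ℕ) (a : ℝ) : LF w (monomial n a) = a * w n := by
  unfold LF
  rw [Polynomial.sum_monomial_index]
  ring

lemma LF_Cmul (w : ℕ → ℝ) (r : ℝ) (p : Polynomial ℝ) : LF w (C r * p) = r * LF w p := by
  unfold LF
  rw [← smul_eq_C_mul, Polynomial.sum_smul_index p r _ (fun i => by ring)]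
  rw [Polynomial.sum_def, Polynomial.sum_def, Finset.mul_sum]
  apply Finset.sum_congr rfl
  intros; ring

lemma LF_sum (w : ℕ → ℝ) {ι : Type*} (s : Finset ι) (g : ι → Polynomial ℝ) :
    LF w (∑ i ∈ s, g i) = ∑ i ∈ s, LF w (g i) := by
  classical
  induction s using Finset.induction_on with
  | empty => simp [LF_zero]
  | insert _ _ h ih => rw [Finset.sum_insert h, Finset.sum_insert h, LF_add, ih]

noncomputable def wphi (k : ℕ) : ℝ := (2 ^ (k + 1) - 1) / ((k : ℝ) + 1)
noncomputable def wpsi (k : ℕ) : ℝ := (2 ^ (k + 1) - 1) / ((k : ℝ) + 1) ^ 2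

lemma LF_phi_deriv (q : Polynomial ℝ) :
    LF wphi (derivative q) = eval 2 q - eval 1 q := by
  induction q using Polynomial.induction_on' with
  | add p q hp hq => rw [derivative_add, LF_add, hp, hq]; simp; ring
  | monomial n a =>
      rw [derivative_monomial, LF_monomial]
      rcases n with _ | m
      · simp
      · simp only [Nat.add_sub_cancel, eval_monomial, wphi]
        have h1 : ((m : ℝ) + 1) ≠ 0 := by positivity
        push_cast
        field_simp
        ring

lemma LF_psi_deriv_Xmul (p : Polynomial ℝ) :
    LF wpsi (derivative (X * p)) = LF wphi p := by
  induction p using Polynomial.induction_on' with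
  | add p q hp hq => rw [mul_add, derivative_add, LF_add, hp, hq, LF_add]
  | monomial n a =>
      have hx : (X : Polynomial ℝ) * monomial n a = monomial (n + 1) a := by
        rw [X_mul_monomial]
      rw [hx, derivative_monomial, LF_monomial, LF_monomial, Nat.add_sub_cancel, wpsi, wphi]
      have h1 : ((n : ℝ) + 1) ≠ 0 := by positivity
      push_cast
      field_simp

lemma LF_psi_X_deriv (p : Polynomial ℝ) :
    LF wpsi (X * derivative p) = LF wphi p - LF wpsi p := by
  have h : derivative (X * p) = p + X * derivative p := by
    rw [derivative_mul, derivative_X, one_mul]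
  have h2 := LF_psi_deriv_Xmul p
  rw [h, LF_add] at h2
  linarith

lemma evalQP_one (j : ℕ) : eval 1 (QP j) = (j.factorial : ℝ) := by
  induction j with
  | zero => simp [QP_zero]
  | succ j ih => rw [QP_succ, eval_mul, ih]; simp [Nat.factorial_succ]; push_cast; ring

lemma evalQP_two (j : ℕ) : eval 2 (QP j) = ((j + 1).factorial : ℝ) := by
  induction j with
  | zero => simp [QP_zero]
  | succ j ih =>
      rw [QP_succ, eval_mul, ih]
      simp only [eval_add, eval_X, eval_C]
      rw [show j + 1 + 1 = (j + 1) + 1 by rfl, Nat.factorial_succ (j + 1)]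
      push_cast
      ring

lemma LF_one (w : ℕ → ℝ) : LF w 1 = w 0 := by
  have : (1 : Polynomial ℝ) = monomial 0 1 := by simp
  rw [this, LF_monomial, one_mul]

lemma coef_cast {j t : ℕ} (h : t < j) :
    (((j.choose t) * (j - 1 - t).factorial : ℕ) : ℝ)
      = (j.factorial : ℝ) / ((t.factorial : ℝ) * ((j : ℝ) - t)) := by
  have h1 : j - t = (j - 1 - t) + 1 := by omega
  have h3 := Nat.choose_mul_factorial_mul_factorial (le_of_lt h)
  have hnat : j.factorial = j.choose t * t.factorial * ((j - t) * (j - 1 - t).factorial) := by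
    rw [← h3, h1, Nat.factorial_succ, ← h1]
  have h2 : ((j : ℝ) - t) = ((j - t : ℕ) : ℝ) := by
    rw [Nat.cast_sub h.le]
  have hpos : (0 : ℝ) < (j : ℝ) - (t : ℝ) := by
    rw [h2]
    exact_mod_cast Nat.sub_pos_of_lt h
  have hfact : (t.factorial : ℝ) ≠ 0 := by
    exact_mod_cast (Nat.factorial_pos t).ne'
  rw [eq_div_iff (by positivity), h2]
  exact_mod_cast (show (j.choose t * (j - 1 - t).factorial) * (t.factorial * (j - t))
      = j.factorial by rw [hnat]; ring)

-- scalar version of (II')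
lemma Sphi (j : ℕ) :
    ∑ t ∈ Finset.range (j + 1),
        ((((j + 1).choose t) * (j - t).factorial : ℕ) : ℝ) * LF wphi (QP t)
      = ((j : ℝ) + 1) * ((j + 1).factorial : ℝ) := by
  have h := congrArg (LF wphi) (derivQP_sum j)
  rw [LF_sum] at h
  have h2 : ∀ t ∈ Finset.range (j + 1),
      LF wphi (C ((((j + 1).choose t) * (j - t).factorial : ℕ) : ℝ) * QP t)
        = ((((j + 1).choose t) * (j - t).factorial : ℕ) : ℝ) * LF wphi (QP t) :=
    fun t _ => LF_Cmul _ _ _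
  rw [Finset.sum_congr rfl h2] at h
  rw [← h, LF_phi_deriv, evalQP_one, evalQP_two]
  rw [show j + 1 + 1 = (j + 1) + 1 from rfl, Nat.factorial_succ (j + 1)]
  push_cast
  ring

-- scalar version of (II₂')
lemma Mpsi_sum (k : ℕ) :
    LF wpsi (X * (derivative (QP k)).comp (X + 1))
      = ∑ u ∈ Finset.range k,
          ((k.factorial : ℝ) / ((u.factorial : ℝ) * ((k : ℝ) - u))) * LF wpsi (QP (u + 1)) := by
  have h := congrArg (LF wpsi) (derivQP_comp_sum k)
  rw [LF_sum] at h
  have h2 : ∀ u ∈ Finset.range k,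
      LF wpsi (C (((k.choose u) * (k - 1 - u).factorial : ℕ) : ℝ) * QP (u + 1))
        = ((k.factorial : ℝ) / ((u.factorial : ℝ) * ((k : ℝ) - u))) * LF wpsi (QP (u + 1)) := by
    intro u hu
    rw [Finset.mem_range] at hu
    rw [LF_Cmul, coef_cast hu]
  rw [Finset.sum_congr rfl h2] at h
  exact h

lemma Mpsi_rec (j : ℕ) :
    LF wpsi (X * (derivative (QP (j + 1))).comp (X + 1))
      = LF wphi (QP (j + 1)) - LF wpsi (QP (j + 1))
        + ((j : ℝ) + 1) * LF wpsi (X * (derivative (QP j)).comp (X + 1)) := by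
  have h := congrArg (LF wpsi) (QP_III j)
  rw [LF_add, LF_Cmul, LF_psi_X_deriv] at h
  linarith

lemma factR_pos (m : ℕ) : (0 : ℝ) < (m.factorial : ℝ) := by
  exact_mod_cast Nat.factorial_pos m

lemma Sphi' (k : ℕ) :
    ∑ t ∈ Finset.range (k + 1),
        (((k + 1).factorial : ℝ) / ((t.factorial : ℝ) * (((k : ℝ) + 1) - t)))
          * LF wphi (QP t)
      = ((k : ℝ) + 1) * ((k + 1).factorial : ℝ) := by
  rw [← Sphi k]
  apply Finset.sum_congr rfl
  intro t ht
  rw [Finset.mem_range] at ht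
  have h := coef_cast (j := k + 1) (t := t) (by omega)
  rw [Nat.add_sub_cancel] at h
  rw [h]
  push_cast
  ring_nf

lemma KeyA (j : ℕ) :
    LF wphi (QP j) / ((j + 1).factorial : ℝ)
      = 1 / ((j : ℝ) + 1)
        + ∑ u ∈ Finset.range j,
            (((u : ℝ) + 1) / (((j : ℝ) + 1) * ((j : ℝ) - u) * ((j : ℝ) - u + 1)))
              * (LF wphi (QP u) / ((u + 1).factorial : ℝ)) := by
  rcases j with _ | i
  · simp [QP_zero, LF_one, wphi]
    norm_num
  · have H1 := Sphi' i
    have H2 := Sphi' (i + 1)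
    rw [Finset.sum_range_succ] at H2
    have htop : ((((i + 1) + 1).factorial : ℝ)
        / (((i + 1).factorial : ℝ) * ((((i + 1) : ℕ) : ℝ) + 1 - ((i + 1 : ℕ) : ℝ))))
          * LF wphi (QP (i + 1))
        = (((i + 2).factorial : ℝ) / ((i + 1).factorial : ℝ)) * LF wphi (QP (i + 1)) := by
      have h1 : ((((i + 1) : ℕ) : ℝ) + 1 - ((i + 1 : ℕ) : ℝ)) = 1 := by push_cast; ring
      rw [h1, show (i + 1) + 1 = i + 2 from rfl, mul_one]
    rw [htop] at H2
    have hsplit : ∀ u ∈ Finset.range (i + 1),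
        ((((u : ℕ) : ℝ) + 1) / (((((i + 1) : ℕ) : ℝ) + 1) * ((((i + 1) : ℕ) : ℝ) - u)
            * ((((i + 1) : ℕ) : ℝ) - u + 1)))
            * (LF wphi (QP u) / ((u + 1).factorial : ℝ))
          = (1 / (((i : ℝ) + 2) * ((i + 1).factorial : ℝ)))
              * ((((i + 1).factorial : ℝ) / ((u.factorial : ℝ) * (((i : ℝ) + 1) - u)))
                  * LF wphi (QP u))
            - (1 / (((i : ℝ) + 2) * (((i + 1) + 1).factorial : ℝ)))
              * (((((i + 1) + 1).factorial : ℝ)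
                  / ((u.factorial : ℝ) * ((((i + 1) : ℕ) : ℝ) + 1 - u)))
                  * LF wphi (QP u)) := by
      intro u hu
      rw [Finset.mem_range] at hu
      have hu1 : (0 : ℝ) < ((i : ℝ) + 1) - u := by
        have : (u : ℝ) < (i : ℝ) + 1 := by exact_mod_cast hu
        linarith
      have hu2 : (0 : ℝ) < ((i : ℝ) + 2) - u := by linarith
      have hf1 := factR_pos u
      have hf2 := factR_pos (i + 1)
      have hf3 := factR_pos (i + 2)
      rw [show (u + 1).factorial = (u + 1) * u.factorial from Nat.factorial_succ u]
      push_cast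
      have hn1 : ((i : ℝ) + 1 - u) ≠ 0 := by linarith
      have hn2 : ((i : ℝ) + 1 - u + 1) ≠ 0 := by linarith
      have hn3 : ((i : ℝ) + 1 + 1 - u) ≠ 0 := by linarith
      have hn4 : ((i : ℝ) + 1 + 1) ≠ 0 := by positivity
      have hn5 : ((i : ℝ) + 2) ≠ 0 := by positivity
      have hn6 : ((u : ℝ) + 1) ≠ 0 := by positivity
      have hn7 : ((i + 1 + 1).factorial : ℝ) ≠ 0 := (factR_pos (i + 1 + 1)).ne'
      field_simp
      ring
    rw [Finset.sum_congr rfl hsplit, Finset.sum_sub_distrib,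
      ← Finset.mul_sum, ← Finset.mul_sum, H1]
    have H2' : ∑ u ∈ Finset.range (i + 1),
        ((((i + 1) + 1).factorial : ℝ) / ((u.factorial : ℝ) * ((((i + 1) : ℕ) : ℝ) + 1 - u)))
          * LF wphi (QP u)
        = (((i : ℕ) : ℝ) + 1 + 1) * (((i + 1) + 1).factorial : ℝ)
          - (((i + 2).factorial : ℝ) / ((i + 1).factorial : ℝ)) * LF wphi (QP (i + 1)) := by
      push_cast at H2 ⊢
      linarith
    rw [H2']
    have hf2 := factR_pos (i + 1)
    have hf3 := factR_pos (i + 2)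
    have hfs : ((i + 2).factorial : ℝ) = ((i : ℝ) + 2) * ((i + 1).factorial : ℝ) := by
      rw [show i + 2 = (i + 1) + 1 from rfl, Nat.factorial_succ]
      push_cast
      ring
    push_cast [show (i + 1) + 1 = i + 2 from rfl, hfs]
    field_simp
    ring

lemma KeyC (j : ℕ) :
    2 * LF wpsi (QP j) / ((j + 1).factorial : ℝ)
      = (2 / ((j : ℝ) + 1)) * (LF wphi (QP j) / ((j + 1).factorial : ℝ))
        + ∑ u ∈ Finset.range (j - 1),
            ((((u : ℝ) + 2) * ((u : ℝ) + 1))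
                / (((j : ℝ) + 1) ^ 2 * ((j : ℝ) - (u : ℝ) - 1) * ((j : ℝ) - (u : ℝ))))
              * (2 * LF wpsi (QP (u + 1)) / ((u + 2).factorial : ℝ)) := by
  rcases j with _ | i
  · simp [QP_zero, LF_one, wphi, wpsi]
  · -- j = i + 1
    have S1 := Mpsi_sum i
    have S2 := Mpsi_sum (i + 1)
    have hrec := Mpsi_rec i
    rw [Finset.sum_range_succ] at S2
    have htop : (((i + 1).factorial : ℝ) / ((i.factorial : ℝ) * (((i + 1 : ℕ) : ℝ) - (i : ℕ))))
          * LF wpsi (QP (i + 1))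
        = ((i : ℝ) + 1) * LF wpsi (QP (i + 1)) := by
      have h1 : (((i + 1 : ℕ) : ℝ) - (i : ℕ)) = 1 := by push_cast; ring
      have h2 : (((i + 1).factorial : ℝ)) = ((i : ℝ) + 1) * (i.factorial : ℝ) := by
        rw [Nat.factorial_succ]; push_cast; ring
      rw [h1, h2, mul_one]
      rw [mul_div_assoc, div_self (factR_pos i).ne', mul_one]
    rw [htop] at S2
    -- split the target sum termwise
    have hsplit : ∀ u ∈ Finset.range (i + 1 - 1),
        ((((u : ℕ) : ℝ) + 2) * (((u : ℕ) : ℝ) + 1))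
            / (((((i + 1) : ℕ) : ℝ) + 1) ^ 2 * ((((i + 1) : ℕ) : ℝ) - (u : ℕ) - 1)
                * ((((i + 1) : ℕ) : ℝ) - (u : ℕ)))
            * (2 * LF wpsi (QP (u + 1)) / ((u + 2).factorial : ℝ))
          = (2 / (((i : ℝ) + 2) ^ 2 * (i.factorial : ℝ)))
              * (((i.factorial : ℝ) / ((u.factorial : ℝ) * ((i : ℝ) - u)))
                  * LF wpsi (QP (u + 1)))
            - (2 / (((i : ℝ) + 2) ^ 2 * ((i + 1).factorial : ℝ)))
              * ((((i + 1).factorial : ℝ) / ((u.factorial : ℝ) * ((((i + 1) : ℕ) : ℝ) - u)))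
                  * LF wpsi (QP (u + 1))) := by
      intro u hu
      rw [Finset.mem_range] at hu
      have hu' : u < i := by omega
      have hult : (u : ℝ) < i := by exact_mod_cast hu'
      have hn1 : ((i : ℝ) - u) ≠ 0 := by linarith
      have hn2 : ((i : ℝ) + 1 - u) ≠ 0 := by linarith
      have hn3 : ((i : ℝ) + 2) ≠ 0 := by positivity
      have hn4 : (u.factorial : ℝ) ≠ 0 := (factR_pos u).ne'
      have hn5 : ((i.factorial : ℝ)) ≠ 0 := (factR_pos i).ne'
      have hn6 : (((i + 1).factorial : ℝ)) ≠ 0 := (factR_pos (i + 1)).ne'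
      have hn7 : (((u + 2).factorial : ℝ)) = ((u : ℝ) + 2) * ((u : ℝ) + 1) * (u.factorial : ℝ) := by
        rw [show u + 2 = (u + 1) + 1 from rfl, Nat.factorial_succ, Nat.factorial_succ]
        push_cast; ring
      have hn8 : ((u : ℝ) + 2) ≠ 0 := by positivity
      have hn9 : ((u : ℝ) + 1) ≠ 0 := by positivity
      have hco : (((u : ℝ) + 2) * ((u : ℝ) + 1))
            / (((i : ℝ) + 2) ^ 2 * ((i : ℝ) - u) * ((i : ℝ) + 1 - u))
            * (2 / (((u : ℝ) + 2) * ((u : ℝ) + 1) * (u.factorial : ℝ)))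
          = (2 / (((i : ℝ) + 2) ^ 2 * (i.factorial : ℝ)))
              * ((i.factorial : ℝ) / ((u.factorial : ℝ) * ((i : ℝ) - u)))
            - (2 / (((i : ℝ) + 2) ^ 2 * ((i + 1).factorial : ℝ)))
              * (((i + 1).factorial : ℝ) / ((u.factorial : ℝ) * ((i : ℝ) + 1 - u))) := by
        field_simp
        ring
      rw [hn7]
      push_cast
      linear_combination LF wpsi (QP (u + 1)) * hco
    rw [Finset.sum_congr rfl hsplit, Finset.sum_sub_distrib,
      ← Finset.mul_sum, ← Finset.mul_sum]
    have hS2' : ∑ u ∈ Finset.range (i + 1 - 1),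
        (((i + 1).factorial : ℝ) / ((u.factorial : ℝ) * ((((i + 1) : ℕ) : ℝ) - u)))
          * LF wpsi (QP (u + 1))
        = LF wpsi (X * (derivative (QP (i + 1))).comp (X + 1))
          - ((i : ℝ) + 1) * LF wpsi (QP (i + 1)) := by
      rw [show i + 1 - 1 = i from rfl]
      linarith [S2]
    have hS1' : ∑ u ∈ Finset.range (i + 1 - 1),
        ((i.factorial : ℝ) / ((u.factorial : ℝ) * ((i : ℝ) - u))) * LF wpsi (QP (u + 1))
        = LF wpsi (X * (derivative (QP i)).comp (X + 1)) := by
      rw [show i + 1 - 1 = i from rfl]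
      linarith [S1]
    rw [hS1', hS2', hrec]
    have hn3 : ((i : ℝ) + 2) ≠ 0 := by positivity
    have hn5 : ((i.factorial : ℝ)) ≠ 0 := (factR_pos i).ne'
    have hf1 : (((i + 1).factorial : ℝ)) = ((i : ℝ) + 1) * (i.factorial : ℝ) := by
      rw [Nat.factorial_succ]; push_cast; ring
    have hf2 : (((i + 1 + 1).factorial : ℝ))
        = ((i : ℝ) + 2) * (((i : ℝ) + 1) * (i.factorial : ℝ)) := by
      rw [Nat.factorial_succ]; push_cast [hf1]; ring
    push_cast [hf2, hf1]
    have hn10 : ((i : ℝ) + 1) ≠ 0 := by positivity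
    field_simp
    ring

/-- Corollary 3.2: exact formula for `E(τ_{n,1}τ_{n,2})` for the
Bolthausen–Sznitman coalescent in terms of the unsigned Stirling numbers of
the first kind, `c_n = (2/(n-1)!) Σ_{k=1}^{n-1} ((2^k-1)/k²) s(n-2,k-1)`. -/
theorem bolthausen_sznitman_mixed_moment_exact (a c : ℕ → ℝ) (s : ℕ → ℕ → ℝ)
    (ha : ∀ n : ℕ, 2 ≤ n →
      a n = 1 / ((n : ℝ) - 1)
        + ∑ m ∈ Finset.Icc 2 (n - 1),
            (((m : ℝ) - 1) / (((n : ℝ) - 1) * ((n : ℝ) - (m : ℝ)) * ((n : ℝ) - (m : ℝ) + 1)))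
              * a m)
    (hc : ∀ n : ℕ, 2 ≤ n →
      c n = (2 / ((n : ℝ) - 1)) * a n
        + ∑ m ∈ Finset.Icc 3 (n - 1),
            (((m : ℝ) - 1) * ((m : ℝ) - 2)
                / (((n : ℝ) - 1) ^ 2 * ((n : ℝ) - (m : ℝ)) * ((n : ℝ) - (m : ℝ) + 1)))
              * c m)
    -- `s i k` are the coefficients of the rising factorial
    -- `x(x+1)⋯(x+i-1) = Σ_{k=0}^i s(i,k) x^k`
    (hs : ∀ i : ℕ, ∀ x : ℝ,
      ∏ r ∈ Finset.range i, (x + (r : ℝ)) = ∑ k ∈ Finset.range (i + 1), s i k * x ^ k) :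
    ∀ n : ℕ, 2 ≤ n →
      c n = (2 / (Nat.factorial (n - 1) : ℝ))
        * ∑ k ∈ Finset.Icc 1 (n - 1), ((2 ^ k - 1 : ℝ) / (k : ℝ) ^ 2) * s (n - 2) (k - 1) := by
  -- relate QP to the coefficients s
  have hQP : ∀ i : ℕ, QP i = ∑ k ∈ Finset.range (i + 1), C (s i k) * X ^ k := by
    intro i
    apply Polynomial.funext
    intro x
    rw [Polynomial.eval_finset_sum]
    simp only [QP, Polynomial.eval_prod, eval_add, eval_X, eval_C, eval_mul, eval_pow]
    exact hs i x
  have hpsi : ∀ i : ℕ, LF wpsi (QP i) = ∑ k ∈ Finset.range (i + 1), s i k * wpsi k := by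
    intro i
    rw [hQP i, LF_sum]
    apply Finset.sum_congr rfl
    intro k _
    rw [X_pow_eq_monomial, LF_Cmul, LF_monomial, one_mul]
  -- main claim by strong induction
  have main : ∀ n : ℕ, 2 ≤ n →
      a n = LF wphi (QP (n - 2)) / ((n - 1).factorial : ℝ)
      ∧ c n = 2 * LF wpsi (QP (n - 2)) / ((n - 1).factorial : ℝ) := by
    intro n
    induction n using Nat.strong_induction_on with
    | _ n IH =>
      intro hn
      obtain ⟨j, rfl⟩ : ∃ j, n = j + 2 := ⟨n - 2, by omega⟩
      rw [show j + 2 - 2 = j by omega, show j + 2 - 1 = j + 1 by omega]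
      have hA : a (j + 2) = LF wphi (QP j) / ((j + 1).factorial : ℝ) := by
        rw [ha (j + 2) (by omega), show j + 2 - 1 = j + 1 by omega,
          ← Finset.Ico_add_one_right_eq_Icc, Finset.sum_Ico_eq_sum_range,
          show j + 1 + 1 - 2 = j by omega, KeyA j]
        congr 1
        · push_cast; ring
        · apply Finset.sum_congr rfl
          intro u hu
          rw [Finset.mem_range] at hu
          have hIH := (IH (2 + u) (by omega) (by omega)).1
          rw [show 2 + u - 2 = u by omega, show 2 + u - 1 = u + 1 by omega] at hIH
          rw [hIH]
          push_cast
          ring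
      refine ⟨hA, ?_⟩
      rw [hc (j + 2) (by omega), hA, show j + 2 - 1 = j + 1 by omega,
        ← Finset.Ico_add_one_right_eq_Icc, Finset.sum_Ico_eq_sum_range,
        show j + 1 + 1 - 3 = j - 1 by omega, KeyC j]
      congr 1
      · push_cast; ring
      · apply Finset.sum_congr rfl
        intro u hu
        rw [Finset.mem_range] at hu
        have hIH := (IH (3 + u) (by omega) (by omega)).2
        rw [show 3 + u - 2 = u + 1 by omega, show 3 + u - 1 = u + 2 by omega] at hIH
        rw [hIH]
        push_cast
        ring
  intro n hn
  obtain ⟨j, rfl⟩ : ∃ j, n = j + 2 := ⟨n - 2, by omega⟩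
  have hcn := (main _ (by omega : 2 ≤ j + 2)).2
  rw [show j + 2 - 2 = j by omega, show j + 2 - 1 = j + 1 by omega] at hcn ⊢
  rw [hcn, hpsi j, ← Finset.Ico_add_one_right_eq_Icc, Finset.sum_Ico_eq_sum_range,
    show j + 1 + 1 - 1 = j + 1 by omega, Finset.mul_sum]
  rw [Finset.sum_div, Finset.mul_sum]
  apply Finset.sum_congr rfl
  intro u hu
  rw [show 1 + u - 1 = u by omega]
  unfold wpsi
  push_cast
  have h1 : ((u : ℝ) + 1) ^ 2 ≠ 0 := by positivity
  have h2 : (((j + 1).factorial : ℝ)) ≠ 0 := (factR_pos (j + 1)).ne'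
  field_simp
  ring
end
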